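/- arXiv:math/0004168 — 9 statements merged into one kernel-verified Lean document; each statement's English description precedes it below -/
import Mathlib

section
/- Let X be a real or complex Banach space. Then condition (A2) holds in X if and only if condition (A3) holds in X. (A2): there exist a sequence (ε_n) of positive numbers converging to 0 and a sequence (x_n) in X such that ∑_{n=1}^m |a_n| ≤ ‖∑_{n=1}^m a_n x_n‖ ≤ ∑_{n=1}^m (1+ε_n)|a_n| for every finite sequence (a_n)_{n=1}^m of scalars. (A3): there exist a sequence (ε_n) of positive numbers converging to 0 and a sequence (x_n) in X such that ∑_{n=k}^m |a_n| ≤ ‖∑_{n=k}^m a_n x_n‖ ≤ (1+ε_k) ∑_{n=k}^m |a_n| for every k ∈ ℕ and every finite sequence (a_n)_{n=k}^m of scalars. -/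
open Filter Finset

/-- **(A2) ⇔ (A3)** for a real or complex Banach space `X`. -/
theorem a2_iff_a3 (𝕜 : Type*) [RCLike 𝕜] (X : Type*) [NormedAddCommGroup X]
    [NormedSpace 𝕜 X] [CompleteSpace X] :
    (∃ (ε : ℕ → ℝ) (x : ℕ → X), (∀ n, 0 < ε n) ∧
        Tendsto ε atTop (nhds 0) ∧
        ∀ (m : ℕ) (a : ℕ → 𝕜),
          (∑ n ∈ Finset.range m, ‖a n‖) ≤ ‖∑ n ∈ Finset.range m, a n • x n‖ ∧
          ‖∑ n ∈ Finset.range m, a n • x n‖ ≤ ∑ n ∈ Finset.range m, (1 + ε n) * ‖a n‖) ↔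
    (∃ (ε : ℕ → ℝ) (x : ℕ → X), (∀ n, 0 < ε n) ∧
        Tendsto ε atTop (nhds 0) ∧
        ∀ (k m : ℕ) (a : ℕ → 𝕜),
          (∑ n ∈ Finset.Icc k m, ‖a n‖) ≤ ‖∑ n ∈ Finset.Icc k m, a n • x n‖ ∧
          ‖∑ n ∈ Finset.Icc k m, a n • x n‖ ≤ (1 + ε k) * ∑ n ∈ Finset.Icc k m, ‖a n‖) := by
  constructor
  · rintro ⟨ε, x, hpos, hlim, h⟩
    obtain ⟨C, hC⟩ : BddAbove (Set.range ε) := hlim.bddAbove_range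
    set S : ℕ → Set ℝ := fun k => ε '' Set.Ici k with hS
    have hne : ∀ k, (S k).Nonempty := fun k => ⟨ε k, k, Set.mem_Ici.2 le_rfl, rfl⟩
    have hbdd : ∀ k, BddAbove (S k) := fun k =>
      ⟨C, by rintro _ ⟨n, _, rfl⟩; exact hC ⟨n, rfl⟩⟩
    refine ⟨fun k => sSup (S k), x, ?_, ?_, ?_⟩
    · intro k
      exact lt_of_lt_of_le (hpos k) (le_csSup (hbdd k) ⟨k, Set.mem_Ici.2 le_rfl, rfl⟩)
    · rw [Metric.tendsto_atTop] at hlim ⊢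
      intro δ hδ
      obtain ⟨N, hN⟩ := hlim (δ / 2) (by linarith)
      refine ⟨N, fun k hk => ?_⟩
      have h1 : sSup (S k) ≤ δ / 2 := by
        apply csSup_le (hne k)
        rintro _ ⟨n, hn, rfl⟩
        have := hN n (le_trans hk hn)
        rw [Real.dist_eq, sub_zero] at this
        exact le_of_lt (lt_of_le_of_lt (le_abs_self _) this)
      have h2 : 0 < sSup (S k) :=
        lt_of_lt_of_le (hpos k) (le_csSup (hbdd k) ⟨k, Set.mem_Ici.2 le_rfl, rfl⟩)
      rw [Real.dist_eq, sub_zero, abs_of_pos h2]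
      linarith
    · intro k m a
      set a' : ℕ → 𝕜 := fun n => if k ≤ n then a n else 0 with ha'
      have hsub : Finset.Icc k m ⊆ Finset.range (m + 1) := by
        intro n hn
        rw [Finset.mem_Icc] at hn
        exact Finset.mem_range.2 (Nat.lt_succ_of_le hn.2)
      have hzero : ∀ n ∈ Finset.range (m + 1), n ∉ Finset.Icc k m → a' n = 0 := by
        intro n hn hn'
        simp only [Finset.mem_range] at hn
        rw [Finset.mem_Icc, not_and_or] at hn'
        have : ¬ k ≤ n := by
          rcases hn' with h' | h'
          · exact h'
          · omega
        simp [ha', this]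
      have congr1 : ∀ (f : 𝕜 → ℝ), f 0 = 0 →
          ∑ n ∈ Finset.range (m + 1), f (a' n) = ∑ n ∈ Finset.Icc k m, f (a n) := by
        intro f hf
        rw [← Finset.sum_subset hsub (fun n hn hn' => by rw [hzero n hn hn', hf])]
        apply Finset.sum_congr rfl
        intro n hn
        rw [Finset.mem_Icc] at hn
        simp [ha', hn.1]
      have e1 : ∑ n ∈ Finset.range (m + 1), ‖a' n‖ = ∑ n ∈ Finset.Icc k m, ‖a n‖ :=
        congr1 (fun c => ‖c‖) norm_zero
      have e2 : ∑ n ∈ Finset.range (m + 1), a' n • x n = ∑ n ∈ Finset.Icc k m, a n • x n := by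
        rw [← Finset.sum_subset hsub (fun n hn hn' => by rw [hzero n hn hn', zero_smul])]
        apply Finset.sum_congr rfl
        intro n hn
        rw [Finset.mem_Icc] at hn
        simp [ha', hn.1]
      obtain ⟨hlo, hhi⟩ := h (m + 1) a'
      constructor
      · rw [← e1, ← e2]; exact hlo
      · rw [← e2]
        refine le_trans hhi ?_
        have : ∑ n ∈ Finset.range (m + 1), (1 + ε n) * ‖a' n‖
            = ∑ n ∈ Finset.Icc k m, (1 + ε n) * ‖a n‖ := by
          rw [← Finset.sum_subset hsub (fun n hn hn' => by rw [hzero n hn hn', norm_zero, mul_zero])]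
          apply Finset.sum_congr rfl
          intro n hn
          rw [Finset.mem_Icc] at hn
          simp [ha', hn.1]
        rw [this, Finset.mul_sum]
        apply Finset.sum_le_sum
        intro n hn
        rw [Finset.mem_Icc] at hn
        have hεn : ε n ≤ sSup (S k) := le_csSup (hbdd k) ⟨n, Set.mem_Ici.2 hn.1, rfl⟩
        have := norm_nonneg (a n)
        nlinarith
  · rintro ⟨ε, x, hpos, hlim, h⟩
    refine ⟨ε, x, hpos, hlim, ?_⟩
    intro m a
    rcases m with _ | j
    · simp
    · have hr : Finset.range (j + 1) = Finset.Icc 0 j := by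
        rw [Finset.range_eq_Ico, Finset.Ico_add_one_right_eq_Icc]
      rw [hr]
      obtain ⟨hlo, _⟩ := h 0 j a
      refine ⟨hlo, ?_⟩
      refine le_trans (norm_sum_le _ _) (Finset.sum_le_sum fun n _ => ?_)
      have := (h n n a).2
      simpa using this
end

section
/- Let X be a real or complex Banach space and let (x̃_n) be a perturbation of an isometric copy of ℓ₁ in X with respect to a null sequence (ε̃_n) of positive numbers with each ε̃_n < 1. Set ε_n = (1+ε̃_n)/(1−ε̃_n) − 1 and x_n = x̃_n/(1−ε̃_n). Then ε_n → 0 and the sequence (x_n) satisfies ∑_{n=1}^m |a_n| ≤ ‖∑_{n=1}^m a_n x_n‖ ≤ ∑_{n=1}^m (1+ε_n)|a_n| for every finite sequence (a_n)_{n=1}^m of scalars; in particular (x_n) is an asymptotically isometric copy of ℓ₁. -/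
open Filter Finset

/-- If `(x̃ n)` is a perturbation of an isometric copy of `ℓ₁` in `X` with respect to a
null sequence `(ε̃ n)` of positive numbers less than one, then with
`ε n = (1 + ε̃ n)/(1 - ε̃ n) - 1` and `x n = x̃ n / (1 - ε̃ n)` one has `ε n → 0` and
`∑ |a n| ≤ ‖∑ a n • x n‖ ≤ ∑ (1 + ε n) |a n|`; in particular `(x n)` is an
asymptotically isometric copy of `ℓ₁` (satisfying (A2)). -/
theorem pi_l1_sequence_scaled_satisfies_A2 (𝕜 : Type*) [RCLike 𝕜]
    (X : Type*) [NormedAddCommGroup X] [NormedSpace 𝕜 X] [CompleteSpace X]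
    (Y : Type*) [NormedAddCommGroup Y] [NormedSpace 𝕜 Y] [CompleteSpace Y]
    (εt : ℕ → ℝ) (hpos : ∀ n, 0 < εt n) (hlt1 : ∀ n, εt n < 1)
    (hnull : Tendsto εt atTop (nhds 0))
    (xt : ℕ → X) (T : X →ₗᵢ[𝕜] Y) (y : ℕ → Y)
    (hy : ∀ (m : ℕ) (a : ℕ → 𝕜),
      ‖∑ n ∈ Finset.range m, a n • y n‖ = ∑ n ∈ Finset.range m, ‖a n‖)
    (hclose : ∀ n, ‖y n - T (xt n)‖ ≤ εt n) :
    Tendsto (fun n => (1 + εt n) / (1 - εt n) - 1) atTop (nhds 0) ∧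
    ∀ (m : ℕ) (a : ℕ → 𝕜),
      (∑ n ∈ Finset.range m, ‖a n‖) ≤
          ‖∑ n ∈ Finset.range m, a n • (((1 - εt n : ℝ) : 𝕜)⁻¹ • xt n)‖ ∧
      ‖∑ n ∈ Finset.range m, a n • (((1 - εt n : ℝ) : 𝕜)⁻¹ • xt n)‖ ≤
          ∑ n ∈ Finset.range m, (1 + ((1 + εt n) / (1 - εt n) - 1)) * ‖a n‖ := by

  have h1 : ∀ n, (0:ℝ) < 1 - εt n := fun n => by linarith [hlt1 n]
  constructor
  · have hn : Tendsto (fun n => (1:ℝ) + εt n) atTop (nhds (1 + 0)) :=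
      tendsto_const_nhds.add hnull
    have hd : Tendsto (fun n => (1:ℝ) - εt n) atTop (nhds (1 - 0)) :=
      tendsto_const_nhds.sub hnull
    have h := (hn.div hd (by norm_num)).sub_const 1
    simpa using h
  · intro m a
    set b : ℕ → 𝕜 := fun n => a n * ((1 - εt n : ℝ) : 𝕜)⁻¹ with hb
    have hbnorm : ∀ n, ‖b n‖ = ‖a n‖ * (1 - εt n)⁻¹ := by
      intro n
      rw [hb]
      simp only [norm_mul, norm_inv, RCLike.norm_ofReal]
      rw [abs_of_pos (h1 n)]
    have hSsum : (∑ n ∈ Finset.range m, a n • (((1 - εt n : ℝ) : 𝕜)⁻¹ • xt n))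
        = ∑ n ∈ Finset.range m, b n • xt n :=
      Finset.sum_congr rfl fun n _ => by rw [smul_smul]
    set S := ∑ n ∈ Finset.range m, b n • xt n with hS
    have hTS : T S = ∑ n ∈ Finset.range m, b n • T (xt n) := by
      simp [hS, map_sum, map_smul]
    have hdiff : ‖(∑ n ∈ Finset.range m, b n • y n) - T S‖
        ≤ ∑ n ∈ Finset.range m, ‖b n‖ * εt n := by
      rw [hTS, ← Finset.sum_sub_distrib]
      calc ‖∑ n ∈ Finset.range m, (b n • y n - b n • T (xt n))‖
          ≤ ∑ n ∈ Finset.range m, ‖b n • y n - b n • T (xt n)‖ := norm_sum_le _ _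
        _ ≤ ∑ n ∈ Finset.range m, ‖b n‖ * εt n := by
            refine Finset.sum_le_sum fun n _ => ?_
            rw [← smul_sub, norm_smul]
            exact mul_le_mul_of_nonneg_left (hclose n) (norm_nonneg _)
    have hnormS : ‖S‖ = ‖T S‖ := (T.norm_map S).symm
    have hyb := hy m b
    have key : ∀ n, ‖b n‖ * (1 - εt n) = ‖a n‖ := by
      intro n
      rw [hbnorm, mul_assoc, inv_mul_cancel₀ (h1 n).ne', mul_one]
    constructor
    · rw [hSsum]
      have h2 : ‖∑ n ∈ Finset.range m, b n • y n‖ - ‖T S‖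
          ≤ ∑ n ∈ Finset.range m, ‖b n‖ * εt n :=
        le_trans (norm_sub_norm_le _ _) hdiff
      have h3 : ∑ n ∈ Finset.range m, ‖a n‖
          = (∑ n ∈ Finset.range m, ‖b n‖) - ∑ n ∈ Finset.range m, ‖b n‖ * εt n := by
        rw [← Finset.sum_sub_distrib]
        refine Finset.sum_congr rfl fun n _ => ?_
        have := key n
        ring_nf
        ring_nf at this
        linarith
      rw [hnormS]
      rw [hyb] at h2
      linarith
    · rw [hSsum, hnormS]
      have h2 : ‖T S‖ - ‖∑ n ∈ Finset.range m, b n • y n‖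
          ≤ ∑ n ∈ Finset.range m, ‖b n‖ * εt n := by
        refine le_trans (norm_sub_norm_le _ _) ?_
        rw [norm_sub_rev]
        exact hdiff
      have h3 : ∑ n ∈ Finset.range m, (1 + ((1 + εt n) / (1 - εt n) - 1)) * ‖a n‖
          = (∑ n ∈ Finset.range m, ‖b n‖) + ∑ n ∈ Finset.range m, ‖b n‖ * εt n := by
        rw [← Finset.sum_add_distrib]
        refine Finset.sum_congr rfl fun n _ => ?_
        have heq : 1 + ((1 + εt n) / (1 - εt n) - 1) = (1 + εt n) * (1 - εt n)⁻¹ := by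
          rw [div_eq_mul_inv]; ring
        rw [heq, hbnorm]; ring
      rw [hyb] at h2
      linarith
end

section
/- Let X be a real or complex Banach space and suppose ℓ₁ is linearly isometric to a quotient space of a subspace of X, i.e. there exist a closed subspace X₀ of X, a closed subspace X₁ of X₀, and a surjective linear isometry from X₀/X₁ onto ℓ₁. Then X contains asymptotically isometric copies of ℓ₁. Moreover, for every sequence (ε_n) of positive numbers converging to 0 there exists a sequence (x_n) in X with ∑_{n=1}^m |a_n| ≤ ‖∑_{n=1}^m a_n x_n‖ ≤ ∑_{n=1}^m (1+ε_n)|a_n| for every finite scalar sequence (a_n)_{n=1}^m. -/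
set_option maxHeartbeats 1000000

open Filter Finset

/-- `X` contains asymptotically isometric copies of `ℓ₁`. -/
def ContainsAICopiesOfL1 (𝕜 X : Type*) [RCLike 𝕜] [NormedAddCommGroup X]
    [NormedSpace 𝕜 X] : Prop :=
  ∃ (ε : ℕ → ℝ) (x : ℕ → X), (∀ n, 0 < ε n ∧ ε n < 1) ∧
    Tendsto ε atTop (nhds 0) ∧
    ∀ (m : ℕ) (a : ℕ → 𝕜),
      (∑ n ∈ Finset.range m, (1 - ε n) * ‖a n‖) ≤ ‖∑ n ∈ Finset.range m, a n • x n‖ ∧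
      ‖∑ n ∈ Finset.range m, a n • x n‖ ≤ ∑ n ∈ Finset.range m, ‖a n‖

/-- Key construction: lifting the preimages of the standard basis of `ℓ₁` through the
quotient map with small norm loss. -/
theorem ai_aux (𝕜 : Type*) [RCLike 𝕜]
    (X : Type*) [NormedAddCommGroup X] [NormedSpace 𝕜 X]
    (X₀ : Subspace 𝕜 X) (X₁ : Subspace 𝕜 X₀)
    (Φ : (X₀ ⧸ X₁) ≃ₗᵢ[𝕜] lp (fun _ : ℕ => 𝕜) 1)
    (ε : ℕ → ℝ) (hε : ∀ n, 0 < ε n) :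
    ∃ x : ℕ → X, ∀ (m : ℕ) (a : ℕ → 𝕜),
      (∑ n ∈ Finset.range m, ‖a n‖) ≤ ‖∑ n ∈ Finset.range m, a n • x n‖ ∧
      ‖∑ n ∈ Finset.range m, a n • x n‖ ≤ ∑ n ∈ Finset.range m, (1 + ε n) * ‖a n‖ := by
  set e : ℕ → lp (fun _ : ℕ => 𝕜) 1 := fun n => lp.single 1 n (1 : 𝕜) with he
  have hnorm_sum : ∀ (m : ℕ) (a : ℕ → 𝕜),
      ‖∑ n ∈ Finset.range m, a n • e n‖ = ∑ n ∈ Finset.range m, ‖a n‖ := by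
    intro m a
    have h1 : ∀ n, a n • e n = lp.single 1 n (a n) := by
      intro n
      rw [he]
      rw [← lp.single_smul, smul_eq_mul, mul_one]
    simp_rw [h1]
    have h2 := lp.norm_sum_single (p := 1) (by norm_num) (fun n => a n) (Finset.range m)
    simp only [ENNReal.toReal_one, Real.rpow_one] at h2
    exact h2
  have hq : ∀ n, ‖Φ.symm (e n)‖ = 1 := by
    intro n
    rw [Φ.symm.norm_map, he]
    have h3 := lp.norm_single (p := 1) (E := fun _ : ℕ => 𝕜) (by norm_num) n (1:𝕜)
    rw [h3, norm_one]
  choose y hy hylt using fun n => Submodule.Quotient.norm_mk_lt (Φ.symm (e n)) (hε n)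
  refine ⟨fun n => (y n : X), fun m a => ?_⟩
  constructor
  · have key : ‖(Submodule.Quotient.mk (∑ n ∈ Finset.range m, a n • y n) : X₀ ⧸ X₁)‖
        = ∑ n ∈ Finset.range m, ‖a n‖ := by
      have : (Submodule.Quotient.mk (∑ n ∈ Finset.range m, a n • y n) : X₀ ⧸ X₁)
          = ∑ n ∈ Finset.range m, a n • Φ.symm (e n) := by
        rw [← Submodule.mkQ_apply, map_sum]
        simp [hy]
      rw [this, ← Φ.norm_map]
      rw [map_sum]
      simp_rw [Φ.map_smul, Φ.apply_symm_apply]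
      exact hnorm_sum m a
    calc ∑ n ∈ Finset.range m, ‖a n‖
        ≤ ‖∑ n ∈ Finset.range m, a n • y n‖ := by
          rw [← key]; exact Submodule.Quotient.norm_mk_le _ _
      _ = ‖∑ n ∈ Finset.range m, a n • (y n : X)‖ := by
          rw [Submodule.coe_norm]
          congr 1
          push_cast
          rfl
  · calc ‖∑ n ∈ Finset.range m, a n • (y n : X)‖
        ≤ ∑ n ∈ Finset.range m, ‖a n • (y n : X)‖ := norm_sum_le _ _
      _ ≤ ∑ n ∈ Finset.range m, (1 + ε n) * ‖a n‖ := by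
          refine Finset.sum_le_sum fun n _ => ?_
          rw [norm_smul]
          have : ‖(y n : X)‖ ≤ 1 + ε n := by
            have := hylt n; rw [hq n] at this
            simpa [Submodule.coe_norm] using this.le
          calc ‖a n‖ * ‖(y n : X)‖ ≤ ‖a n‖ * (1 + ε n) :=
                mul_le_mul_of_nonneg_left this (norm_nonneg _)
            _ = (1 + ε n) * ‖a n‖ := mul_comm _ _

/-- If `ℓ₁` is linearly isometric to a quotient space of a subspace of `X`, then `X`
contains asymptotically isometric copies of `ℓ₁`; moreover for every null sequence
`(ε n)` of positive numbers there is a sequence `(x n)` in `X` satisfying (A2). -/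
theorem ai_of_l1_quotient_of_subspace (𝕜 : Type*) [RCLike 𝕜]
    (X : Type*) [NormedAddCommGroup X] [NormedSpace 𝕜 X] [CompleteSpace X]
    (X₀ : Subspace 𝕜 X) (hX₀ : IsClosed (X₀ : Set X))
    (X₁ : Subspace 𝕜 X₀) (hX₁ : IsClosed (X₁ : Set X₀))
    (h : Nonempty ((X₀ ⧸ X₁) ≃ₗᵢ[𝕜] lp (fun _ : ℕ => 𝕜) 1)) :
    ContainsAICopiesOfL1 𝕜 X ∧
    ∀ ε : ℕ → ℝ, (∀ n, 0 < ε n) → Tendsto ε atTop (nhds 0) →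
      ∃ x : ℕ → X, ∀ (m : ℕ) (a : ℕ → 𝕜),
        (∑ n ∈ Finset.range m, ‖a n‖) ≤ ‖∑ n ∈ Finset.range m, a n • x n‖ ∧
        ‖∑ n ∈ Finset.range m, a n • x n‖ ≤ ∑ n ∈ Finset.range m, (1 + ε n) * ‖a n‖ := by
  obtain ⟨Φ⟩ := h
  constructor
  · -- first part: rescale the sequence from `ai_aux`
    set δ : ℕ → ℝ := fun n => ((n : ℝ) + 2)⁻¹ with hδdef
    have hδpos : ∀ n, 0 < δ n := fun n => by positivity
    have hδlt1 : ∀ n, δ n < 1 := by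
      intro n
      rw [hδdef]
      rw [inv_lt_one_iff₀]
      right
      have : (0:ℝ) ≤ (n:ℝ) := Nat.cast_nonneg n
      linarith
    have h1δpos : ∀ n, (0:ℝ) < 1 + δ n := fun n => by linarith [hδpos n]
    obtain ⟨x', hx'⟩ := ai_aux 𝕜 X X₀ X₁ Φ δ hδpos
    refine ⟨δ, fun n => ((((1 + δ n : ℝ) : 𝕜))⁻¹ • x' n), fun n => ⟨hδpos n, hδlt1 n⟩, ?_, ?_⟩
    · have htop : Tendsto (fun n : ℕ => (n : ℝ) + 2) atTop atTop :=
        tendsto_atTop_add_const_right _ 2 tendsto_natCast_atTop_atTop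
      exact htop.inv_tendsto_atTop
    · intro m a
      set b : ℕ → 𝕜 := fun n => a n * (((1 + δ n : ℝ) : 𝕜))⁻¹ with hbdef
      have hsum_eq : ∑ n ∈ Finset.range m, a n • ((((1 + δ n : ℝ) : 𝕜))⁻¹ • x' n)
          = ∑ n ∈ Finset.range m, b n • x' n := by
        refine Finset.sum_congr rfl fun n _ => ?_
        rw [hbdef, smul_smul]
      have hbnorm : ∀ n, ‖b n‖ = ‖a n‖ * (1 + δ n)⁻¹ := by
        intro n
        rw [hbdef]
        rw [norm_mul, norm_inv, RCLike.norm_ofReal, abs_of_pos (h1δpos n)]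
      obtain ⟨hlow, hup⟩ := hx' m b
      constructor
      · rw [hsum_eq]
        refine le_trans ?_ hlow
        refine Finset.sum_le_sum fun n _ => ?_
        rw [hbnorm]
        have hkey : (1 - δ n) ≤ (1 + δ n)⁻¹ := by
          rw [inv_eq_one_div, le_div_iff₀ (h1δpos n)]
          nlinarith [hδpos n]
        calc (1 - δ n) * ‖a n‖ ≤ (1 + δ n)⁻¹ * ‖a n‖ :=
              mul_le_mul_of_nonneg_right hkey (norm_nonneg _)
          _ = ‖a n‖ * (1 + δ n)⁻¹ := mul_comm _ _
      · rw [hsum_eq]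
        refine le_trans hup ?_
        refine Finset.sum_le_sum fun n _ => ?_
        rw [hbnorm]
        have : (1 + δ n) * (‖a n‖ * (1 + δ n)⁻¹) = ‖a n‖ := by
          rw [mul_comm ‖a n‖, ← mul_assoc, mul_inv_cancel₀ (h1δpos n).ne', one_mul]
        rw [this]
  · intro ε hε _
    exact ai_aux 𝕜 X X₀ X₁ Φ ε hε
end

section
/- Let X be a real or complex Banach space containing asymptotically isometric copies of ℓ₁. Then the dual C([0,1])* of the Banach space C([0,1]) of continuous scalar-valued functions on [0,1] is linearly isometric to a subspace of the dual space X*; that is, there exists a linear isometric embedding of C([0,1])* into X*. -/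
open Filter Finset

namespace DualC01Aux

open Topology unitInterval bernstein NormedSpace

variable {𝕜 : Type*} [RCLike 𝕜]

lemma exists_unimodular (z : 𝕜) : ∃ sg : 𝕜, ‖sg‖ = 1 ∧ sg * z = (‖z‖ : 𝕜) := by
  rcases eq_or_ne z 0 with hz | hz
  · exact ⟨1, by simp [hz]⟩
  · refine ⟨(‖z‖ : 𝕜) * z⁻¹, ?_, ?_⟩
    · rw [norm_mul, norm_inv, RCLike.norm_ofReal, abs_of_nonneg (norm_nonneg z),
        mul_inv_cancel₀ (norm_ne_zero_iff.2 hz)]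
    · rw [mul_assoc, inv_mul_cancel₀ hz, mul_one]

lemma norm_I_le_one : ‖(RCLike.I : 𝕜)‖ ≤ 1 := by
  rcases eq_or_ne (RCLike.I : 𝕜) 0 with h | h
  · simp [h]
  · rw [RCLike.norm_I_of_ne_zero h]

section HB

variable {X : Type*} [NormedAddCommGroup X] [NormedSpace 𝕜 X]

lemma exists_Lambda (ε : ℕ → ℝ) (x : ℕ → X) (hε1 : ∀ n, ε n < 1)
    (hlow : ∀ (m : ℕ) (a : ℕ → 𝕜),
      (∑ n ∈ Finset.range m, (1 - ε n) * ‖a n‖) ≤ ‖∑ n ∈ Finset.range m, a n • x n‖)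
    (c : ℕ → 𝕜) (hc : ∀ n, ‖c n‖ ≤ 1 - ε n) :
    ∃ Λ : X →L[𝕜] 𝕜, ‖Λ‖ ≤ 1 ∧ ∀ n, Λ (x n) = c n := by
  have li : LinearIndependent 𝕜 x := by
    rw [linearIndependent_iff']
    intro s a hsum i hi
    set m := s.sup id + 1 with hm
    have hs : s ⊆ Finset.range m := by
      intro n hn
      exact Finset.mem_range.2 (Nat.lt_succ_of_le (Finset.le_sup (f := id) hn))
    set b : ℕ → 𝕜 := fun n => if n ∈ s then a n else 0 with hb
    have h1 : ∑ n ∈ Finset.range m, b n • x n = ∑ n ∈ s, a n • x n := by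
      rw [← Finset.sum_subset hs (fun n _ hn => by simp [hb, hn])]
      exact Finset.sum_congr rfl (fun n hn => by simp [hb, hn])
    have h2 := hlow m b
    rw [h1, hsum, norm_zero] at h2
    have h3 : ∀ n ∈ Finset.range m, (0:ℝ) ≤ (1 - ε n) * ‖b n‖ := fun n _ =>
      mul_nonneg (by linarith [hε1 n]) (norm_nonneg _)
    have h4 := (Finset.sum_eq_zero_iff_of_nonneg h3).1
      (le_antisymm h2 (Finset.sum_nonneg h3))
    have h5 := h4 i (hs hi)
    have h6 : (0:ℝ) < 1 - ε i := by linarith [hε1 i]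
    have h7 : ‖b i‖ = 0 := by
      rcases mul_eq_zero.1 h5 with h | h
      · exact absurd h (ne_of_gt h6)
      · exact h
    have h8 : b i = 0 := norm_eq_zero.1 h7
    simpa [hb, hi] using h8
  set V : Subspace 𝕜 X := Submodule.span 𝕜 (Set.range x) with hV
  set f₀ : V →ₗ[𝕜] 𝕜 := (Finsupp.linearCombination 𝕜 c).comp li.repr with hf₀
  have hbound : ∀ y : V, ‖f₀ y‖ ≤ 1 * ‖y‖ := by
    intro y
    set r := li.repr y with hr
    set m := r.support.sup id + 1 with hm
    have hs : r.support ⊆ Finset.range m := by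
      intro n hn
      exact Finset.mem_range.2 (Nat.lt_succ_of_le (Finset.le_sup (f := id) hn))
    have hy : ∑ n ∈ Finset.range m, r n • x n = (y : X) := by
      have h := li.linearCombination_repr y
      rw [Finsupp.linearCombination_apply, Finsupp.sum] at h
      rw [← h]
      exact (Finset.sum_subset hs (fun n _ hn => by
        rw [Finsupp.notMem_support_iff.1 hn, zero_smul])).symm
    have hfy : f₀ y = ∑ n ∈ Finset.range m, r n * c n := by
      rw [hf₀]
      show Finsupp.linearCombination 𝕜 c r = _
      rw [Finsupp.linearCombination_apply, Finsupp.sum]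
      exact Finset.sum_subset hs (fun n _ hn => by
        rw [Finsupp.notMem_support_iff.1 hn, zero_smul])
    calc ‖f₀ y‖ = ‖∑ n ∈ Finset.range m, r n * c n‖ := by rw [hfy]
      _ ≤ ∑ n ∈ Finset.range m, ‖r n * c n‖ := norm_sum_le _ _
      _ ≤ ∑ n ∈ Finset.range m, (1 - ε n) * ‖r n‖ := by
          refine Finset.sum_le_sum (fun n _ => ?_)
          rw [norm_mul, mul_comm]
          exact mul_le_mul_of_nonneg_right (hc n) (norm_nonneg _)
      _ ≤ ‖∑ n ∈ Finset.range m, r n • x n‖ := hlow m (fun n => r n)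
      _ = ‖(y : X)‖ := by rw [hy]
      _ = 1 * ‖y‖ := by rw [one_mul]; rfl
  set f : V →L[𝕜] 𝕜 := f₀.mkContinuous 1 hbound with hf
  obtain ⟨Λ, hΛext, hΛnorm⟩ := exists_extension_norm_eq V f
  refine ⟨Λ, ?_, ?_⟩
  · rw [hΛnorm]
    exact f₀.mkContinuous_norm_le zero_le_one hbound
  · intro n
    have hxn : x n ∈ V := Submodule.subset_span ⟨n, rfl⟩
    have h := hΛext ⟨x n, hxn⟩
    rw [show ((⟨x n, hxn⟩ : V) : X) = x n from rfl] at h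
    rw [h]
    show f₀ ⟨x n, hxn⟩ = c n
    rw [hf₀]
    show Finsupp.linearCombination 𝕜 c (li.repr ⟨x n, hxn⟩) = c n
    rw [li.repr_eq_single n ⟨x n, hxn⟩ rfl, Finsupp.linearCombination_single, one_smul]

end HB

/-- The Bernstein basis functions, as `𝕜`-valued continuous maps on `[0,1]`. -/
noncomputable def psiK (𝕜 : Type*) [RCLike 𝕜] (n : ℕ) (k : Fin (n+1)) : C(I, 𝕜) :=
  ContinuousMap.comp ⟨fun r : ℝ => (r : 𝕜), RCLike.continuous_ofReal⟩ (bernstein n k)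

@[simp] lemma psiK_apply (n : ℕ) (k : Fin (n+1)) (t : I) :
    psiK 𝕜 n k t = ((bernstein n k t : ℝ) : 𝕜) := rfl

/-- The `𝕜`-valued Bernstein approximation. -/
noncomputable def BK (𝕜 : Type*) [RCLike 𝕜] (n : ℕ) (g : C(I, 𝕜)) : C(I, 𝕜) :=
  ∑ k : Fin (n+1), g (z k) • psiK 𝕜 n k

lemma BK_apply (n : ℕ) (g : C(I, 𝕜)) (t : I) :
    BK 𝕜 n g t = ∑ k : Fin (n+1), g (z k) * ((bernstein n k t : ℝ) : 𝕜) := by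
  rw [BK]
  simp [smul_eq_mul]

/-- Total mass bound: `∑ ‖μ(ψ k)‖ ≤ ‖μ‖`. -/
lemma sum_norm_psiK_le (μ : StrongDual 𝕜 C(I, 𝕜)) (n : ℕ) :
    ∑ k : Fin (n+1), ‖μ (psiK 𝕜 n k)‖ ≤ ‖μ‖ := by
  have hsg : ∀ k : Fin (n+1), ∃ sg : 𝕜, ‖sg‖ = 1 ∧
      sg * μ (psiK 𝕜 n k) = (‖μ (psiK 𝕜 n k)‖ : 𝕜) := fun k => exists_unimodular _
  choose sg hsg1 hsg2 using hsg
  set h : C(I, 𝕜) := ∑ k : Fin (n+1), sg k • psiK 𝕜 n k with hh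
  have hhnorm : ‖h‖ ≤ 1 := by
    rw [ContinuousMap.norm_le _ zero_le_one]
    intro t
    have ht : h t = ∑ k : Fin (n+1), sg k * ((bernstein n k t : ℝ) : 𝕜) := by
      rw [hh]; simp [smul_eq_mul]
    calc ‖h t‖ = ‖∑ k : Fin (n+1), sg k * ((bernstein n k t : ℝ) : 𝕜)‖ := by rw [ht]
      _ ≤ ∑ k : Fin (n+1), ‖sg k * ((bernstein n k t : ℝ) : 𝕜)‖ := norm_sum_le _ _
      _ = ∑ k : Fin (n+1), bernstein n k t := by
          refine Finset.sum_congr rfl (fun k _ => ?_)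
          rw [norm_mul, hsg1 k, one_mul, RCLike.norm_ofReal,
            abs_of_nonneg bernstein_nonneg]
      _ = 1 := probability n t
  have key : ((∑ k : Fin (n+1), ‖μ (psiK 𝕜 n k)‖ : ℝ) : 𝕜) = μ h := by
    rw [hh, map_sum, RCLike.ofReal_sum]
    refine Finset.sum_congr rfl (fun k _ => ?_)
    rw [map_smul, smul_eq_mul, hsg2 k]
  have hnn : (0:ℝ) ≤ ∑ k : Fin (n+1), ‖μ (psiK 𝕜 n k)‖ :=
    Finset.sum_nonneg (fun k _ => norm_nonneg _)
  calc ∑ k : Fin (n+1), ‖μ (psiK 𝕜 n k)‖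
      = ‖((∑ k : Fin (n+1), ‖μ (psiK 𝕜 n k)‖ : ℝ) : 𝕜)‖ := by
        rw [RCLike.norm_ofReal, abs_of_nonneg hnn]
    _ = ‖μ h‖ := by rw [key]
    _ ≤ ‖μ‖ * ‖h‖ := μ.le_opNorm h
    _ ≤ ‖μ‖ := mul_le_of_le_one_right (norm_nonneg μ) hhnorm

/-- The `𝕜`-valued Bernstein approximations converge uniformly. -/
lemma BK_tendsto (g : C(I, 𝕜)) : Tendsto (fun n => BK 𝕜 n g) atTop (𝓝 g) := by
  set gre : C(I, ℝ) := ⟨fun t => RCLike.re (g t),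
    RCLike.continuous_re.comp g.continuous⟩ with hgre
  set gim : C(I, ℝ) := ⟨fun t => RCLike.im (g t),
    RCLike.continuous_im.comp g.continuous⟩ with hgim
  have hpt : ∀ (n : ℕ) (t : I), BK 𝕜 n g t - g t =
      ((bernsteinApproximation n gre t - gre t : ℝ) : 𝕜) +
      ((bernsteinApproximation n gim t - gim t : ℝ) : 𝕜) * RCLike.I := by
    intro n t
    have h1 : bernsteinApproximation n gre t
        = ∑ k : Fin (n+1), gre (z k) * bernstein n k t :=
      (bernsteinApproximation.apply n gre t).trans
        (Finset.sum_congr rfl fun k _ => by rw [smul_eq_mul, mul_comm])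
    have h2 : bernsteinApproximation n gim t
        = ∑ k : Fin (n+1), gim (z k) * bernstein n k t :=
      (bernsteinApproximation.apply n gim t).trans
        (Finset.sum_congr rfl fun k _ => by rw [smul_eq_mul, mul_comm])
    have h3 : BK 𝕜 n g t =
        ((bernsteinApproximation n gre t : ℝ) : 𝕜) +
        ((bernsteinApproximation n gim t : ℝ) : 𝕜) * RCLike.I := by
      rw [BK_apply, h1, h2, RCLike.ofReal_sum, RCLike.ofReal_sum, Finset.sum_mul,
        ← Finset.sum_add_distrib]
      refine Finset.sum_congr rfl (fun k _ => ?_)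
      rw [RCLike.ofReal_mul, RCLike.ofReal_mul]
      calc g (z k) * ((bernstein n k t : ℝ) : 𝕜)
          = ((RCLike.re (g (z k)) : 𝕜) + (RCLike.im (g (z k)) : 𝕜) * RCLike.I) *
            ((bernstein n k t : ℝ) : 𝕜) := by rw [RCLike.re_add_im (g (z k))]
        _ = (RCLike.re (g (z k)) : 𝕜) * ((bernstein n k t : ℝ) : 𝕜) +
            (RCLike.im (g (z k)) : 𝕜) * ((bernstein n k t : ℝ) : 𝕜) * RCLike.I := by
            ring
        _ = ((gre (z k) : ℝ) : 𝕜) * ((bernstein n k t : ℝ) : 𝕜) +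
            ((gim (z k) : ℝ) : 𝕜) * ((bernstein n k t : ℝ) : 𝕜) * RCLike.I := rfl
    rw [h3]
    have h4 : g t = ((gre t : ℝ) : 𝕜) + ((gim t : ℝ) : 𝕜) * RCLike.I :=
      (RCLike.re_add_im (g t)).symm
    rw [h4, RCLike.ofReal_sub, RCLike.ofReal_sub]
    ring
  have hbound : ∀ n : ℕ, ‖BK 𝕜 n g - g‖ ≤
      ‖bernsteinApproximation n gre - gre‖ + ‖bernsteinApproximation n gim - gim‖ := by
    intro n
    rw [ContinuousMap.norm_le _ (add_nonneg (norm_nonneg _) (norm_nonneg _))]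
    intro t
    rw [ContinuousMap.sub_apply, hpt n t]
    calc ‖((bernsteinApproximation n gre t - gre t : ℝ) : 𝕜) +
          ((bernsteinApproximation n gim t - gim t : ℝ) : 𝕜) * RCLike.I‖
        ≤ ‖((bernsteinApproximation n gre t - gre t : ℝ) : 𝕜)‖ +
          ‖((bernsteinApproximation n gim t - gim t : ℝ) : 𝕜) * RCLike.I‖ :=
          norm_add_le _ _
      _ ≤ |bernsteinApproximation n gre t - gre t| +
          |bernsteinApproximation n gim t - gim t| * 1 := by
          gcongr
          · rw [RCLike.norm_ofReal]
          · rw [norm_mul, RCLike.norm_ofReal]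
            exact mul_le_mul_of_nonneg_left norm_I_le_one (abs_nonneg _)
      _ ≤ ‖bernsteinApproximation n gre - gre‖ +
          ‖bernsteinApproximation n gim - gim‖ := by
          rw [mul_one]
          gcongr
          · have := (bernsteinApproximation n gre - gre).norm_coe_le_norm t
            rwa [ContinuousMap.sub_apply] at this
          · have := (bernsteinApproximation n gim - gim).norm_coe_le_norm t
            rwa [ContinuousMap.sub_apply] at this
  rw [tendsto_iff_norm_sub_tendsto_zero]
  have hre : Tendsto (fun n => ‖bernsteinApproximation n gre - gre‖) atTop (𝓝 0) := by
    have := bernsteinApproximation_uniform gre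
    rwa [tendsto_iff_norm_sub_tendsto_zero] at this
  have him : Tendsto (fun n => ‖bernsteinApproximation n gim - gim‖) atTop (𝓝 0) := by
    have := bernsteinApproximation_uniform gim
    rwa [tendsto_iff_norm_sub_tendsto_zero] at this
  have hsum : Tendsto (fun n => ‖bernsteinApproximation n gre - gre‖ +
      ‖bernsteinApproximation n gim - gim‖) atTop (𝓝 0) := by
    simpa using hre.add him
  exact squeeze_zero (fun n => norm_nonneg _) hbound hsum

/-- A dense sequence in the unit ball of `C(I,𝕜)`. -/
lemma exists_dense_ball_seq :
    ∃ f : ℕ → C(I, 𝕜), (∀ k, ‖f k‖ ≤ 1) ∧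
      ∀ g : C(I, 𝕜), ‖g‖ ≤ 1 → ∀ δ : ℝ, 0 < δ → ∃ k, ‖f k - g‖ < δ := by
  obtain ⟨d, hd⟩ := TopologicalSpace.exists_dense_seq C(I, 𝕜)
  refine ⟨fun k => if ‖d k‖ ≤ 1 then d k else (((‖d k‖ : ℝ) : 𝕜))⁻¹ • d k, ?_, ?_⟩
  · intro k
    by_cases hk : ‖d k‖ ≤ 1
    · simpa [hk] using hk
    · push_neg at hk
      have h0 : ‖d k‖ ≠ 0 := by positivity
      simp only [not_le.2 hk, if_false]
      rw [norm_smul ((((‖d k‖ : ℝ) : 𝕜))⁻¹) (d k), norm_inv, RCLike.norm_ofReal,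
        abs_of_nonneg (norm_nonneg _), inv_mul_cancel₀ h0]
  · intro g hg δ hδ
    set η := min δ 1 with hη
    have hη0 : 0 < η := lt_min hδ one_pos
    have hη1 : η ≤ 1 := min_le_right _ _
    have hηδ : η ≤ δ := min_le_left _ _
    set θ : ℝ := 1 - η/3 with hθ
    have hθ0 : (0:ℝ) ≤ θ := by rw [hθ]; linarith
    set c : 𝕜 := ((θ : ℝ) : 𝕜) with hc
    obtain ⟨k, hk⟩ := hd.exists_dist_lt (c • g) (show (0:ℝ) < η/3 by linarith)
    rw [dist_eq_norm] at hk
    have hnc : ‖c‖ = θ := by rw [hc, RCLike.norm_ofReal, abs_of_nonneg hθ0]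
    have h2 : ‖c • g‖ ≤ θ := by
      rw [norm_smul c g, hnc]
      calc θ * ‖g‖ ≤ θ * 1 := mul_le_mul_of_nonneg_left hg hθ0
        _ = θ := mul_one θ
    have hdk : ‖d k‖ ≤ 1 := by
      have h1 : ‖d k‖ ≤ ‖d k - c • g‖ + ‖c • g‖ := by
        simpa using norm_add_le (d k - c • g) (c • g)
      rw [norm_sub_rev] at h1
      have h9 : θ + η/3 ≤ 1 := by rw [hθ]; linarith
      calc ‖d k‖ ≤ ‖c • g - d k‖ + ‖c • g‖ := h1
        _ ≤ η/3 + θ := add_le_add hk.le h2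
        _ ≤ 1 := by linarith
    refine ⟨k, ?_⟩
    simp only [hdk, if_true]
    have h6 : ‖c • g - g‖ ≤ η/3 := by
      have h5 : c • g - g = (c - 1) • g := by
        ext t
        simp [sub_mul]
      have h7 : ‖c - 1‖ = η/3 := by
        rw [hc, show ((θ:ℝ):𝕜) - 1 = (((θ - 1 : ℝ)):𝕜) by push_cast; ring,
          RCLike.norm_ofReal, abs_of_nonpos (by rw [hθ]; linarith)]
        rw [hθ]; ring
      rw [h5, norm_smul (c - 1) g, h7]
      have := mul_le_mul_of_nonneg_left hg (show (0:ℝ) ≤ η/3 by linarith)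
      linarith
    calc ‖d k - g‖ = ‖(d k - c • g) + (c • g - g)‖ := by rw [sub_add_sub_cancel]
      _ ≤ ‖d k - c • g‖ + ‖c • g - g‖ := norm_add_le _ _
      _ ≤ ‖c • g - d k‖ + η/3 := by rw [norm_sub_rev]; linarith
      _ < η/3 + η/3 := by linarith
      _ < δ := by linarith

section Ultra

variable {X : Type*} [NormedAddCommGroup X] [NormedSpace 𝕜 X]

/-- weak-* ultrafilter limit of a bounded sequence of functionals. -/
lemma ultra_limit (U : Ultrafilter ℕ) (T : ℕ → X →L[𝕜] 𝕜) (C : ℝ) (hC0 : 0 ≤ C)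
    (hC : ∀ m, ‖T m‖ ≤ C) :
    ∃ L : X →L[𝕜] 𝕜, ‖L‖ ≤ C ∧ ∀ v : X, Tendsto (fun m => T m v) (↑U) (𝓝 (L v)) := by
  have hb : ∀ (v : X) (m : ℕ), T m v ∈ Metric.closedBall (0:𝕜) (C * ‖v‖) := by
    intro v m
    rw [Metric.mem_closedBall, dist_zero_right]
    calc ‖T m v‖ ≤ ‖T m‖ * ‖v‖ := (T m).le_opNorm v
      _ ≤ C * ‖v‖ := mul_le_mul_of_nonneg_right (hC m) (norm_nonneg v)
  have hlim : ∀ v : X, ∃ cc : 𝕜, Tendsto (fun m => T m v) (↑U) (𝓝 cc) := by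
    intro v
    have hcmp : IsCompact (Metric.closedBall (0:𝕜) (C * ‖v‖)) :=
      isCompact_closedBall _ _
    have hle : ↑(U.map (fun m => T m v)) ≤ 𝓟 (Metric.closedBall (0:𝕜) (C * ‖v‖)) := by
      rw [Ultrafilter.coe_map, le_principal_iff, Filter.mem_map]
      exact Filter.univ_mem' (hb v)
    obtain ⟨cc, _, hcc⟩ := hcmp.ultrafilter_le_nhds (U.map (fun m => T m v)) hle
    refine ⟨cc, ?_⟩
    have : Filter.map (fun m => T m v) ↑U ≤ 𝓝 cc := by rwa [← Ultrafilter.coe_map]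
    exact this
  choose l hl using hlim
  have hadd : ∀ v w : X, l (v + w) = l v + l w := by
    intro v w
    have h1 : Tendsto (fun m => T m (v + w)) (↑U) (𝓝 (l v + l w)) := by
      have := (hl v).add (hl w)
      simpa [map_add] using this
    exact tendsto_nhds_unique (hl (v + w)) h1
  have hsmul : ∀ (a : 𝕜) (v : X), l (a • v) = a • l v := by
    intro a v
    have h1 : Tendsto (fun m => T m (a • v)) (↑U) (𝓝 (a • l v)) := by
      have := (hl v).const_smul a
      simpa [map_smul] using this
    exact tendsto_nhds_unique (hl (a • v)) h1
  have hbnd : ∀ v : X, ‖l v‖ ≤ C * ‖v‖ := by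
    intro v
    have hmem : l v ∈ Metric.closedBall (0:𝕜) (C * ‖v‖) :=
      (Metric.isClosed_closedBall).mem_of_tendsto (hl v) (Filter.Eventually.of_forall (hb v))
    rwa [Metric.mem_closedBall, dist_zero_right] at hmem
  set L₀ : X →ₗ[𝕜] 𝕜 :=
    { toFun := l, map_add' := hadd, map_smul' := hsmul } with hL₀
  refine ⟨L₀.mkContinuous C hbnd, L₀.mkContinuous_norm_le hC0 hbnd, ?_⟩
  intro v
  exact hl v

end Ultra

end DualC01Aux

set_option maxHeartbeats 1600000 in
open Topology DualC01Aux unitInterval bernstein NormedSpace in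
/-- If `X` contains asymptotically isometric copies of `ℓ₁`, then the dual of
`C([0,1])` embeds linearly isometrically into `X*`. -/
theorem dual_C01_embeds_of_ai (𝕜 : Type*) [RCLike 𝕜]
    (X : Type*) [NormedAddCommGroup X] [NormedSpace 𝕜 X] [CompleteSpace X]
    (h : ContainsAICopiesOfL1 𝕜 X) :
    Nonempty
      ((StrongDual 𝕜 C(Set.Icc (0:ℝ) 1, 𝕜)) →ₗᵢ[𝕜] StrongDual 𝕜 X) := by
  show Nonempty ((StrongDual 𝕜 C(I, 𝕜)) →ₗᵢ[𝕜] StrongDual 𝕜 X)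
  obtain ⟨ε, x, hε, hε0, hai⟩ := h
  have hlow := fun m a => (hai m a).1
  have hup := fun m a => (hai m a).2
  -- ‖x n‖ ≤ 1
  have hxn : ∀ n, ‖x n‖ ≤ 1 := by
    intro n
    have h2 := hup (n+1) (fun k => if k = n then (1:𝕜) else 0)
    simp only [ite_smul, one_smul, zero_smul, apply_ite (norm : 𝕜 → ℝ), norm_one,
      norm_zero, Finset.sum_ite_eq', Finset.mem_range, Nat.lt_succ_self, if_true] at h2
    exact h2
  -- dense sequence in the ball, with arbitrarily large indices
  obtain ⟨f, hf1, hfd⟩ := exists_dense_ball_seq (𝕜 := 𝕜)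
  set g : ℕ → C(I, 𝕜) := fun n => f (Nat.unpair n).2 with hg
  have hg1 : ∀ n, ‖g n‖ ≤ 1 := fun n => hf1 _
  have hgd : ∀ (φ : C(I, 𝕜)), ‖φ‖ ≤ 1 → ∀ δ : ℝ, 0 < δ → ∀ N : ℕ,
      ∃ n, N ≤ n ∧ ‖g n - φ‖ < δ := by
    intro φ hφ δ hδ N
    obtain ⟨k, hk⟩ := hfd φ hφ δ hδ
    refine ⟨Nat.pair N k, Nat.left_le_pair N k, ?_⟩
    rw [hg]
    simp only [Nat.unpair_pair]
    exact hk
  -- the functionals Λ t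
  have hΛex : ∀ t : I, ∃ Λ : X →L[𝕜] 𝕜, ‖Λ‖ ≤ 1 ∧
      ∀ n, Λ (x n) = ((1 - ε n : ℝ) : 𝕜) * g n t := by
    intro t
    refine exists_Lambda ε x (fun n => (hε n).2) hlow _ (fun n => ?_)
    rw [norm_mul, RCLike.norm_ofReal, abs_of_nonneg (by linarith [(hε n).2])]
    calc (1 - ε n) * ‖g n t‖ ≤ (1 - ε n) * 1 :=
        mul_le_mul_of_nonneg_left
          (le_trans ((g n).norm_coe_le_norm t) (hg1 n)) (by linarith [(hε n).2])
      _ = 1 - ε n := mul_one _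
  choose Λ hΛ1 hΛ2 using hΛex
  -- the approximating operators S m
  set S : ℕ → StrongDual 𝕜 C(I, 𝕜) → StrongDual 𝕜 X :=
    fun m μ => ∑ k : Fin (m+1), μ (psiK 𝕜 m k) • Λ (z k) with hS
  have hSnorm : ∀ m μ, ‖S m μ‖ ≤ ‖μ‖ := by
    intro m μ
    calc ‖S m μ‖ ≤ ∑ k : Fin (m+1), ‖μ (psiK 𝕜 m k) • Λ (z k)‖ := by
          rw [hS]; exact norm_sum_le _ _
      _ ≤ ∑ k : Fin (m+1), ‖μ (psiK 𝕜 m k)‖ := by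
          refine Finset.sum_le_sum (fun k _ => ?_)
          rw [norm_smul (μ (psiK 𝕜 m k)) (Λ (z k))]
          exact mul_le_of_le_one_right (norm_nonneg _) (hΛ1 _)
      _ ≤ ‖μ‖ := sum_norm_psiK_le μ m
  have hSadd : ∀ m μ ν, S m (μ + ν) = S m μ + S m ν := by
    intro m μ ν
    show (∑ k : Fin (m+1), (μ + ν) (psiK 𝕜 m k) • Λ (z k))
        = (∑ k : Fin (m+1), μ (psiK 𝕜 m k) • Λ (z k))
          + ∑ k : Fin (m+1), ν (psiK 𝕜 m k) • Λ (z k)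
    rw [← Finset.sum_add_distrib]
    refine Finset.sum_congr rfl (fun k _ => ?_)
    rw [ContinuousLinearMap.add_apply]
    exact add_smul (μ (psiK 𝕜 m k)) (ν (psiK 𝕜 m k)) (Λ (z k))
  have hSsmul : ∀ m (a : 𝕜) μ, S m (a • μ) = a • S m μ := by
    intro m a μ
    show (∑ k : Fin (m+1), (a • μ) (psiK 𝕜 m k) • Λ (z k))
        = a • ∑ k : Fin (m+1), μ (psiK 𝕜 m k) • Λ (z k)
    rw [Finset.smul_sum]
    refine Finset.sum_congr rfl (fun k _ => ?_)
    rw [ContinuousLinearMap.smul_apply]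
    exact smul_assoc a (μ (psiK 𝕜 m k)) (Λ (z k))
  have hSval : ∀ m μ n, S m μ (x n) = ((1 - ε n : ℝ) : 𝕜) * μ (BK 𝕜 m (g n)) := by
    intro m μ n
    rw [hS]
    simp only
    rw [ContinuousLinearMap.sum_apply]
    simp only [ContinuousLinearMap.smul_apply, smul_eq_mul, hΛ2]
    rw [BK, map_sum, Finset.mul_sum]
    refine Finset.sum_congr rfl (fun k _ => ?_)
    rw [map_smul, smul_eq_mul]
    ring
  -- the ultrafilter limit T
  set U : Ultrafilter ℕ := Ultrafilter.of atTop with hUdef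
  have hU : (↑U : Filter ℕ) ≤ atTop := Ultrafilter.of_le _
  have hTex : ∀ μ : StrongDual 𝕜 C(I, 𝕜), ∃ L : X →L[𝕜] 𝕜, ‖L‖ ≤ ‖μ‖ ∧
      ∀ v : X, Tendsto (fun m => S m μ v) (↑U) (𝓝 (L v)) :=
    fun μ => ultra_limit U (fun m => S m μ) ‖μ‖ (norm_nonneg μ) (fun m => hSnorm m μ)
  choose T hT1 hT2 using hTex
  have hval : ∀ μ n, T μ (x n) = ((1 - ε n : ℝ) : 𝕜) * μ (g n) := by
    intro μ n
    have h1 : Tendsto (fun m => S m μ (x n)) atTop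
        (𝓝 (((1 - ε n : ℝ) : 𝕜) * μ (g n))) := by
      simp only [hSval]
      exact Tendsto.const_mul _ ((μ.continuous.tendsto (g n)).comp (BK_tendsto (g n)))
    exact tendsto_nhds_unique (hT2 μ (x n)) (h1.mono_left hU)
  -- linearity of T
  have hTadd : ∀ μ ν, T (μ + ν) = T μ + T ν := by
    intro μ ν
    ext v
    refine tendsto_nhds_unique (hT2 (μ + ν) v) ?_
    have h1 := (hT2 μ v).add (hT2 ν v)
    simp only [hSadd, ContinuousLinearMap.add_apply] at h1 ⊢
    exact h1
  have hTsmul : ∀ (a : 𝕜) μ, T (a • μ) = a • T μ := by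
    intro a μ
    ext v
    refine tendsto_nhds_unique (hT2 (a • μ) v) ?_
    have h1 := (hT2 μ v).const_smul a
    simp only [hSsmul, ContinuousLinearMap.smul_apply] at h1 ⊢
    exact h1
  -- lower bound for the norm
  have hlower : ∀ μ, ‖μ‖ ≤ ‖T μ‖ := by
    intro μ
    refine le_of_forall_pos_le_add (fun η hη => ?_)
    have hμ0 : (0:ℝ) ≤ ‖μ‖ := norm_nonneg μ
    have hden : (0:ℝ) < 1 + 2 * ‖μ‖ := by linarith
    set δ := min (η / (1 + 2 * ‖μ‖)) (1/2) with hδdef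
    have hδpos : 0 < δ := lt_min (div_pos hη hden) (by norm_num)
    have hδhalf : δ ≤ 1/2 := min_le_right _ _
    have hδ1 : δ < 1 := lt_of_le_of_lt hδhalf (by norm_num)
    have hδη : δ * (1 + 2 * ‖μ‖) ≤ η := by
      have h1 : δ ≤ η / (1 + 2 * ‖μ‖) := min_le_left _ _
      calc δ * (1 + 2 * ‖μ‖) ≤ (η / (1 + 2 * ‖μ‖)) * (1 + 2 * ‖μ‖) :=
            mul_le_mul_of_nonneg_right h1 hden.le
        _ = η := div_mul_cancel₀ η (ne_of_gt hden)
    obtain ⟨N, hN⟩ := (Metric.tendsto_atTop.1 hε0) δ hδpos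
    rcases le_or_gt ‖μ‖ δ with hsmall | hbig
    · have h2 : η / (1 + 2 * ‖μ‖) ≤ η := div_le_self hη.le (by linarith)
      have h3 : δ ≤ η / (1 + 2 * ‖μ‖) := min_le_left _ _
      linarith [norm_nonneg (T μ)]
    · -- norming functional
      have hnorming : ∃ φ : C(I, 𝕜), ‖φ‖ ≤ 1 ∧ ‖μ‖ - δ ≤ ‖μ φ‖ := by
        by_contra hcon
        push_neg at hcon
        have hb : ‖μ‖ ≤ ‖μ‖ - δ := by
          refine μ.opNorm_le_bound (by linarith) (fun φ => ?_)
          rcases eq_or_ne φ 0 with h0 | h0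
          · simp [h0]
          · have hφpos : 0 < ‖φ‖ := norm_pos_iff.2 h0
            set a : 𝕜 := ((‖φ‖ : ℝ) : 𝕜)⁻¹ with ha
            have hna : ‖a‖ = ‖φ‖⁻¹ := by
              rw [ha, norm_inv, RCLike.norm_ofReal, abs_of_nonneg (norm_nonneg φ)]
            have h1 : ‖a • φ‖ ≤ 1 := by
              rw [norm_smul a φ, hna, inv_mul_cancel₀ (ne_of_gt hφpos)]
            have h2 := hcon _ h1
            rw [map_smul, smul_eq_mul, norm_mul, hna] at h2
            calc ‖μ φ‖ = ‖φ‖ * (‖φ‖⁻¹ * ‖μ φ‖) := by field_simp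
              _ ≤ ‖φ‖ * (‖μ‖ - δ) := mul_le_mul_of_nonneg_left h2.le (norm_nonneg φ)
              _ = (‖μ‖ - δ) * ‖φ‖ := mul_comm _ _
        linarith
      obtain ⟨φ, hφ1, hφ2⟩ := hnorming
      obtain ⟨n, hnN, hgn⟩ := hgd φ hφ1 δ hδpos N
      have hεn : ε n < δ := by
        have hd := hN n hnN
        rw [Real.dist_0_eq_abs, abs_of_pos (hε n).1] at hd
        exact hd
      have hmugn : ‖μ‖ - δ - ‖μ‖ * δ ≤ ‖μ (g n)‖ := by
        have h1 : ‖μ (g n) - μ φ‖ ≤ ‖μ‖ * δ := by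
          rw [← map_sub]
          calc ‖μ (g n - φ)‖ ≤ ‖μ‖ * ‖g n - φ‖ := μ.le_opNorm _
            _ ≤ ‖μ‖ * δ := mul_le_mul_of_nonneg_left hgn.le hμ0
        have h2 : ‖μ φ‖ ≤ ‖μ (g n)‖ + ‖μ (g n) - μ φ‖ := by
          have h3 := norm_add_le (μ (g n)) (μ φ - μ (g n))
          rw [add_sub_cancel] at h3
          rw [norm_sub_rev] at h3
          linarith [h3]
        linarith
      have hTn : (1 - ε n) * ‖μ (g n)‖ ≤ ‖T μ‖ := by
        have h1 : ‖T μ (x n)‖ ≤ ‖T μ‖ := by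
          calc ‖T μ (x n)‖ ≤ ‖T μ‖ * ‖x n‖ := (T μ).le_opNorm _
            _ ≤ ‖T μ‖ * 1 := mul_le_mul_of_nonneg_left (hxn n) (norm_nonneg _)
            _ = ‖T μ‖ := mul_one _
        have h2 : ‖T μ (x n)‖ = (1 - ε n) * ‖μ (g n)‖ := by
          rw [hval μ n, norm_mul, RCLike.norm_ofReal,
            abs_of_nonneg (by linarith [(hε n).2])]
        linarith
      have hchain : (1 - δ) * (‖μ‖ - δ - ‖μ‖ * δ) ≤ ‖T μ‖ := by
        calc (1 - δ) * (‖μ‖ - δ - ‖μ‖ * δ) ≤ (1 - δ) * ‖μ (g n)‖ :=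
              mul_le_mul_of_nonneg_left hmugn (by linarith)
          _ ≤ (1 - ε n) * ‖μ (g n)‖ :=
              mul_le_mul_of_nonneg_right (by linarith) (norm_nonneg _)
          _ ≤ ‖T μ‖ := hTn
      nlinarith [hδpos.le, hμ0, hδη, hchain, hδ1.le,
        mul_nonneg hδpos.le hδpos.le, mul_nonneg (mul_nonneg hδpos.le hδpos.le) hμ0]
  exact ⟨{ toFun := T,
           map_add' := hTadd,
           map_smul' := hTsmul,
           norm_map' := fun μ => le_antisymm (hT1 μ) (hlower μ) }⟩
end

section
/- Let X be a real or complex Banach space containing asymptotically isometric copies of ℓ₁. Then L¹([0,1]) (the space of Lebesgue-integrable scalar-valued functions on [0,1] with its usual norm) is linearly isometric to a subspace of the dual space X*; that is, there exists a linear isometric embedding of L¹([0,1]) into X*. -/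
open Filter Finset MeasureTheory

namespace AIL1

/-! ### Dyadic cells of `[0,1]` -/

abbrev I01 : Type := Set.Icc (0:ℝ) 1

/-- dyadic cell `[j/2^k, (j+1)/2^k)` as a subset of `[0,1]`. -/
def S (k j : ℕ) : Set I01 := Subtype.val ⁻¹' Set.Ico ((j:ℝ)/2^k) ((j+1)/2^k)

lemma measurableSet_S (k j : ℕ) : MeasurableSet (S k j) :=
  measurable_subtype_coe measurableSet_Ico

lemma disjoint_S (k : ℕ) {j j' : ℕ} (h : j ≠ j') : Disjoint (S k j) (S k j') := by
  have key : ∀ a b : ℕ, a < b → Disjoint (S k a) (S k b) := by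
    intro a b hab
    apply Disjoint.preimage
    rw [Set.Ico_disjoint_Ico]
    have : ((a:ℝ)+1)/2^k ≤ (b:ℝ)/2^k := by
      gcongr
      exact_mod_cast Nat.succ_le_of_lt hab
    calc min (((a:ℝ)+1)/2^k) (((b:ℝ)+1)/2^k) ≤ ((a:ℝ)+1)/2^k := min_le_left _ _
      _ ≤ max ((a:ℝ)/2^k) ((b:ℝ)/2^k) := this.trans (le_max_right _ _)
  rcases h.lt_or_gt with hlt | hlt
  · exact key _ _ hlt
  · exact (key _ _ hlt).symm

lemma pow_cast_div (m k : ℕ) (hm : m ≤ k) (i : ℕ) :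
    ((i * 2^(k-m) : ℕ) : ℝ) / 2^k = (i:ℝ)/2^m := by
  have h2m : (2:ℝ)^m ≠ 0 := by positivity
  have h2k : (2:ℝ)^k ≠ 0 := by positivity
  push_cast
  rw [div_eq_div_iff h2k h2m, mul_assoc, ← pow_add, Nat.sub_add_cancel hm]

lemma cast_mul_pow_sub (m k : ℕ) (hm : m ≤ k) (i : ℕ) :
    ((i * 2^(k-m) : ℕ) : ℝ) = (i:ℝ)/2^m * 2^k := by
  have h2k : (0:ℝ) < 2^k := by positivity
  rw [← pow_cast_div m k hm i]
  field_simp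

lemma mem_S_floor {t : I01} (k : ℕ) (ht : (t:ℝ) < 1) :
    ⌊(t:ℝ) * 2^k⌋₊ < 2^k ∧ t ∈ S k ⌊(t:ℝ) * 2^k⌋₊ := by
  have h0 : (0:ℝ) ≤ (t:ℝ) := t.2.1
  have h2 : (0:ℝ) < 2^k := by positivity
  have hnn : (0:ℝ) ≤ (t:ℝ) * 2^k := by positivity
  constructor
  · rw [Nat.floor_lt hnn]
    push_cast
    nlinarith
  · constructor
    · rw [div_le_iff₀ h2]
      exact Nat.floor_le hnn
    · rw [show ((⌊(t:ℝ)*2^k⌋₊ : ℝ) + 1) = ((⌊(t:ℝ)*2^k⌋₊ + 1 : ℕ) : ℝ) by push_cast; ring,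
        lt_div_iff₀ h2]
      exact_mod_cast Nat.lt_floor_add_one ((t:ℝ) * 2^k)

lemma S_eq_biUnion {m k : ℕ} (hm : m ≤ k) {i : ℕ} (hi : i < 2^m) :
    S m i = ⋃ j ∈ (Finset.range (2^k)).filter (fun j => j / 2^(k-m) = i), S k j := by
  have h2m : (0:ℝ) < 2^m := by positivity
  have h2k : (0:ℝ) < 2^k := by positivity
  have hd : 0 < 2^(k-m) := by positivity
  ext t
  have h0 : (0:ℝ) ≤ (t:ℝ) := t.2.1
  have hnn : (0:ℝ) ≤ (t:ℝ) * 2^k := mul_nonneg h0 h2k.le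
  simp only [Set.mem_iUnion, Finset.mem_filter, Finset.mem_range, exists_prop]
  constructor
  · rintro ⟨h1, h2⟩
    have ht1 : (t:ℝ) < 1 := by
      have : ((i:ℝ)+1)/2^m ≤ 1 := by
        rw [div_le_one h2m]
        exact_mod_cast Nat.succ_le_of_lt hi
      exact h2.trans_le this
    obtain ⟨hjlt, hmem⟩ := mem_S_floor k ht1
    set j := ⌊(t:ℝ) * 2^k⌋₊ with hj
    refine ⟨j, ⟨hjlt, ?_⟩, hmem⟩
    have hlow : i * 2^(k-m) ≤ j := by
      rw [hj, Nat.le_floor_iff hnn, cast_mul_pow_sub m k hm i]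
      exact mul_le_mul_of_nonneg_right h1 h2k.le
    have hhigh : j < (i+1) * 2^(k-m) := by
      rw [hj, Nat.floor_lt hnn, cast_mul_pow_sub m k hm (i+1)]
      apply mul_lt_mul_of_pos_right ?_ h2k
      push_cast
      exact h2
    exact Nat.div_eq_of_lt_le hlow hhigh
  · rintro ⟨j, ⟨hjlt, hji⟩, ht1, ht2⟩
    have hlow : i * 2^(k-m) ≤ j := by
      rw [← hji]; exact Nat.div_mul_le_self j _
    have hhigh : j < (i+1) * 2^(k-m) := by
      have : j / 2^(k-m) < i + 1 := by rw [hji]; exact Nat.lt_succ_self i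
      rwa [Nat.div_lt_iff_lt_mul hd] at this
    constructor
    · calc (i:ℝ)/2^m = ((i * 2^(k-m) : ℕ) : ℝ) / 2^k := (pow_cast_div m k hm i).symm
        _ ≤ (j:ℝ)/2^k := by gcongr <;> exact_mod_cast hlow
        _ ≤ (t:ℝ) := ht1
    · calc (t:ℝ) < ((j:ℝ)+1)/2^k := ht2
        _ ≤ ((i:ℝ)+1)/2^m := by
            have e : (((i+1) * 2^(k-m) : ℕ) : ℝ) / 2^k = ((i:ℝ)+1)/2^m := by
              rw [pow_cast_div m k hm (i+1)]; push_cast; ring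
            rw [← e]
            gcongr <;> exact_mod_cast hhigh

lemma biUnion_S_full (m : ℕ) :
    ⋃ i ∈ Finset.range (2^m), S m i = {t : I01 | (t:ℝ) < 1} := by
  ext t
  simp only [Set.mem_iUnion, Finset.mem_range, exists_prop, Set.mem_setOf_eq]
  constructor
  · rintro ⟨i, hi, _, h2⟩
    have h2m : (0:ℝ) < 2^m := by positivity
    have : ((i:ℝ)+1)/2^m ≤ 1 := by
      rw [div_le_one h2m]
      exact_mod_cast Nat.succ_le_of_lt hi
    exact h2.trans_le this
  · intro ht
    obtain ⟨h1, h2⟩ := mem_S_floor m ht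
    exact ⟨_, h1, h2⟩

lemma null_compl (m : ℕ) :
    (volume : Measure I01) (⋃ i ∈ Finset.range (2^m), S m i)ᶜ = 0 := by
  rw [biUnion_S_full]
  have heq : {t : I01 | (t:ℝ) < 1}ᶜ = Subtype.val ⁻¹' {(1:ℝ)} := by
    ext t
    simp only [Set.mem_compl_iff, Set.mem_setOf_eq, not_lt, Set.mem_preimage,
      Set.mem_singleton_iff]
    exact ⟨fun h => le_antisymm t.2.2 h, fun h => h.ge⟩
  rw [heq, Measure.Subtype.volume_def, Measure.comap_apply _ Subtype.val_injective
    (fun s hs => MeasurableSet.subtype_image (by measurability) hs)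
    _ (measurable_subtype_coe (measurableSet_singleton _))]
  apply measure_mono_null (Set.image_preimage_subset _ _)
  simp

lemma sum_setIntegral_fiber {E : Type*} [NormedAddCommGroup E] [NormedSpace ℝ E] {F : I01 → E}
    (hF : Integrable F (volume : Measure I01)) {m k : ℕ} (hm : m ≤ k) {i : ℕ} (hi : i < 2^m) :
    ∑ j ∈ (Finset.range (2^k)).filter (fun j => j / 2^(k-m) = i), ∫ t in S k j, F t
      = ∫ t in S m i, F t := by
  rw [← integral_biUnion_finset _ (fun j _ => measurableSet_S k j)
    (fun j _ j' _ hne => disjoint_S k hne) (fun j _ => hF.integrableOn),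
    ← S_eq_biUnion hm hi]

lemma sum_setIntegral_total {E : Type*} [NormedAddCommGroup E] [NormedSpace ℝ E] {F : I01 → E}
    (hF : Integrable F (volume : Measure I01)) (m : ℕ) :
    ∑ i ∈ Finset.range (2^m), ∫ t in S m i, F t = ∫ t, F t := by
  rw [← integral_biUnion_finset _ (fun j _ => measurableSet_S m j)
    (fun j _ j' _ hne => disjoint_S m hne) (fun j _ => hF.integrableOn)]
  set U := ⋃ i ∈ Finset.range (2^m), S m i with hUdef
  have hU : MeasurableSet U := Finset.measurableSet_biUnion _ (fun j _ => measurableSet_S m j)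
  have h0 : ∫ t in Uᶜ, F t = 0 := by
    have hz : (volume : Measure I01).restrict Uᶜ = 0 := by
      rw [Measure.restrict_eq_zero]; exact null_compl m
    rw [hz]; exact integral_zero_measure _
  rw [← integral_add_compl hU hF, h0, add_zero]

/-! ### A Hahn-Banach extension lemma -/

variable {𝕜 : Type*} [RCLike 𝕜] {X : Type*} [NormedAddCommGroup X] [NormedSpace 𝕜 X]

/-- Hahn-Banach with prescribed values on a sequence. -/
theorem exists_dual_of_bound (x : ℕ → X) (c : ℕ → 𝕜)
    (key : ∀ a : ℕ →₀ 𝕜, ‖Finsupp.linearCombination 𝕜 c a‖ ≤ ‖Finsupp.linearCombination 𝕜 x a‖) :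
    ∃ w : X →L[𝕜] 𝕜, ‖w‖ ≤ 1 ∧ ∀ n, w (x n) = c n := by
  set F := Finsupp.linearCombination 𝕜 x with hF
  set G := Finsupp.linearCombination 𝕜 c with hG
  set Y : Submodule 𝕜 X := Submodule.span 𝕜 (Set.range x) with hY
  have hrange : ∀ y : Y, (y : X) ∈ LinearMap.range F := by
    intro y
    rw [Finsupp.range_linearCombination]
    exact y.2
  have hGF : ∀ a b : ℕ →₀ 𝕜, F a = F b → G a = G b := by
    intro a b hab
    have h2 := key (a - b)
    rw [map_sub, map_sub, hab, sub_self, norm_zero] at h2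
    have : ‖G a - G b‖ ≤ 0 := h2
    have := le_antisymm this (norm_nonneg _)
    rwa [norm_sub_eq_zero_iff] at this
  choose sec hsec using fun y : Y => hrange y
  have hsec' : ∀ (y : Y) (a : ℕ →₀ 𝕜), F a = (y : X) → G a = G (sec y) := fun y a ha =>
    hGF _ _ (by rw [ha, hsec])
  let φ₀ : Y →ₗ[𝕜] 𝕜 :=
    { toFun := fun y => G (sec y)
      map_add' := by
        intro y z
        show G (sec (y + z)) = G (sec y) + G (sec z)
        have : G (sec (y + z)) = G (sec y + sec z) := by
          refine (hsec' (y+z) _ ?_).symm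
          rw [map_add, hsec, hsec]; rfl
        rw [this, map_add]
      map_smul' := by
        intro t y
        show G (sec (t • y)) = (RingHom.id 𝕜) t • G (sec y)
        have : G (sec (t • y)) = G (t • sec y) := by
          refine (hsec' (t • y) _ ?_).symm
          rw [LinearMap.map_smul, hsec]; rfl
        rw [this, LinearMap.map_smul]; rfl }
  have hφ₀ : ∀ y : Y, ‖φ₀ y‖ ≤ 1 * ‖y‖ := by
    intro y
    have := key (sec y)
    rw [hsec] at this
    show ‖G (sec y)‖ ≤ 1 * ‖y‖
    simpa using this
  let φ : Y →L[𝕜] 𝕜 := LinearMap.mkContinuous φ₀ 1 hφ₀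
  obtain ⟨g, hg, hnorm⟩ := exists_extension_norm_eq Y φ
  refine ⟨g, ?_, ?_⟩
  · rw [hnorm]; exact LinearMap.mkContinuous_norm_le _ zero_le_one _
  · intro n
    have hmem : x n ∈ Y := Submodule.subset_span (Set.mem_range_self n)
    have h1 : g (x n) = φ ⟨x n, hmem⟩ := hg ⟨x n, hmem⟩
    have h2 : φ ⟨x n, hmem⟩ = G (sec ⟨x n, hmem⟩) := rfl
    have h3 : G (Finsupp.single n (1:𝕜)) = G (sec ⟨x n, hmem⟩) := by
      apply hsec'
      rw [hF, Finsupp.linearCombination_single, one_smul]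
    have h4 : G (Finsupp.single n (1:𝕜)) = c n := by
      rw [hG, Finsupp.linearCombination_single, smul_eq_mul, one_mul]
    rw [h1, h2, ← h3, h4]

/-! ### Ultrafilter limits -/

noncomputable def UF : Ultrafilter ℕ := Ultrafilter.of atTop

lemma UF_le_atTop : (UF : Filter ℕ) ≤ atTop := Ultrafilter.of_le _

open Classical in
noncomputable def ulim (g : ℕ → 𝕜) : 𝕜 :=
  if h : ∃ a, Tendsto g (UF : Filter ℕ) (nhds a) then h.choose else 0

lemma tendsto_ulim {g : ℕ → 𝕜} {C : ℝ} (hbd : ∀ n, ‖g n‖ ≤ C) :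
    Tendsto g (UF : Filter ℕ) (nhds (ulim g)) := by
  have hex : ∃ a, Tendsto g (UF : Filter ℕ) (nhds a) := by
    have hc : IsCompact (Metric.closedBall (0:𝕜) C) := isCompact_closedBall _ _
    have hle : (UF.map g : Filter 𝕜) ≤ Filter.principal (Metric.closedBall (0:𝕜) C) := by
      rw [Ultrafilter.coe_map, Filter.le_principal_iff, Filter.mem_map]
      exact Filter.univ_mem' fun n => Metric.mem_closedBall.2 (by simpa [dist_eq_norm] using hbd n)
    obtain ⟨a, _, ha⟩ := hc.ultrafilter_le_nhds (UF.map g) hle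
    exact ⟨a, ha⟩
  rw [ulim]
  rw [dif_pos hex]
  exact hex.choose_spec

lemma ulim_eq {g : ℕ → 𝕜} {a : 𝕜} {C : ℝ} (hbd : ∀ n, ‖g n‖ ≤ C)
    (h : Tendsto g (UF : Filter ℕ) (nhds a)) : ulim g = a :=
  tendsto_nhds_unique (tendsto_ulim hbd) h

lemma norm_ulim_le {g : ℕ → 𝕜} {C : ℝ} (hbd : ∀ n, ‖g n‖ ≤ C) : ‖ulim g‖ ≤ C :=
  le_of_tendsto' ((tendsto_ulim hbd).norm) hbd

lemma ulim_add {g h : ℕ → 𝕜} {C D : ℝ} (hg : ∀ n, ‖g n‖ ≤ C) (hh : ∀ n, ‖h n‖ ≤ D) :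
    ulim (fun n => g n + h n) = ulim g + ulim h :=
  ulim_eq (C := C + D) (fun n => (norm_add_le _ _).trans (add_le_add (hg n) (hh n)))
    ((tendsto_ulim hg).add (tendsto_ulim hh))

lemma ulim_const_mul {g : ℕ → 𝕜} {C : ℝ} (c : 𝕜) (hg : ∀ n, ‖g n‖ ≤ C) :
    ulim (fun n => c * g n) = c * ulim g :=
  ulim_eq (C := ‖c‖ * C)
    (fun n => by rw [norm_mul]; exact mul_le_mul_of_nonneg_left (hg n) (norm_nonneg c))
    ((tendsto_ulim hg).const_mul c)

/-! ### Patterns -/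

noncomputable def qk (𝕜 : Type*) [RCLike 𝕜] (p : ℚ × ℚ) : 𝕜 :=
  (p.1 : 𝕜) + (p.2 : 𝕜) * RCLike.I

noncomputable def tr (𝕜 : Type*) [RCLike 𝕜] (z : 𝕜) : 𝕜 :=
  if ‖z‖ ≤ 1 then z else 0

abbrev Pat : Type := ℕ × List (ℚ × ℚ)

noncomputable def rpat (n : ℕ) : Pat := Denumerable.ofNat Pat (Nat.unpair n).2

noncomputable def pv (𝕜 : Type*) [RCLike 𝕜] (p : Pat) (i : ℕ) : 𝕜 :=
  tr 𝕜 (qk 𝕜 (p.2.getD i (0,0)))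

noncomputable def V (𝕜 : Type*) [RCLike 𝕜] (n k j : ℕ) : 𝕜 :=
  if (rpat n).1 ≤ k then pv 𝕜 (rpat n) (j / 2^(k - (rpat n).1)) else 0

lemma norm_tr_le (z : 𝕜) : ‖tr 𝕜 z‖ ≤ 1 := by
  rw [tr]; split
  · assumption
  · simp

lemma norm_pv_le (p : Pat) (i : ℕ) : ‖pv 𝕜 p i‖ ≤ 1 := norm_tr_le _

lemma norm_V_le (n k j : ℕ) : ‖V 𝕜 n k j‖ ≤ 1 := by
  rw [V]; split
  · exact norm_pv_le _ _
  · simp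

lemma rpat_surj (p : Pat) (N : ℕ) : ∃ n, N ≤ n ∧ rpat n = p := by
  obtain ⟨e, he⟩ : ∃ e, Denumerable.ofNat Pat e = p :=
    ⟨@Encodable.encode Pat Denumerable.toEncodable p, Denumerable.ofNat_encode p⟩
  refine ⟨Nat.pair N e, Nat.left_le_pair _ _, ?_⟩
  rw [rpat, Nat.unpair_pair]
  exact he

lemma norm_I_le : ‖(RCLike.I : 𝕜)‖ ≤ 1 := by
  by_cases hI : (RCLike.I : 𝕜) = 0
  · simp [hI]
  · rw [RCLike.norm_I_of_ne_zero hI]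

lemma qk_approx (z : 𝕜) {δ : ℝ} (hδ : 0 < δ) : ∃ p : ℚ × ℚ, ‖qk 𝕜 p - z‖ < δ := by
  obtain ⟨q, hq⟩ := exists_rat_near (RCLike.re z) (by linarith : (0:ℝ) < δ/2)
  obtain ⟨q', hq'⟩ := exists_rat_near (RCLike.im z) (by linarith : (0:ℝ) < δ/2)
  refine ⟨(q, q'), ?_⟩
  set a := RCLike.re z with ha
  set b := RCLike.im z with hb
  have hz : ((a : ℝ) : 𝕜) + (b : ℝ) * RCLike.I = z := RCLike.re_add_im z
  have key : qk 𝕜 (q, q') - z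
      = (((q : ℝ) - a : ℝ) : 𝕜) + (((q' : ℝ) - b : ℝ) : 𝕜) * RCLike.I := by
    rw [qk]
    conv_lhs => rw [← hz]
    push_cast
    ring
  rw [key]
  calc ‖(((q : ℝ) - a : ℝ) : 𝕜) + (((q' : ℝ) - b : ℝ) : 𝕜) * RCLike.I‖
      ≤ ‖(((q : ℝ) - a : ℝ) : 𝕜)‖ + ‖(((q' : ℝ) - b : ℝ) : 𝕜)‖ * ‖(RCLike.I : 𝕜)‖ := by
        refine (norm_add_le _ _).trans ?_
        gcongr
        exact norm_mul_le _ _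
    _ ≤ |(q : ℝ) - a| + |(q' : ℝ) - b| * 1 := by
        rw [RCLike.norm_ofReal, RCLike.norm_ofReal]
        have hI := norm_I_le (𝕜 := 𝕜)
        have h1 : |(q':ℝ) - b| * ‖(RCLike.I:𝕜)‖ ≤ |(q':ℝ) - b| * 1 :=
          mul_le_mul_of_nonneg_left hI (abs_nonneg _)
        linarith
    _ < δ/2 + δ/2 * 1 := by
        rw [abs_sub_comm ((q:ℝ)) _, abs_sub_comm ((q':ℝ)) _]
        gcongr
    _ = δ := by ring

/-! ### The candidate operator -/

/-- the approximating pairing sequence -/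
noncomputable def sq (w : ℕ → ℕ → X →L[𝕜] 𝕜) (f : Lp 𝕜 1 (volume : Measure I01))
    (y : X) (k : ℕ) : 𝕜 :=
  ∑ j ∈ Finset.range (2^k), (∫ t in S k j, f t) * (w k j y)

lemma sum_norm_setIntegral_le (f : Lp 𝕜 1 (volume : Measure I01)) (k : ℕ) :
    ∑ j ∈ Finset.range (2^k), ‖∫ t in S k j, f t‖ ≤ ‖f‖ := by
  have hint := L1.integrable_coeFn f
  calc ∑ j ∈ Finset.range (2^k), ‖∫ t in S k j, f t‖
      ≤ ∑ j ∈ Finset.range (2^k), ∫ t in S k j, ‖f t‖ :=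
        Finset.sum_le_sum fun j _ => norm_integral_le_integral_norm _
    _ = ∫ t, ‖f t‖ := sum_setIntegral_total hint.norm k
    _ = ‖f‖ := (L1.norm_eq_integral_norm f).symm

lemma sq_bound {w : ℕ → ℕ → X →L[𝕜] 𝕜} (hw1 : ∀ k j, ‖w k j‖ ≤ 1)
    (f : Lp 𝕜 1 (volume : Measure I01)) (y : X) (k : ℕ) :
    ‖sq w f y k‖ ≤ ‖f‖ * ‖y‖ := by
  calc ‖sq w f y k‖ ≤ ∑ j ∈ Finset.range (2^k), ‖(∫ t in S k j, f t) * (w k j y)‖ :=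
        norm_sum_le _ _
    _ ≤ ∑ j ∈ Finset.range (2^k), ‖∫ t in S k j, f t‖ * ‖y‖ := by
        refine Finset.sum_le_sum fun j _ => ?_
        rw [norm_mul]
        refine mul_le_mul_of_nonneg_left ?_ (norm_nonneg _)
        calc ‖w k j y‖ ≤ ‖w k j‖ * ‖y‖ := (w k j).le_opNorm y
          _ ≤ 1 * ‖y‖ := mul_le_mul_of_nonneg_right (hw1 k j) (norm_nonneg _)
          _ = ‖y‖ := one_mul _
    _ = (∑ j ∈ Finset.range (2^k), ‖∫ t in S k j, f t‖) * ‖y‖ := (Finset.sum_mul _ _ _).symm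
    _ ≤ ‖f‖ * ‖y‖ := mul_le_mul_of_nonneg_right (sum_norm_setIntegral_le f k) (norm_nonneg _)

/-- the candidate functional -/
noncomputable def T0 (w : ℕ → ℕ → X →L[𝕜] 𝕜) (hw1 : ∀ k j, ‖w k j‖ ≤ 1)
    (f : Lp 𝕜 1 (volume : Measure I01)) : StrongDual 𝕜 X :=
  LinearMap.mkContinuous
    { toFun := fun y => ulim (sq w f y)
      map_add' := by
        intro y z
        have he : (fun k => sq w f (y + z) k) = fun k => sq w f y k + sq w f z k := by
          funext k
          rw [sq, sq, sq, ← Finset.sum_add_distrib]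
          refine Finset.sum_congr rfl fun j _ => ?_
          rw [map_add, mul_add]
        show ulim (sq w f (y+z)) = ulim (sq w f y) + ulim (sq w f z)
        rw [show sq w f (y+z) = fun k => sq w f y k + sq w f z k from he]
        exact ulim_add (sq_bound hw1 f y) (sq_bound hw1 f z)
      map_smul' := by
        intro c y
        have he : (fun k => sq w f (c • y) k) = fun k => c * sq w f y k := by
          funext k
          rw [sq, sq, Finset.mul_sum]
          refine Finset.sum_congr rfl fun j _ => ?_
          rw [ContinuousLinearMap.map_smul, smul_eq_mul]
          ring
        show ulim (sq w f (c • y)) = c * ulim (sq w f y)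
        rw [show sq w f (c • y) = fun k => c * sq w f y k from he]
        exact ulim_const_mul c (sq_bound hw1 f y) }
    ‖f‖ (fun y => by
      simpa using norm_ulim_le (sq_bound hw1 f y))

lemma T0_apply (w : ℕ → ℕ → X →L[𝕜] 𝕜) (hw1 : ∀ k j, ‖w k j‖ ≤ 1)
    (f : Lp 𝕜 1 (volume : Measure I01)) (y : X) :
    T0 w hw1 f y = ulim (sq w f y) := rfl

lemma T0_norm_le (w : ℕ → ℕ → X →L[𝕜] 𝕜) (hw1 : ∀ k j, ‖w k j‖ ≤ 1)
    (f : Lp 𝕜 1 (volume : Measure I01)) : ‖T0 w hw1 f‖ ≤ ‖f‖ :=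
  LinearMap.mkContinuous_norm_le _ (norm_nonneg f) _

/-- `T0` as a linear map in `f`. -/
noncomputable def TL (w : ℕ → ℕ → X →L[𝕜] 𝕜) (hw1 : ∀ k j, ‖w k j‖ ≤ 1) :
    Lp 𝕜 1 (volume : Measure I01) →ₗ[𝕜] StrongDual 𝕜 X where
  toFun := T0 w hw1
  map_add' := by
    intro f g
    ext y
    have he : ∀ k, sq w (f + g) y k = sq w f y k + sq w g y k := by
      intro k
      rw [sq, sq, sq, ← Finset.sum_add_distrib]
      refine Finset.sum_congr rfl fun j _ => ?_
      rw [← add_mul]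
      congr 1
      have h1 : ∫ t in S k j, (f + g : Lp 𝕜 1 (volume : Measure I01)) t
          = ∫ t in S k j, (f t + g t) :=
        integral_congr_ae (ae_restrict_of_ae (Lp.coeFn_add f g))
      rw [h1]
      exact integral_add ((L1.integrable_coeFn f).integrableOn)
        ((L1.integrable_coeFn g).integrableOn)
    show ulim (sq w (f+g) y) = ulim (sq w f y) + ulim (sq w g y)
    rw [show sq w (f+g) y = fun k => sq w f y k + sq w g y k from funext he]
    exact ulim_add (sq_bound hw1 f y) (sq_bound hw1 g y)
  map_smul' := by
    intro c f
    ext y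
    have he : ∀ k, sq w (c • f) y k = c * sq w f y k := by
      intro k
      rw [sq, sq, Finset.mul_sum]
      refine Finset.sum_congr rfl fun j _ => ?_
      have h1 : ∫ t in S k j, (c • f : Lp 𝕜 1 (volume : Measure I01)) t
          = ∫ t in S k j, c • (f t) :=
        integral_congr_ae (ae_restrict_of_ae (Lp.coeFn_smul c f))
      rw [h1, integral_smul, smul_eq_mul]
      ring
    show ulim (sq w (c • f) y) = c * ulim (sq w f y)
    rw [show sq w (c • f) y = fun k => c * sq w f y k from funext he]
    exact ulim_const_mul c (sq_bound hw1 f y)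

end AIL1

set_option maxHeartbeats 2000000 in
/-- If `X` contains asymptotically isometric copies of `ℓ₁`, then `L¹[0,1]` embeds
linearly isometrically into `X*`. -/
theorem L1_embeds_in_dual_of_ai (𝕜 : Type*) [RCLike 𝕜]
    (X : Type*) [NormedAddCommGroup X] [NormedSpace 𝕜 X] [CompleteSpace X]
    (h : ContainsAICopiesOfL1 𝕜 X) :
    Nonempty
      ((Lp 𝕜 1 (volume : Measure (Set.Icc (0:ℝ) 1))) →ₗᵢ[𝕜] StrongDual 𝕜 X) := by
  classical
  obtain ⟨ε, x, hεb, hεlim, hax⟩ := h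
  have hε0 : ∀ n, 0 < ε n := fun n => (hεb n).1
  have hε1 : ∀ n, ε n < 1 := fun n => (hεb n).2
  -- each `x n` lies in the unit ball
  have hx1 : ∀ n, ‖x n‖ ≤ 1 := by
    intro n
    have h2 := (hax (n+1) (fun i => if i = n then 1 else 0)).2
    have hL : ∑ i ∈ Finset.range (n+1), (if i = n then (1:𝕜) else 0) • x i = x n := by
      rw [Finset.sum_eq_single_of_mem n (Finset.self_mem_range_succ n)]
      · rw [if_pos rfl, one_smul]
      · intro i _ hne; rw [if_neg hne, zero_smul]
    have hR : ∑ i ∈ Finset.range (n+1), ‖if i = n then (1:𝕜) else 0‖ = 1 := by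
      rw [Finset.sum_eq_single_of_mem n (Finset.self_mem_range_succ n)]
      · rw [if_pos rfl, norm_one]
      · intro i _ hne; rw [if_neg hne, norm_zero]
    rw [hL, hR] at h2
    exact h2
  -- the functionals
  have hwex : ∀ k j : ℕ, ∃ w : X →L[𝕜] 𝕜, ‖w‖ ≤ 1 ∧
      ∀ n, w (x n) = ((1 - ε n : ℝ) : 𝕜) * AIL1.V 𝕜 n k j := by
    intro k j
    apply AIL1.exists_dual_of_bound x (fun n => ((1 - ε n : ℝ) : 𝕜) * AIL1.V 𝕜 n k j)
    intro a
    set c : ℕ → 𝕜 := fun n => ((1 - ε n : ℝ) : 𝕜) * AIL1.V 𝕜 n k j with hc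
    set M := (a.support.sup id) + 1 with hM
    have hsupp : a.support ⊆ Finset.range M := by
      intro n hn
      rw [Finset.mem_range, hM]
      exact Nat.lt_succ_of_le (Finset.le_sup (f := id) hn)
    have hFa : Finsupp.linearCombination 𝕜 x a = ∑ n ∈ Finset.range M, a n • x n := by
      rw [Finsupp.linearCombination_apply]
      exact Finsupp.sum_of_support_subset a hsupp _ (fun i _ => zero_smul 𝕜 (x i))
    have hGa : Finsupp.linearCombination 𝕜 c a = ∑ n ∈ Finset.range M, a n • c n := by
      rw [Finsupp.linearCombination_apply]
      exact Finsupp.sum_of_support_subset a hsupp _ (fun i _ => zero_smul 𝕜 (c i))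
    rw [hFa, hGa]
    calc ‖∑ n ∈ Finset.range M, a n • c n‖ ≤ ∑ n ∈ Finset.range M, ‖a n • c n‖ :=
          norm_sum_le _ _
      _ ≤ ∑ n ∈ Finset.range M, (1 - ε n) * ‖a n‖ := by
          refine Finset.sum_le_sum fun n _ => ?_
          rw [norm_smul, mul_comm]
          refine mul_le_mul_of_nonneg_right ?_ (norm_nonneg _)
          rw [hc]
          calc ‖((1 - ε n : ℝ) : 𝕜) * AIL1.V 𝕜 n k j‖
              = ‖((1 - ε n : ℝ) : 𝕜)‖ * ‖AIL1.V 𝕜 n k j‖ := norm_mul _ _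
            _ ≤ |1 - ε n| * 1 := by
                rw [RCLike.norm_ofReal]
                exact mul_le_mul_of_nonneg_left (AIL1.norm_V_le n k j) (abs_nonneg _)
            _ = 1 - ε n := by
                rw [mul_one, abs_of_nonneg (by linarith [hε1 n])]
      _ ≤ ‖∑ n ∈ Finset.range M, a n • x n‖ := (hax M a).1
  choose w hw1 hw2 using hwex
  -- the upper bound
  have upper : ∀ f : Lp 𝕜 1 (volume : Measure AIL1.I01), ‖AIL1.T0 w hw1 f‖ ≤ ‖f‖ :=
    AIL1.T0_norm_le w hw1
  -- the lower bound
  have lower : ∀ f : Lp 𝕜 1 (volume : Measure AIL1.I01), ‖f‖ ≤ ‖AIL1.T0 w hw1 f‖ := by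
    intro f
    have main : ∀ θ : ℝ, 0 < θ → θ < 1/4 → ‖f‖ ≤ ‖AIL1.T0 w hw1 f‖ + θ * (3*‖f‖ + 4) := by
      intro θ hθ hθ4
      have hθ1 : θ < 1 := by linarith
      -- Step A : approximate by a continuous function
      have hdense : DenseRange ((ContinuousMap.toLp 1 (volume : Measure AIL1.I01) 𝕜 :
          C(AIL1.I01, 𝕜) →L[𝕜] Lp 𝕜 1 (volume : Measure AIL1.I01))) :=
        ContinuousMap.toLp_denseRange _ _ _ (by norm_num)
      obtain ⟨h0, hdist⟩ := hdense.exists_dist_lt f hθ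
      set g : Lp 𝕜 1 (volume : Measure AIL1.I01) :=
        ContinuousMap.toLp 1 (volume : Measure AIL1.I01) 𝕜 h0 with hgdef
      have hdistn : ‖f - g‖ < θ := by rw [← dist_eq_norm]; exact hdist
      have hgh : (g : AIL1.I01 → 𝕜) =ᵐ[(volume : Measure AIL1.I01)] ⇑h0 :=
        ContinuousMap.coeFn_toLp _ _
      have hgInt : Integrable (g : AIL1.I01 → 𝕜) (volume : Measure AIL1.I01) :=
        L1.integrable_coeFn g
      have hhInt : Integrable (⇑h0) (volume : Measure AIL1.I01) := hgInt.congr hgh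
      -- Step B : uniform continuity scale
      obtain ⟨δ, hδ0, hδ⟩ := Metric.uniformContinuous_iff.mp
        (CompactSpace.uniformContinuous_of_continuous h0.continuous) θ hθ
      obtain ⟨m, hmδ⟩ : ∃ m : ℕ, (1:ℝ)/2^m < δ := by
        obtain ⟨m, hm⟩ := pow_unbounded_of_one_lt (1/δ) (one_lt_two (α := ℝ))
        refine ⟨m, ?_⟩
        rw [div_lt_iff₀ (by positivity : (0:ℝ) < 2^m)]
        rw [div_lt_iff₀ hδ0] at hm
        nlinarith
      set b : ℕ → 𝕜 := fun i => ∫ t in AIL1.S m i, g t with hbdef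
      set ν : ℕ → ℝ := fun i => ((volume : Measure AIL1.I01) (AIL1.S m i)).toReal with hνdef
      have hbig : ∀ i ∈ Finset.range (2^m),
          (∫ t in AIL1.S m i, ‖h0 t‖) - 2*θ*(ν i) ≤ ‖b i‖ := by
        intro i hi
        rw [Finset.mem_range] at hi
        have h2m : (0:ℝ) < 2^m := by positivity
        have hicast : ((i:ℝ)) < 2^m := by exact_mod_cast hi
        have hile : ((i:ℝ))/2^m ≤ 1 := by rw [div_le_one h2m]; linarith
        set τ : AIL1.I01 := ⟨(i:ℝ)/2^m, ⟨by positivity, hile⟩⟩ with hτdef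
        have hclose : ∀ t ∈ AIL1.S m i, ‖h0 t - h0 τ‖ ≤ θ := by
          intro t ht
          obtain ⟨ht1, ht2⟩ := ht
          have hdist2 : dist t τ < δ := by
            rw [Subtype.dist_eq, Real.dist_eq]
            have hsub : ((i:ℝ)+1)/2^m - (i:ℝ)/2^m = 1/2^m := by field_simp; ring
            have habs : |(t:ℝ) - (i:ℝ)/2^m| < 1/2^m := by
              rw [abs_lt]
              have hpos : (0:ℝ) < 1/2^m := by positivity
              constructor
              · linarith
              · linarith
            calc |(t:ℝ) - ((τ:ℝ))| = |(t:ℝ) - (i:ℝ)/2^m| := rfl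
              _ < 1/2^m := habs
              _ < δ := hmδ
          have := hδ hdist2
          rw [dist_eq_norm] at this
          exact this.le
        have hb_eq : b i = ∫ t in AIL1.S m i, h0 t :=
          integral_congr_ae (ae_restrict_of_ae hgh)
        have hμfin : (volume : Measure AIL1.I01) (AIL1.S m i) < ⊤ := measure_lt_top _ _
        have e1 : ‖∫ t in AIL1.S m i, (h0 t - h0 τ)‖ ≤ θ * ν i := by
          exact norm_setIntegral_le_of_norm_le_const hμfin hclose
        have hconst_int : IntegrableOn (fun _ : AIL1.I01 => h0 τ) (AIL1.S m i)
            (volume : Measure AIL1.I01) := integrableOn_const hμfin.ne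
        have hsplit : ∫ t in AIL1.S m i, h0 t
            = (∫ t in AIL1.S m i, (h0 t - h0 τ)) + (ν i) • h0 τ := by
          rw [integral_sub hhInt.integrableOn hconst_int, setIntegral_const,
              show (volume : Measure AIL1.I01).real (AIL1.S m i) = ν i from rfl]
          abel
        have hlow1 : (ν i) * ‖h0 τ‖ - θ * ν i ≤ ‖b i‖ := by
          rw [hb_eq, hsplit]
          have htri : ‖(ν i) • h0 τ‖
              ≤ ‖(∫ t in AIL1.S m i, (h0 t - h0 τ)) + (ν i) • h0 τ‖
                + ‖∫ t in AIL1.S m i, (h0 t - h0 τ)‖ := by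
            calc ‖(ν i) • h0 τ‖
                = ‖((∫ t in AIL1.S m i, (h0 t - h0 τ)) + (ν i) • h0 τ)
                    - (∫ t in AIL1.S m i, (h0 t - h0 τ))‖ := by
                  rw [add_sub_cancel_left]
              _ ≤ _ := norm_sub_le _ _
          have hsmul : ‖(ν i) • h0 τ‖ = ν i * ‖h0 τ‖ := by
            rw [norm_smul, Real.norm_eq_abs, abs_of_nonneg ENNReal.toReal_nonneg]
          linarith
        have e2 : ∫ t in AIL1.S m i, ‖h0 t‖ ≤ (‖h0 τ‖ + θ) * ν i := by
          calc ∫ t in AIL1.S m i, ‖h0 t‖ ≤ ∫ _t in AIL1.S m i, (‖h0 τ‖ + θ) := by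
                refine setIntegral_mono_on hhInt.norm.integrableOn
                  (integrableOn_const hμfin.ne) (AIL1.measurableSet_S m i) ?_
                intro t ht
                have := hclose t ht
                have h4 := norm_le_norm_add_norm_sub' (h0 t) (h0 τ)
                linarith
            _ = (‖h0 τ‖ + θ) * ν i := by rw [setIntegral_const, smul_eq_mul, mul_comm]; rfl
        linarith
      have hν_sum : ∑ i ∈ Finset.range (2^m), ν i = 1 := by
        have h1 := AIL1.sum_setIntegral_total (F := fun _ : AIL1.I01 => (1:ℝ))
          (integrable_const 1) m
        have huniv : (volume : Measure AIL1.I01) Set.univ = 1 := by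
          rw [Measure.Subtype.volume_univ measurableSet_Icc.nullMeasurableSet, Real.volume_Icc]
          norm_num
        rw [integral_const, Measure.real, huniv] at h1
        simp only [ENNReal.toReal_one, one_smul] at h1
        calc ∑ i ∈ Finset.range (2^m), ν i
            = ∑ i ∈ Finset.range (2^m), ∫ _t in AIL1.S m i, (1:ℝ) := by
              refine Finset.sum_congr rfl fun i _ => ?_
              rw [setIntegral_const, smul_eq_mul, mul_one]; rfl
          _ = 1 := h1
      have hgnorm : ∫ t, ‖h0 t‖ ∂(volume : Measure AIL1.I01) = ‖g‖ := by
        rw [L1.norm_eq_integral_norm g]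
        refine integral_congr_ae ?_
        filter_upwards [hgh] with t ht
        rw [ht]
      have stepB : ‖g‖ - 2*θ ≤ ∑ i ∈ Finset.range (2^m), ‖b i‖ := by
        have hsum := Finset.sum_le_sum hbig
        rw [Finset.sum_sub_distrib, AIL1.sum_setIntegral_total hhInt.norm m] at hsum
        have hc2 : ∑ i ∈ Finset.range (2^m), 2*θ*ν i = 2*θ := by
          rw [← Finset.mul_sum, hν_sum, mul_one]
        rw [hc2, hgnorm] at hsum
        exact hsum
      -- Step C : choose a good pattern
      have hchoice : ∀ i : ℕ, ∃ pr : ℚ × ℚ, ‖AIL1.qk 𝕜 pr‖ ≤ 1 ∧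
          (1 - 2*θ)*‖b i‖ ≤ RCLike.re (b i * AIL1.tr 𝕜 (AIL1.qk 𝕜 pr)) := by
        intro i
        by_cases hbz : b i = 0
        · obtain ⟨pr, hpr⟩ := AIL1.qk_approx (0:𝕜) (one_pos (α := ℝ))
          refine ⟨pr, ?_, ?_⟩
          · rw [sub_zero] at hpr; exact hpr.le
          · rw [hbz, norm_zero, mul_zero, zero_mul, map_zero]
        · have hbn : (0:ℝ) < ‖b i‖ := norm_pos_iff.2 hbz
          set z : 𝕜 := ((1-θ) * ‖b i‖⁻¹ : ℝ) • (starRingEnd 𝕜 (b i)) with hzdef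
          have hznorm : ‖z‖ = 1 - θ := by
            rw [hzdef, norm_smul, Real.norm_eq_abs, RCLike.norm_conj,
              abs_of_nonneg (mul_nonneg (by linarith) (inv_nonneg.2 (norm_nonneg _)))]
            field_simp
          obtain ⟨pr, hpr⟩ := AIL1.qk_approx z hθ
          have hqknorm : ‖AIL1.qk 𝕜 pr‖ < 1 := by
            calc ‖AIL1.qk 𝕜 pr‖ ≤ ‖z‖ + ‖AIL1.qk 𝕜 pr - z‖ :=
                  norm_le_norm_add_norm_sub' _ _
              _ < (1-θ) + θ := by rw [hznorm]; linarith
              _ = 1 := by ring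
          have htr : AIL1.tr 𝕜 (AIL1.qk 𝕜 pr) = AIL1.qk 𝕜 pr := if_pos hqknorm.le
          refine ⟨pr, hqknorm.le, ?_⟩
          rw [htr]
          have hre1 : RCLike.re (b i * z) = (1-θ) * ‖b i‖ := by
            rw [hzdef, mul_smul_comm, RCLike.smul_re, RCLike.mul_conj,
              ← RCLike.ofReal_pow, RCLike.ofReal_re]
            field_simp
          have hre2 : |RCLike.re (b i * (AIL1.qk 𝕜 pr - z))| ≤ ‖b i‖ * θ := by
            calc |RCLike.re (b i * (AIL1.qk 𝕜 pr - z))| ≤ ‖b i * (AIL1.qk 𝕜 pr - z)‖ :=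
                  RCLike.abs_re_le_norm _
              _ = ‖b i‖ * ‖AIL1.qk 𝕜 pr - z‖ := norm_mul _ _
              _ ≤ ‖b i‖ * θ := mul_le_mul_of_nonneg_left hpr.le hbn.le
          have hsplit2 : b i * AIL1.qk 𝕜 pr = b i * z + b i * (AIL1.qk 𝕜 pr - z) := by ring
          rw [hsplit2, map_add, hre1]
          have := (abs_le.mp hre2).1
          nlinarith
      choose pr hpr1 hpr2 using hchoice
      set p : AIL1.Pat := (m, (List.range (2^m)).map pr) with hpdef
      have hpv : ∀ i ∈ Finset.range (2^m), AIL1.pv 𝕜 p i = AIL1.tr 𝕜 (AIL1.qk 𝕜 (pr i)) := by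
        intro i hi
        rw [Finset.mem_range] at hi
        have hlen : i < ((List.range (2^m)).map pr).length := by
          rw [List.length_map, List.length_range]; exact hi
        have hgetd : (p.2).getD i (0,0) = pr i := by
          show ((List.range (2^m)).map pr).getD i (0,0) = pr i
          rw [List.getD_eq_getElem _ _ hlen, List.getElem_map, List.getElem_range]
        rw [AIL1.pv, hgetd]
      -- Step D : find an index n
      obtain ⟨N, hN⟩ := Metric.tendsto_atTop.mp hεlim θ hθ
      obtain ⟨n, hnN, hrn⟩ := AIL1.rpat_surj p N
      have hεn : ε n < θ := by
        have := hN n hnN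
        rw [Real.dist_eq, sub_zero] at this
        exact lt_of_le_of_lt (le_abs_self _) this
      -- Step E : compute T0 g (x n)
      have hconst : ∀ k, m ≤ k → AIL1.sq w g (x n) k
          = ((1 - ε n : ℝ) : 𝕜) * ∑ i ∈ Finset.range (2^m), b i * AIL1.pv 𝕜 p i := by
        intro k hk
        have hd : 0 < 2^(k-m) := by positivity
        have hmaps : ∀ j ∈ Finset.range (2^k), j / 2^(k-m) ∈ Finset.range (2^m) := by
          intro j hj
          rw [Finset.mem_range] at hj ⊢
          rw [Nat.div_lt_iff_lt_mul hd]
          calc j < 2^k := hj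
            _ = 2^m * 2^(k-m) := by rw [← pow_add, Nat.add_sub_cancel' hk]
        have hw2' : ∀ j, w k j (x n)
            = ((1 - ε n : ℝ) : 𝕜) * AIL1.pv 𝕜 p (j / 2^(k-m)) := by
          intro j
          rw [hw2 k j n]
          congr 1
          rw [AIL1.V, hrn]
          have hp1 : p.1 = m := rfl
          rw [hp1, if_pos hk]
        calc AIL1.sq w g (x n) k
            = ∑ j ∈ Finset.range (2^k), ((1 - ε n : ℝ) : 𝕜)
                * ((∫ t in AIL1.S k j, g t) * AIL1.pv 𝕜 p (j / 2^(k-m))) := by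
              rw [AIL1.sq]
              refine Finset.sum_congr rfl fun j _ => ?_
              rw [hw2' j]; ring
          _ = ((1 - ε n : ℝ) : 𝕜) * ∑ j ∈ Finset.range (2^k),
                (∫ t in AIL1.S k j, g t) * AIL1.pv 𝕜 p (j / 2^(k-m)) := by
              rw [Finset.mul_sum]
          _ = ((1 - ε n : ℝ) : 𝕜) * ∑ i ∈ Finset.range (2^m), b i * AIL1.pv 𝕜 p i := by
              congr 1
              rw [← Finset.sum_fiberwise_of_maps_to hmaps
                (fun j => (∫ t in AIL1.S k j, g t) * AIL1.pv 𝕜 p (j / 2^(k-m)))]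
              refine Finset.sum_congr rfl fun i hi => ?_
              rw [Finset.mem_range] at hi
              have hcongr : ∀ j ∈ (Finset.range (2^k)).filter (fun j => j / 2^(k-m) = i),
                  (∫ t in AIL1.S k j, g t) * AIL1.pv 𝕜 p (j / 2^(k-m))
                    = (∫ t in AIL1.S k j, g t) * AIL1.pv 𝕜 p i := by
                intro j hj
                rw [(Finset.mem_filter.mp hj).2]
              rw [Finset.sum_congr rfl hcongr, ← Finset.sum_mul,
                AIL1.sum_setIntegral_fiber hgInt hk hi]
      have hval : AIL1.T0 w hw1 g (x n)
          = ((1 - ε n : ℝ) : 𝕜) * ∑ i ∈ Finset.range (2^m), b i * AIL1.pv 𝕜 p i := by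
        rw [AIL1.T0_apply]
        refine AIL1.ulim_eq (AIL1.sq_bound hw1 g (x n)) ?_
        refine Filter.Tendsto.congr' ?_ tendsto_const_nhds
        have hev : ∀ᶠ k in atTop, (fun _ : ℕ => ((1 - ε n : ℝ) : 𝕜)
            * ∑ i ∈ Finset.range (2^m), b i * AIL1.pv 𝕜 p i) k = AIL1.sq w g (x n) k :=
          eventually_atTop.2 ⟨m, fun k hk => (hconst k hk).symm⟩
        exact AIL1.UF_le_atTop hev
      -- Step F : put everything together
      have hbnn : (0:ℝ) ≤ ∑ i ∈ Finset.range (2^m), ‖b i‖ :=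
        Finset.sum_nonneg fun i _ => norm_nonneg _
      have hsum_re : (1-2*θ) * ∑ i ∈ Finset.range (2^m), ‖b i‖
          ≤ ‖∑ i ∈ Finset.range (2^m), b i * AIL1.pv 𝕜 p i‖ := by
        calc (1-2*θ) * ∑ i ∈ Finset.range (2^m), ‖b i‖
            = ∑ i ∈ Finset.range (2^m), (1-2*θ) * ‖b i‖ := Finset.mul_sum _ _ _
          _ ≤ ∑ i ∈ Finset.range (2^m), RCLike.re (b i * AIL1.pv 𝕜 p i) := by
              refine Finset.sum_le_sum fun i hi => ?_
              rw [hpv i hi]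
              exact hpr2 i
          _ = RCLike.re (∑ i ∈ Finset.range (2^m), b i * AIL1.pv 𝕜 p i) := by
              rw [map_sum]
          _ ≤ ‖∑ i ∈ Finset.range (2^m), b i * AIL1.pv 𝕜 p i‖ := RCLike.re_le_norm _
      have hnormsum_nn : (0:ℝ) ≤ ‖∑ i ∈ Finset.range (2^m), b i * AIL1.pv 𝕜 p i‖ :=
        norm_nonneg _
      have hTg1 : (1-θ) * ((1-2*θ) * (‖g‖ - 2*θ)) ≤ ‖AIL1.T0 w hw1 g‖ := by
        have h1 : ‖AIL1.T0 w hw1 g (x n)‖ ≤ ‖AIL1.T0 w hw1 g‖ := by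
          calc ‖AIL1.T0 w hw1 g (x n)‖ ≤ ‖AIL1.T0 w hw1 g‖ * ‖x n‖ :=
                (AIL1.T0 w hw1 g).le_opNorm (x n)
            _ ≤ ‖AIL1.T0 w hw1 g‖ * 1 :=
                mul_le_mul_of_nonneg_left (hx1 n) (norm_nonneg _)
            _ = ‖AIL1.T0 w hw1 g‖ := mul_one _
        have h2 : ‖AIL1.T0 w hw1 g (x n)‖
            = (1 - ε n) * ‖∑ i ∈ Finset.range (2^m), b i * AIL1.pv 𝕜 p i‖ := by
          rw [hval, norm_mul, RCLike.norm_ofReal,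
            abs_of_nonneg (by linarith [hε1 n] : (0:ℝ) ≤ 1 - ε n)]
        have h3 : 1 - θ ≤ 1 - ε n := by linarith
        have h4 : (1-2*θ) * (‖g‖ - 2*θ)
            ≤ ‖∑ i ∈ Finset.range (2^m), b i * AIL1.pv 𝕜 p i‖ := by
          calc (1-2*θ) * (‖g‖ - 2*θ) ≤ (1-2*θ) * ∑ i ∈ Finset.range (2^m), ‖b i‖ :=
                mul_le_mul_of_nonneg_left stepB (by linarith)
            _ ≤ _ := hsum_re
        calc (1-θ) * ((1-2*θ) * (‖g‖ - 2*θ))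
            ≤ (1-θ) * ‖∑ i ∈ Finset.range (2^m), b i * AIL1.pv 𝕜 p i‖ :=
              mul_le_mul_of_nonneg_left h4 (by linarith)
          _ ≤ (1 - ε n) * ‖∑ i ∈ Finset.range (2^m), b i * AIL1.pv 𝕜 p i‖ :=
              mul_le_mul_of_nonneg_right h3 hnormsum_nn
          _ = ‖AIL1.T0 w hw1 g (x n)‖ := h2.symm
          _ ≤ ‖AIL1.T0 w hw1 g‖ := h1
      -- transfer to f
      have hTdiff : ‖AIL1.T0 w hw1 g - AIL1.T0 w hw1 f‖ ≤ θ := by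
        have hmap : AIL1.T0 w hw1 g - AIL1.T0 w hw1 f = AIL1.T0 w hw1 (g - f) :=
          (map_sub (AIL1.TL w hw1) g f).symm
        rw [hmap]
        calc ‖AIL1.T0 w hw1 (g - f)‖ ≤ ‖g - f‖ := upper (g - f)
          _ = ‖f - g‖ := norm_sub_rev _ _
          _ ≤ θ := hdistn.le
      have hTf : ‖AIL1.T0 w hw1 g‖ - θ ≤ ‖AIL1.T0 w hw1 f‖ := by
        have := norm_sub_norm_le (AIL1.T0 w hw1 g) (AIL1.T0 w hw1 f)
        linarith
      have hgf : ‖f‖ - θ ≤ ‖g‖ := by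
        have := norm_sub_norm_le f g
        linarith
      have hgf2 : ‖g‖ ≤ ‖f‖ + θ := by
        have := norm_le_norm_add_norm_sub' g f
        rw [norm_sub_rev] at this
        linarith
      nlinarith [norm_nonneg f, norm_nonneg g, mul_nonneg hθ.le (norm_nonneg f),
        mul_nonneg (mul_nonneg hθ.le hθ.le) (norm_nonneg f),
        mul_nonneg hθ.le hθ.le, mul_nonneg (mul_nonneg hθ.le hθ.le) hθ.le]
    refine le_of_forall_pos_le_add fun ϑ hϑ => ?_
    have h34 : (0:ℝ) < 3*‖f‖+4 := by positivity
    set θ := min (ϑ / (3*‖f‖+4)) (1/8) with hθdef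
    have hθpos : 0 < θ := lt_min (by positivity) (by norm_num)
    have hθlt : θ < 1/4 := lt_of_le_of_lt (min_le_right _ _) (by norm_num)
    have hmain := main θ hθpos hθlt
    have hθle : θ * (3*‖f‖+4) ≤ ϑ := by
      calc θ * (3*‖f‖+4) ≤ (ϑ/(3*‖f‖+4)) * (3*‖f‖+4) :=
            mul_le_mul_of_nonneg_right (min_le_left _ _) h34.le
        _ = ϑ := div_mul_cancel₀ _ h34.ne'
    linarith
  exact ⟨{ toLinearMap := AIL1.TL w hw1,
           norm_map' := fun f => le_antisymm (upper f) (lower f) }⟩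
end

section
/- Let X be a real or complex Banach space containing asymptotically isometric copies of ℓ₁. Then X* contains an infinite subset Γ (of cardinality the continuum, indexed by [0,1]) which is isometrically equivalent to the usual basis of ℓ₁(Γ) — i.e. ‖∑_{γ∈F} a_γ γ‖ = ∑_{γ∈F} |a_γ| for every finite subset F of Γ and scalars (a_γ)_{γ∈F} — and which is dense-in-itself in the weak-star topology on X*, i.e. no point of Γ is isolated in Γ for the relative weak-star topology. -/
open Filter Finset

section auxlemmas
variable {𝕜 : Type*} [RCLike 𝕜] {X : Type*} [NormedAddCommGroup X] [NormedSpace 𝕜 X]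
variable {ε : ℕ → ℝ} {x : ℕ → X}

theorem aux_key
    (h3 : ∀ (m : ℕ) (a : ℕ → 𝕜),
      (∑ n ∈ Finset.range m, (1 - ε n) * ‖a n‖) ≤ ‖∑ n ∈ Finset.range m, a n • x n‖ ∧
      ‖∑ n ∈ Finset.range m, a n • x n‖ ≤ ∑ n ∈ Finset.range m, ‖a n‖)
    (c : ℕ →₀ 𝕜) :
    ∑ n ∈ c.support, (1 - ε n) * ‖c n‖ ≤ ‖∑ n ∈ c.support, c n • x n‖ := by
  obtain ⟨m, hm⟩ : ∃ m, ∀ n ∈ c.support, n < m := by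
    rcases c.support.bddAbove with ⟨m, hm⟩
    exact ⟨m + 1, fun n hn => Nat.lt_succ_of_le (hm hn)⟩
  have hsub : c.support ⊆ Finset.range m := fun n hn => Finset.mem_range.2 (hm n hn)
  have e1 := Finset.sum_subset (f := fun n => (1 - ε n) * ‖c n‖) hsub
    (fun n _ hn => by simp [Finsupp.notMem_support_iff.1 hn])
  have e2 := Finset.sum_subset (f := fun n => c n • x n) hsub
    (fun n _ hn => by simp [Finsupp.notMem_support_iff.1 hn])
  rw [e1, e2]
  exact (h3 m c).1

theorem aux_li (hε : ∀ n, 0 < ε n ∧ ε n < 1)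
    (h3 : ∀ (m : ℕ) (a : ℕ → 𝕜),
      (∑ n ∈ Finset.range m, (1 - ε n) * ‖a n‖) ≤ ‖∑ n ∈ Finset.range m, a n • x n‖ ∧
      ‖∑ n ∈ Finset.range m, a n • x n‖ ≤ ∑ n ∈ Finset.range m, ‖a n‖) :
    LinearIndependent 𝕜 x := by
  rw [linearIndependent_iff]
  intro c hc
  have h0 : ∑ n ∈ c.support, c n • x n = 0 := by
    rw [← hc, Finsupp.linearCombination_apply, Finsupp.sum]
  have := aux_key h3 c
  rw [h0, norm_zero] at this
  ext n
  by_contra hn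
  have hns : n ∈ c.support := Finsupp.mem_support_iff.2 (by simpa using hn)
  have hpos : 0 < (1 - ε n) * ‖c n‖ :=
    mul_pos (by linarith [(hε n).2]) (norm_pos_iff.2 (by simpa using hn))
  have : 0 < ∑ n ∈ c.support, (1 - ε n) * ‖c n‖ :=
    Finset.sum_pos' (fun i _ => mul_nonneg (by linarith [(hε i).2]) (norm_nonneg _))
      ⟨n, hns, hpos⟩
  linarith

theorem aux_functional
    (hkey : ∀ c : ℕ →₀ 𝕜,
      ∑ n ∈ c.support, (1 - ε n) * ‖c n‖ ≤ ‖∑ n ∈ c.support, c n • x n‖)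
    (hli : LinearIndependent 𝕜 x)
    (b : ℕ → 𝕜) (hb : ∀ n, ‖b n‖ ≤ 1 - ε n) :
    ∃ f : StrongDual 𝕜 X, ‖f‖ ≤ 1 ∧ ∀ n, f (x n) = b n := by
  set Y : Submodule 𝕜 X := Submodule.span 𝕜 (Set.range x) with hY
  set B : Module.Basis ℕ 𝕜 Y := Module.Basis.span hli with hB
  set g₀ : Y →ₗ[𝕜] 𝕜 := B.constr ℕ b with hg₀
  have hbound : ∀ y : Y, ‖g₀ y‖ ≤ 1 * ‖y‖ := by
    intro y
    set c : ℕ →₀ 𝕜 := B.repr y with hc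
    have hy : y = ∑ n ∈ c.support, c n • B n := by
      conv_lhs => rw [← B.linearCombination_repr y]
      rw [Finsupp.linearCombination_apply, Finsupp.sum]
    have hval : g₀ y = ∑ n ∈ c.support, c n * b n := by
      rw [hy, map_sum]
      refine Finset.sum_congr rfl fun n _ => ?_
      rw [map_smul, Module.Basis.constr_basis, smul_eq_mul]
    have hycoe : (y : X) = ∑ n ∈ c.support, c n • x n := by
      rw [hy]
      push_cast
      refine Finset.sum_congr rfl fun n _ => ?_
      rw [Module.Basis.span_apply]
    have h1 : ‖g₀ y‖ ≤ ∑ n ∈ c.support, ‖c n‖ * (1 - ε n) := by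
      rw [hval]
      refine (norm_sum_le _ _).trans (Finset.sum_le_sum fun n _ => ?_)
      rw [norm_mul]
      exact mul_le_mul_of_nonneg_left (hb n) (norm_nonneg _)
    have h2 : ∑ n ∈ c.support, ‖c n‖ * (1 - ε n) ≤ ‖(y : X)‖ := by
      rw [hycoe]
      refine le_trans (le_of_eq ?_) (hkey c)
      exact Finset.sum_congr rfl fun n _ => mul_comm _ _
    have : ‖(y : X)‖ = ‖y‖ := rfl
    rw [one_mul, ← this]
    exact h1.trans h2
  set f₀ : Y →L[𝕜] 𝕜 := LinearMap.mkContinuous g₀ 1 hbound with hf₀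
  obtain ⟨g, hg1, hg2⟩ := exists_extension_norm_eq Y f₀
  refine ⟨g, ?_, ?_⟩
  · rw [hg2]
    exact LinearMap.mkContinuous_norm_le _ zero_le_one _
  · intro n
    have hmem : x n ∈ Y := Submodule.subset_span (Set.mem_range_self n)
    have hBn : (⟨x n, hmem⟩ : Y) = B n := by
      apply Subtype.ext
      rw [Module.Basis.span_apply]
    have hfB : f₀ (B n) = b n := by
      show g₀ (B n) = b n
      rw [hg₀, Module.Basis.constr_basis]
    rw [show g (x n) = g ((⟨x n, hmem⟩ : Y) : X) from rfl]
    rw [hg1, hBn, hfB]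

theorem aux_dense : ∃ u : ℕ → 𝕜, (∀ k, ‖u k‖ = 1) ∧
    ∀ w : 𝕜, ‖w‖ = 1 → ∀ δ : ℝ, 0 < δ → ∃ k, ‖u k - w‖ < δ := by
  have : Nonempty (Metric.sphere (0 : 𝕜) 1) := ⟨⟨1, by simp⟩⟩
  set u : ℕ → 𝕜 := fun k => (TopologicalSpace.denseSeq (Metric.sphere (0 : 𝕜) 1) k : 𝕜)
  refine ⟨u, fun k => by
    have := (TopologicalSpace.denseSeq (Metric.sphere (0:𝕜) 1) k).2
    rw [Metric.mem_sphere, dist_zero_right] at this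
    exact this, ?_⟩
  intro w hw δ hδ
  have hwm : (⟨w, by simp [hw]⟩ : Metric.sphere (0:𝕜) 1) ∈
      closure (Set.range (TopologicalSpace.denseSeq (Metric.sphere (0:𝕜) 1))) :=
    (TopologicalSpace.denseRange_denseSeq _) _
  rw [Metric.mem_closure_iff] at hwm
  obtain ⟨z, ⟨k, rfl⟩, hz⟩ := hwm δ hδ
  refine ⟨k, ?_⟩
  have := hz
  rw [Subtype.dist_eq, dist_comm] at this
  simpa [dist_eq_norm] using this

abbrev Instr := Σ L : ℕ, ((Fin L → Bool) → ℕ)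

theorem aux_enum : ∃ hfun : ℕ → Instr, ∀ i : Instr, {n | hfun n = i}.Infinite := by
  have : Countable Instr := inferInstance
  have : Nonempty Instr := ⟨⟨0, fun _ => 0⟩⟩
  obtain ⟨e, he⟩ := exists_surjective_nat Instr
  refine ⟨fun n => e (Nat.unpair n).1, fun i => ?_⟩
  obtain ⟨m, rfl⟩ := he i
  apply Set.infinite_of_injective_forall_mem (f := fun k : ℕ => Nat.pair m k)
    (hi := fun a b hab => by simpa using congrArg (fun n => (Nat.unpair n).2) hab)
  intro k
  simp [Nat.unpair_pair]

end auxlemmas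


set_option maxHeartbeats 1000000 in
/-- If `X` contains asymptotically isometric copies of `ℓ₁`, then `X*` contains an
infinite set `Γ` of the cardinality of the continuum which is isometrically equivalent
to the usual basis of `ℓ₁(Γ)` and which is dense-in-itself (preperfect) in the
weak-star topology on `X*`. -/
theorem dual_contains_l1Gamma_set_of_ai (𝕜 : Type*) [RCLike 𝕜]
    (X : Type*) [NormedAddCommGroup X] [NormedSpace 𝕜 X] [CompleteSpace X]
    (h : ContainsAICopiesOfL1 𝕜 X) :
    ∃ Γ : Set (StrongDual 𝕜 X),
      Γ.Infinite ∧
      Cardinal.mk Γ = Cardinal.continuum ∧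
      (∀ F : Finset (StrongDual 𝕜 X), ↑F ⊆ Γ → ∀ a : StrongDual 𝕜 X → 𝕜,
        ‖∑ γ ∈ F, a γ • γ‖ = ∑ γ ∈ F, ‖a γ‖) ∧
      Preperfect ((fun f => StrongDual.toWeakDual f) '' Γ : Set (WeakDual 𝕜 X)) := by
  classical
  obtain ⟨ε, x, hε, htend, h3⟩ := h
  have hkey := aux_key h3
  have hli := aux_li hε h3
  obtain ⟨u, hu1, hu2⟩ := aux_dense (𝕜 := 𝕜)
  obtain ⟨hfun, hfib⟩ := aux_enum
  have hc0 : ∀ n, (0:ℝ) < 1 - ε n := fun n => by linarith [(hε n).2]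
  have hx1 : ∀ n, ‖x n‖ ≤ 1 := by
    intro n
    have := (h3 (n+1) (fun k => if k = n then (1:𝕜) else 0)).2
    have hv : ∑ k ∈ Finset.range (n+1), (if k = n then (1:𝕜) else 0) • x k = x n := by
      rw [Finset.sum_eq_single n]
      · simp
      · intro k _ hk; simp [hk]
      · intro hk; exact absurd (Finset.self_mem_range_succ n) hk
    have hs : ∑ k ∈ Finset.range (n+1), ‖if k = n then (1:𝕜) else 0‖ = 1 := by
      rw [Finset.sum_eq_single n]
      · simp
      · intro k _ hk; simp [hk]
      · intro hk; exact absurd (Finset.self_mem_range_succ n) hk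
    rw [hv, hs] at this
    exact this
  -- the Cantor family of coordinate targets
  set φ : (ℕ → Bool) → ℕ → 𝕜 :=
    fun r n => ((1 - ε n : ℝ) : 𝕜) * u ((hfun n).2 (fun i => r i)) with hφ
  have hφnorm : ∀ r n, ‖φ r n‖ = 1 - ε n := by
    intro r n
    rw [hφ]
    simp only [norm_mul, hu1, mul_one, RCLike.norm_ofReal]
    exact abs_of_pos (hc0 n)
  have hkeyI : ∀ (L : ℕ) (v : (Fin L → Bool) → ℕ) (δ : ℝ), 0 < δ →
      ∃ n, ε n < δ ∧ ∀ r : ℕ → Bool,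
        φ r n = ((1 - ε n : ℝ) : 𝕜) * u (v (fun i : Fin L => r i)) := by
    intro L v δ hδ
    have hev : ∀ᶠ n in atTop, ε n < δ := htend.eventually_lt_const hδ
    obtain ⟨N, hN⟩ := eventually_atTop.1 hev
    obtain ⟨n, hnfib, hnN⟩ := (hfib ⟨L, v⟩).exists_gt N
    refine ⟨n, hN n hnN.le, fun r => ?_⟩
    have hn : hfun n = ⟨L, v⟩ := hnfib
    rw [hφ]
    have hgen : ∀ i : Instr, hfun n = i →
        ((1 - ε n : ℝ) : 𝕜) * u ((hfun n).2 fun j : Fin (hfun n).1 => r j) =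
        ((1 - ε n : ℝ) : 𝕜) * u (i.2 fun j : Fin i.1 => r j) := by
      rintro i rfl
      rfl
    exact hgen ⟨L, v⟩ hn
  have hφinj : Function.Injective φ := by
    intro r r' hrr
    funext k
    by_contra hk
    obtain ⟨j₀, hj₀⟩ := hu2 1 (by simp) (1/2) (by norm_num)
    obtain ⟨j₁, hj₁⟩ := hu2 (-1) (by simp) (1/2) (by norm_num)
    have hne : u j₀ ≠ u j₁ := by
      intro hEq
      have h2 : ‖(1 : 𝕜) - (-1)‖ = 2 := by norm_num
      have : ‖(1 : 𝕜) - (-1)‖ ≤ ‖u j₀ - 1‖ + ‖u j₁ - (-1)‖ := by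
        rw [hEq]
        have := norm_sub_le (u j₁ - 1) (u j₁ - (-1))
        simpa [norm_sub_rev (u j₁) 1] using norm_sub_le_norm_sub_add_norm_sub 1 (u j₁) (-1)
      rw [h2] at this
      linarith
    set v : (Fin (k+1) → Bool) → ℕ :=
      fun t => if t ⟨k, k.lt_succ_self⟩ = r k then j₀ else j₁ with hv
    obtain ⟨n, -, hn⟩ := hkeyI (k+1) v 1 one_pos
    have e1 : φ r n = ((1 - ε n : ℝ) : 𝕜) * u j₀ := by
      rw [hn r, hv]; simp
    have e2 : φ r' n = ((1 - ε n : ℝ) : 𝕜) * u j₁ := by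
      rw [hn r', hv]
      simp only []
      rw [if_neg (by simpa using Ne.symm hk)]
    rw [hrr] at e1
    rw [e1] at e2
    have hc : ((1 - ε n : ℝ) : 𝕜) ≠ 0 := RCLike.ofReal_ne_zero.mpr (hc0 n).ne'
    exact hne (mul_left_cancel₀ hc e2)
  -- the weak-star dual picture
  set Θ : WeakDual 𝕜 X → (ℕ → 𝕜) := fun f n => f (x n) with hΘ
  have hΘcont : Continuous Θ := continuous_pi fun n => WeakDual.eval_continuous (x n)
  set Ball : Set (WeakDual 𝕜 X) := WeakDual.toStrongDual ⁻¹' Metric.closedBall (0 : StrongDual 𝕜 X) 1 with hBall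
  have hBallcomp : IsCompact Ball := WeakDual.isCompact_closedBall 0 1
  have hBallclosed : IsClosed Ball := WeakDual.isClosed_closedBall 0 1
  have hBallnorm : ∀ f ∈ Ball, ‖WeakDual.toStrongDual f‖ ≤ 1 := by
    intro f hf
    rwa [hBall, Set.mem_preimage, Metric.mem_closedBall, dist_zero_right] at hf
  have hfiber : ∀ r : ℕ → Bool, ∃ f ∈ Ball, Θ f = φ r := by
    intro r
    obtain ⟨f, hf1, hf2⟩ := aux_functional hkey hli (φ r) (fun n => le_of_eq (hφnorm r n))
    refine ⟨StrongDual.toWeakDual f, ?_, ?_⟩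
    · rw [hBall, Set.mem_preimage, Metric.mem_closedBall, dist_zero_right]
      simpa using hf1
    · funext n
      exact hf2 n
  -- Zorn: a minimal compact set catching every fiber
  set S : Set (Set (WeakDual 𝕜 X)) :=
    {K | K ⊆ Ball ∧ IsClosed K ∧ ∀ r : ℕ → Bool, ∃ f ∈ K, Θ f = φ r} with hS
  have hBallS : Ball ∈ S := ⟨le_refl _, hBallclosed, hfiber⟩
  have hchainlb : ∀ c ⊆ S, IsChain (· ⊆ ·) c → c.Nonempty →
      ∃ lb ∈ S, ∀ s ∈ c, lb ⊆ s := by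
    intro c hcS hchain hcne
    refine ⟨⋂₀ c, ⟨?_, ?_, ?_⟩, fun s hs => Set.sInter_subset_of_mem hs⟩
    · obtain ⟨K₀, hK₀⟩ := hcne
      exact (Set.sInter_subset_of_mem hK₀).trans (hcS hK₀).1
    · exact isClosed_sInter fun K₀ hK₀ => (hcS hK₀).2.1
    · intro r
      have : Nonempty ↥c := hcne.to_subtype
      have hdir : Directed (· ⊇ ·) (fun Ki : ↥c => (Ki : Set (WeakDual 𝕜 X)) ∩ Θ ⁻¹' {φ r}) := by
        intro K₁ K₂
        rcases hchain.total K₁.2 K₂.2 with hc12 | hc21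
        · exact ⟨K₁, le_refl _, Set.inter_subset_inter_left _ hc12⟩
        · exact ⟨K₂, Set.inter_subset_inter_left _ hc21, le_refl _⟩
      have hclosedfib : ∀ Ki : ↥c, IsClosed ((Ki : Set (WeakDual 𝕜 X)) ∩ Θ ⁻¹' {φ r}) :=
        fun Ki => ((hcS Ki.2).2.1).inter (isClosed_singleton.preimage hΘcont)
      have hne : ∀ Ki : ↥c, ((Ki : Set (WeakDual 𝕜 X)) ∩ Θ ⁻¹' {φ r}).Nonempty := by
        intro Ki
        obtain ⟨f, hf1, hf2⟩ := (hcS Ki.2).2.2 r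
        exact ⟨f, hf1, by simpa using hf2⟩
      have hcomp : ∀ Ki : ↥c, IsCompact ((Ki : Set (WeakDual 𝕜 X)) ∩ Θ ⁻¹' {φ r}) :=
        fun Ki => hBallcomp.of_isClosed_subset (hclosedfib Ki)
          ((Set.inter_subset_left).trans (hcS Ki.2).1)
      obtain ⟨f, hf⟩ := IsCompact.nonempty_iInter_of_directed_nonempty_isCompact_isClosed
        _ hdir hne hcomp hclosedfib
      simp only [Set.mem_iInter] at hf
      refine ⟨f, ?_, ?_⟩
      · exact Set.mem_sInter.2 fun K₀ hK₀ => ((hf ⟨K₀, hK₀⟩).1)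
      · obtain ⟨K₀, hK₀⟩ := hcne
        simpa using (hf ⟨K₀, hK₀⟩).2
  obtain ⟨K, -, hKmin⟩ := zorn_superset_nonempty S hchainlb Ball hBallS
  have hKS : K ∈ S := hKmin.1
  have hKcomp : IsCompact K := hBallcomp.of_isClosed_subset hKS.2.1 hKS.1
  -- the minimality property
  have hmin : ∀ V : Set (WeakDual 𝕜 X), IsOpen V → (K ∩ V).Nonempty →
      ∃ r : ℕ → Bool, φ r ∉ Θ '' (K \ V) := by
    intro V hV ⟨f0, hf0K, hf0V⟩
    by_contra hcon
    push_neg at hcon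
    have hKV : K \ V ∈ S := by
      refine ⟨(Set.diff_subset).trans hKS.1, hKS.2.1.sdiff hV, fun r => ?_⟩
      obtain ⟨f, hf1, hf2⟩ := hcon r
      exact ⟨f, hf1, hf2⟩
    have := hKmin.2 hKV Set.diff_subset
    exact (this hf0K).2 hf0V
  -- the selection
  choose σ hσK hσΘ using hKS.2.2
  have hσn : ∀ r n, σ r (x n) = φ r n := by
    intro r n
    exact congrFun (hσΘ r) n
  have hσinj : Function.Injective σ := by
    intro r r' hrr
    apply hφinj
    rw [← hσΘ r, ← hσΘ r', hrr]
  -- the set Γ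
  set g : (ℕ → Bool) → StrongDual 𝕜 X := fun r => WeakDual.toStrongDual (σ r) with hg
  have hginj : Function.Injective g :=
    fun r r' hrr => hσinj (WeakDual.toStrongDual.injective hrr)
  have hgnorm : ∀ r, ‖g r‖ ≤ 1 := fun r => hBallnorm _ (hKS.1 (hσK r))
  have hgapp : ∀ r n, g r (x n) = φ r n := fun r n => hσn r n
  have hΓim : (fun f => StrongDual.toWeakDual f) '' (Set.range g) = Set.range σ := by
    ext t
    constructor
    · rintro ⟨γ, ⟨r, rfl⟩, rfl⟩
      exact ⟨r, StrongDual.toWeakDual.apply_symm_apply (σ r)⟩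
    · rintro ⟨r, rfl⟩
      exact ⟨g r, ⟨r, rfl⟩, StrongDual.toWeakDual.apply_symm_apply (σ r)⟩
  have hcard : Cardinal.mk (Set.range g) = Cardinal.continuum := by
    have h1 := Cardinal.mk_range_eq_of_injective hginj
    have h2 : Cardinal.mk (ℕ → Bool) = Cardinal.continuum := by
      rw [← Cardinal.power_def Bool ℕ, Cardinal.mk_bool, Cardinal.mk_nat,
        Cardinal.two_power_aleph0]
    rw [h2, Cardinal.lift_continuum] at h1
    simpa using h1
  refine ⟨Set.range g, ?_, hcard, ?_, ?_⟩
  · -- infinite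
    rw [← Set.infinite_coe_iff]
    refine Cardinal.infinite_iff.2 ?_
    rw [hcard]
    exact Cardinal.aleph0_lt_continuum.le
  · -- the ℓ₁(Γ) property
    intro F hF a
    have hFnorm : ∀ γ ∈ F, ‖γ‖ ≤ 1 := by
      intro γ hγ
      obtain ⟨r, rfl⟩ := hF hγ
      exact hgnorm r
    apply le_antisymm
    · calc ‖∑ γ ∈ F, a γ • γ‖ ≤ ∑ γ ∈ F, ‖a γ • γ‖ := norm_sum_le _ _
        _ ≤ ∑ γ ∈ F, ‖a γ‖ := by
          refine Finset.sum_le_sum fun γ hγ => ?_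
          rw [norm_smul]
          calc ‖a γ‖ * ‖γ‖ ≤ ‖a γ‖ * 1 :=
              mul_le_mul_of_nonneg_left (hFnorm γ hγ) (norm_nonneg _)
            _ = ‖a γ‖ := mul_one _
    · -- lower bound
      set Ssum := ∑ γ ∈ F, ‖a γ‖ with hSsum
      have hS0 : 0 ≤ Ssum := Finset.sum_nonneg fun γ _ => norm_nonneg _
      have hlow : ∀ δ : ℝ, 0 < δ → Ssum - δ ≤ ‖∑ γ ∈ F, a γ • γ‖ := by
        intro δ hδ
        set δ' : ℝ := δ / (2 * (Ssum + 1)) with hδ'def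
        have hδ' : 0 < δ' := div_pos hδ (by linarith)
        have hδeq : 2 * (δ' * Ssum) + 2 * δ' = δ := by
          rw [hδ'def]
          field_simp
        -- pick branches
        have hρex : ∀ γ, ∃ r, γ ∈ F → g r = γ := by
          intro γ
          by_cases hγ : γ ∈ F
          · obtain ⟨r, hr⟩ := hF hγ
            exact ⟨r, fun _ => hr⟩
          · exact ⟨fun _ => false, fun hh => absurd hh hγ⟩
        choose ρ hρ using hρex
        have hρinj : ∀ γ ∈ F, ∀ γ' ∈ F, γ ≠ γ' → ρ γ ≠ ρ γ' := by
          intro γ hγ γ' hγ' hne hEq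
          exact hne (by rw [← hρ γ hγ, ← hρ γ' hγ', hEq])
        -- separation level
        have hd : ∀ p : (StrongDual 𝕜 X) × (StrongDual 𝕜 X), ∃ k,
            p.1 ∈ F → p.2 ∈ F → p.1 ≠ p.2 → ρ p.1 k ≠ ρ p.2 k := by
          intro p
          by_cases hp : p.1 ∈ F ∧ p.2 ∈ F ∧ p.1 ≠ p.2
          · obtain ⟨k, hk⟩ := Function.ne_iff.1 (hρinj p.1 hp.1 p.2 hp.2.1 hp.2.2)
            exact ⟨k, fun _ _ _ => hk⟩
          · exact ⟨0, fun h1 h2 h3 => absurd ⟨h1, h2, h3⟩ hp⟩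
        choose d hdp using hd
        set L : ℕ := ((F ×ˢ F).sup d) + 1 with hLdef
        have hdL : ∀ γ ∈ F, ∀ γ' ∈ F, d (γ, γ') < L := by
          intro γ hγ γ' hγ'
          exact Nat.lt_succ_of_le (Finset.le_sup (Finset.mem_product.2 ⟨hγ, hγ'⟩))
        have hsep : ∀ γ ∈ F, ∀ γ' ∈ F,
            (fun i : Fin L => ρ γ i) = (fun i : Fin L => ρ γ' i) → γ = γ' := by
          intro γ hγ γ' hγ' hEq
          by_contra hne
          have hk := hdp (γ, γ') hγ hγ' hne
          have := congrFun hEq ⟨d (γ, γ'), hdL γ hγ γ' hγ'⟩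
          exact hk this
        -- aligned unimodular targets
        set w : (StrongDual 𝕜 X) → 𝕜 := fun γ =>
          if a γ = 0 then 1 else (starRingEnd 𝕜) (a γ) * ((‖a γ‖ : ℝ) : 𝕜)⁻¹ with hw
        have hwnorm : ∀ γ, ‖w γ‖ = 1 := by
          intro γ
          rw [hw]
          by_cases hγ : a γ = 0
          · simp [hγ]
          · have h1 : ‖a γ‖ ≠ 0 := norm_ne_zero_iff.2 hγ
            simp only [if_neg hγ, norm_mul, norm_inv, RCLike.norm_conj, RCLike.norm_ofReal,
              abs_of_nonneg (norm_nonneg (a γ))]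
            field_simp
        have hwmul : ∀ γ, a γ * w γ = ((‖a γ‖ : ℝ) : 𝕜) := by
          intro γ
          rw [hw]
          by_cases hγ : a γ = 0
          · simp [hγ]
          · have h1 : ((‖a γ‖ : ℝ) : 𝕜) ≠ 0 :=
              RCLike.ofReal_ne_zero.mpr (norm_ne_zero_iff.2 hγ)
            simp only [if_neg hγ]
            rw [← mul_assoc, RCLike.mul_conj, sq, mul_assoc, mul_inv_cancel₀ h1, mul_one]
        have hjex : ∀ γ, ∃ k, ‖u k - w γ‖ < δ' := fun γ => hu2 (w γ) (hwnorm γ) δ' hδ'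
        choose j hj using hjex
        -- the instruction
        set v : (Fin L → Bool) → ℕ := fun t =>
          ∑ γ ∈ F.filter (fun γ' => (fun i : Fin L => ρ γ' i) = t), j γ with hv
        have hvval : ∀ γ ∈ F, v (fun i : Fin L => ρ γ i) = j γ := by
          intro γ hγ
          have hfil : F.filter (fun γ' => (fun i : Fin L => ρ γ' i) =
              (fun i : Fin L => ρ γ i)) = {γ} := by
            ext γ'
            simp only [Finset.mem_filter, Finset.mem_singleton]
            constructor
            · rintro ⟨hγ', hEq⟩
              exact hsep γ' hγ' γ hγ hEq
            · rintro rfl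
              exact ⟨hγ, rfl⟩
          rw [hv]
          simp only [hfil, Finset.sum_singleton]
        obtain ⟨n, hεn, hφn⟩ := hkeyI L v δ' hδ'
        have heval : ∀ γ ∈ F, γ (x n) = ((1 - ε n : ℝ) : 𝕜) * u (j γ) := by
          intro γ hγ
          have h1 : γ (x n) = (g (ρ γ)) (x n) := by rw [hρ γ hγ]
          rw [h1, hgapp, hφn (ρ γ), hvval γ hγ]
        have hE1 : (∑ γ ∈ F, a γ • γ) (x n) =
            ((1 - ε n : ℝ) : 𝕜) * ∑ γ ∈ F, a γ * u (j γ) := by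
          rw [ContinuousLinearMap.sum_apply, Finset.mul_sum]
          refine Finset.sum_congr rfl fun γ hγ => ?_
          rw [ContinuousLinearMap.smul_apply, smul_eq_mul, heval γ hγ]
          ring
        have hE2 : Ssum - δ' * Ssum ≤ ‖∑ γ ∈ F, a γ * u (j γ)‖ := by
          have hsplit : ∑ γ ∈ F, a γ * u (j γ) =
              ((Ssum : ℝ) : 𝕜) + ∑ γ ∈ F, a γ * (u (j γ) - w γ) := by
            rw [hSsum, RCLike.ofReal_sum, ← Finset.sum_add_distrib]
            refine Finset.sum_congr rfl fun γ _ => ?_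
            rw [← hwmul γ]
            ring
          have hR : ‖∑ γ ∈ F, a γ * (u (j γ) - w γ)‖ ≤ δ' * Ssum := by
            calc ‖∑ γ ∈ F, a γ * (u (j γ) - w γ)‖
                ≤ ∑ γ ∈ F, ‖a γ * (u (j γ) - w γ)‖ := norm_sum_le _ _
              _ ≤ ∑ γ ∈ F, ‖a γ‖ * δ' := by
                  refine Finset.sum_le_sum fun γ _ => ?_
                  rw [norm_mul]
                  exact mul_le_mul_of_nonneg_left (hj γ).le (norm_nonneg _)
              _ = δ' * Ssum := by rw [hSsum, ← Finset.sum_mul, mul_comm]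
          have hA : ‖((Ssum : ℝ) : 𝕜)‖ = Ssum := by
            rw [RCLike.norm_ofReal, abs_of_nonneg hS0]
          have ht : ‖((Ssum : ℝ) : 𝕜)‖ ≤
              ‖∑ γ ∈ F, a γ * u (j γ)‖ + ‖∑ γ ∈ F, a γ * (u (j γ) - w γ)‖ := by
            rw [hsplit]
            simpa using norm_add_le
              (((Ssum : ℝ) : 𝕜) + ∑ γ ∈ F, a γ * (u (j γ) - w γ))
              (-∑ γ ∈ F, a γ * (u (j γ) - w γ))
          rw [hA] at ht
          linarith
        have hE3 : ‖(∑ γ ∈ F, a γ • γ) (x n)‖ ≤ ‖∑ γ ∈ F, a γ • γ‖ := by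
          calc ‖(∑ γ ∈ F, a γ • γ) (x n)‖ ≤ ‖∑ γ ∈ F, a γ • γ‖ * ‖x n‖ :=
              ContinuousLinearMap.le_opNorm _ _
            _ ≤ ‖∑ γ ∈ F, a γ • γ‖ * 1 :=
              mul_le_mul_of_nonneg_left (hx1 n) (norm_nonneg _)
            _ = ‖∑ γ ∈ F, a γ • γ‖ := mul_one _
        have hE4 : ‖(∑ γ ∈ F, a γ • γ) (x n)‖ =
            (1 - ε n) * ‖∑ γ ∈ F, a γ * u (j γ)‖ := by
          rw [hE1, norm_mul, RCLike.norm_ofReal, abs_of_pos (hc0 n)]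
        have hfinal : (1 - ε n) * (Ssum - δ' * Ssum) ≤ ‖∑ γ ∈ F, a γ • γ‖ := by
          refine le_trans ?_ hE3
          rw [hE4]
          exact mul_le_mul_of_nonneg_left hE2 (hc0 n).le
        have hexp : (1 - ε n) * (Ssum - δ' * Ssum) =
            Ssum - ε n * Ssum - δ' * Ssum + ε n * (δ' * Ssum) := by ring
        have hf1 : ε n * Ssum ≤ δ' * Ssum := mul_le_mul_of_nonneg_right hεn.le hS0
        have hf2 : 0 ≤ ε n * (δ' * Ssum) :=
          mul_nonneg (hε n).1.le (mul_nonneg hδ'.le hS0)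
        rw [hexp] at hfinal
        linarith
      by_contra hlt
      push_neg at hlt
      have := hlow ((Ssum - ‖∑ γ ∈ F, a γ • γ‖) / 2) (by linarith)
      linarith
  · -- preperfect
    rw [hΓim]
    intro t ht
    obtain ⟨r, rfl⟩ := ht
    rw [accPt_iff_nhds]
    intro U hU
    have hVopen : IsOpen (interior U) := isOpen_interior
    have htV : σ r ∈ interior U := mem_interior_iff_mem_nhds.2 hU
    obtain ⟨r₁, hr₁⟩ := hmin (interior U) hVopen ⟨σ r, hσK r, htV⟩
    have hmemV : ∀ r' : ℕ → Bool, φ r' ∉ Θ '' (K \ interior U) → σ r' ∈ interior U := by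
      intro r' hr'
      by_contra hc
      exact hr' ⟨σ r', ⟨hσK r', hc⟩, hσΘ r'⟩
    by_cases hcase : r₁ = r
    · subst hcase
      have hCclosed : IsClosed (Θ '' (K \ interior U)) :=
        ((hKcomp.diff hVopen).image hΘcont).isClosed
      set rk : ℕ → (ℕ → Bool) := fun k => Function.update r₁ k (!(r₁ k)) with hrk
      have hrkne : ∀ k, rk k ≠ r₁ := by
        intro k hEq
        have := congrFun hEq k
        rw [hrk] at this
        simp only [Function.update_self] at this
        exact (Bool.not_ne_self (r₁ k)) this
      have htd : Tendsto (fun k => φ (rk k)) atTop (nhds (φ r₁)) := by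
        rw [tendsto_pi_nhds]
        intro n
        apply tendsto_atTop_of_eventually_const (i₀ := (hfun n).1)
        intro k hk
        have htr : (fun i : Fin (hfun n).1 => rk k i) =
            (fun i : Fin (hfun n).1 => r₁ i) := by
          funext i
          rw [hrk]
          exact Function.update_of_ne (Nat.ne_of_lt (lt_of_lt_of_le i.2 hk)) _ _
        show φ (rk k) n = φ r₁ n
        rw [hφ]
        exact congrArg (fun s => ((1 - ε n : ℝ) : 𝕜) * u ((hfun n).2 s)) htr
      have hevC : ∀ᶠ k in atTop, φ (rk k) ∉ Θ '' (K \ interior U) :=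
        htd.eventually_mem (hCclosed.isOpen_compl.mem_nhds hr₁)
      obtain ⟨k, hk⟩ := hevC.exists
      refine ⟨σ (rk k), ⟨interior_subset (hmemV _ hk), ⟨rk k, rfl⟩⟩, ?_⟩
      intro hEq
      exact hrkne k (hσinj hEq)
    · exact ⟨σ r₁, ⟨interior_subset (hmemV _ hr₁), ⟨r₁, rfl⟩⟩,
        fun hEq => hcase (hσinj hEq)⟩
end

section
/- Let X be a real or complex Banach space and suppose X* contains an infinite subset Γ which is isometrically equivalent to the usual basis of ℓ₁(Γ) — i.e. ‖∑_{γ∈F} a_γ γ‖ = ∑_{γ∈F} |a_γ| for every finite subset F of Γ and scalars (a_γ)_{γ∈F} — and which is dense-in-itself in the weak-star topology on X*. Then X contains asymptotically isometric copies of ℓ₁. -/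
open Filter Finset

lemma aux_accPt_infinite {α : Type*} [TopologicalSpace α] [T1Space α]
    {S : Set α} {x : α} (h : AccPt x (Filter.principal S)) {U : Set α} (hU : U ∈ nhds x) :
    (S ∩ U).Infinite := by
  intro hfin
  have hA : IsClosed ((S ∩ U) \ {x}) := (hfin.subset Set.diff_subset).isClosed
  have hxA : x ∈ ((S ∩ U) \ {x})ᶜ := fun hx => hx.2 rfl
  have hU' : (U ∩ ((S ∩ U) \ {x})ᶜ) ∈ nhds x :=
    Filter.inter_mem hU (hA.isOpen_compl.mem_nhds hxA)
  obtain ⟨y, ⟨⟨hyU, hyA⟩, hyS⟩, hyx⟩ := accPt_iff_nhds.mp h _ hU'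
  exact hyA ⟨⟨hyS, hyU⟩, hyx⟩

lemma aux_choice {ι β : Type*} [Nonempty β] (I : Finset ι) (V : ι → Set β)
    (h : ∀ i ∈ I, (V i).Infinite) :
    ∃ g : ι → β, Set.InjOn g ↑I ∧ ∀ i ∈ I, g i ∈ V i := by
  classical
  induction I using Finset.induction with
  | empty => exact ⟨fun _ => Classical.arbitrary β, by simp, by simp⟩
  | @insert i I hiI ih =>
    obtain ⟨g, hginj, hgmem⟩ := ih (fun j hj => h j (Finset.mem_insert_of_mem hj))
    obtain ⟨b, hbV, hbim⟩ := ((h i (Finset.mem_insert_self i I)).diff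
      (I.finite_toSet.image g)).nonempty
    refine ⟨Function.update g i b, ?_, ?_⟩
    · intro s hs t ht hst
      simp only [Finset.coe_insert, Set.mem_insert_iff, Finset.mem_coe] at hs ht
      by_cases hsi : s = i <;> by_cases hti : t = i
      · rw [hsi, hti]
      · subst hsi
        have ht' : t ∈ I := ht.resolve_left hti
        rw [Function.update_self, Function.update_of_ne hti] at hst
        exact absurd ⟨t, ht', hst.symm⟩ hbim
      · subst hti
        have hs' : s ∈ I := hs.resolve_left hsi
        rw [Function.update_self, Function.update_of_ne hsi] at hst
        exact absurd ⟨s, hs', hst⟩ hbim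
      · have hs' : s ∈ I := hs.resolve_left hsi
        have ht' : t ∈ I := ht.resolve_left hti
        rw [Function.update_of_ne hsi, Function.update_of_ne hti] at hst
        exact hginj hs' ht' hst
    · intro j hj
      rcases Finset.mem_insert.mp hj with rfl | hj
      · rw [Function.update_self]; exact hbV
      · rw [Function.update_of_ne (fun hji : j = i => hiI (hji ▸ hj))]; exact hgmem j hj

section AIAux

variable {𝕜 : Type*} [RCLike 𝕜] {X : Type*} [NormedAddCommGroup X] [NormedSpace 𝕜 X]

lemma aux_norm_one (Γ : Set (StrongDual 𝕜 X))
    (hiso : ∀ F : Finset (StrongDual 𝕜 X), ↑F ⊆ Γ → ∀ a : StrongDual 𝕜 X → 𝕜,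
      ‖∑ γ ∈ F, a γ • γ‖ = ∑ γ ∈ F, ‖a γ‖)
    {γ : StrongDual 𝕜 X} (hγ : γ ∈ Γ) : ‖γ‖ = 1 := by
  have := hiso {γ} (by simpa using hγ) (fun _ => 1)
  simpa using this

lemma aux_norm_sum (Γ : Set (StrongDual 𝕜 X))
    (hiso : ∀ F : Finset (StrongDual 𝕜 X), ↑F ⊆ Γ → ∀ a : StrongDual 𝕜 X → 𝕜,
      ‖∑ γ ∈ F, a γ • γ‖ = ∑ γ ∈ F, ‖a γ‖)
    {ι : Type*} [Nonempty ι] (I : Finset ι)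
    (f : ι → StrongDual 𝕜 X) (hinj : Set.InjOn f ↑I) (hmem : ∀ i ∈ I, f i ∈ Γ)
    (a : ι → 𝕜) : ‖∑ i ∈ I, a i • f i‖ = ∑ i ∈ I, ‖a i‖ := by
  classical
  set A : StrongDual 𝕜 X → 𝕜 := fun γ => a (Function.invFunOn f ↑I γ) with hA
  have key : ∀ i ∈ I, A (f i) = a i := by
    intro i hi
    rw [hA]
    simp only
    rw [hinj.leftInvOn_invFunOn (Finset.mem_coe.mpr hi)]
  have hinj' : ∀ x ∈ I, ∀ y ∈ I, f x = f y → x = y :=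
    fun x hx y hy h => hinj (Finset.mem_coe.mpr hx) (Finset.mem_coe.mpr hy) h
  have h1 : ∑ i ∈ I, a i • f i = ∑ γ ∈ I.image f, A γ • γ := by
    rw [Finset.sum_image hinj']
    exact Finset.sum_congr rfl fun i hi => by rw [key i hi]
  have h2 : ∑ γ ∈ I.image f, ‖A γ‖ = ∑ i ∈ I, ‖a i‖ := by
    rw [Finset.sum_image hinj']
    exact Finset.sum_congr rfl fun i hi => by rw [key i hi]
  rw [h1, ← h2]
  apply hiso
  intro γ hγ
  simp only [Finset.coe_image, Set.mem_image, Finset.mem_coe] at hγ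
  obtain ⟨i, hi, rfl⟩ := hγ
  exact hmem i hi


structure AIStage (𝕜 : Type*) [RCLike 𝕜] (X : Type*) [NormedAddCommGroup X]
    [NormedSpace 𝕜 X] (Γ : Set (StrongDual 𝕜 X)) (Ω : ℕ → Finset 𝕜) (n : ℕ) where
  x : ℕ → X
  F : (ℕ → 𝕜) → StrongDual 𝕜 X
  hx : ∀ k, k < n → ‖x k‖ ≤ 1
  hmem : ∀ t : ℕ → 𝕜, (∀ k, k < n → t k ∈ Ω k) → F t ∈ Γ
  hfac : ∀ s t : ℕ → 𝕜, (∀ k, k < n → s k = t k) → F s = F t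
  hinj : ∀ s t : ℕ → 𝕜, (∀ k, k < n → s k ∈ Ω k) → (∀ k, k < n → t k ∈ Ω k) →
    F s = F t → ∀ k, k < n → s k = t k
  hlow : ∀ t : ℕ → 𝕜, (∀ k, k < n → t k ∈ Ω k) → ∀ k, k < n →
    1 - (1/2:ℝ)^(k+1) + (1/2:ℝ)^(n+1) ≤ RCLike.re ((starRingEnd 𝕜) (t k) * (F t) (x k))

variable {𝕜 : Type*} [RCLike 𝕜] {X : Type*} [NormedAddCommGroup X] [NormedSpace 𝕜 X]

set_option maxHeartbeats 1000000 in
lemma aux_step (Γ : Set (StrongDual 𝕜 X)) (Ω : ℕ → Finset 𝕜)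
    (hiso : ∀ F : Finset (StrongDual 𝕜 X), ↑F ⊆ Γ → ∀ a : StrongDual 𝕜 X → 𝕜,
      ‖∑ γ ∈ F, a γ • γ‖ = ∑ γ ∈ F, ‖a γ‖)
    (hΩ1 : ∀ k, ∀ ω ∈ Ω k, ‖ω‖ = 1) (hΩne : ∀ k, (Ω k).Nonempty)
    (hnbhd : ∀ f₀ ∈ Γ, ∀ (m : ℕ) (xx : ℕ → X) (η : ℝ), 0 < η →
      {g | g ∈ Γ ∧ ∀ k, k < m → ‖(g - f₀) (xx k)‖ < η}.Infinite)
    (n : ℕ) (S : AIStage 𝕜 X Γ Ω n) :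
    ∃ S' : AIStage 𝕜 X Γ Ω (n+1), ∀ k, k < n → S'.x k = S.x k := by
  classical
  -- canonical truncation
  set c : (ℕ → 𝕜) → (ℕ → 𝕜) := fun t k => if h : k < n then t k else 1 with hc
  set P : Finset (ℕ → 𝕜) :=
    (Fintype.piFinset (fun k : Fin n => Ω (k : ℕ))).image
      (fun p => fun k => if h : k < n then p ⟨k, h⟩ else 1) with hP
  have hPmem : ∀ t : ℕ → 𝕜, (∀ k, k < n → t k ∈ Ω k) → c t ∈ P := by
    intro t ht
    rw [hP]
    apply Finset.mem_image.mpr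
    refine ⟨fun k : Fin n => t (k : ℕ), ?_, ?_⟩
    · exact Fintype.mem_piFinset.mpr fun k => ht _ k.isLt
    · rfl
  have hPval : ∀ q ∈ P, ∀ k, k < n → q k ∈ Ω k := by
    intro q hq k hk
    rw [hP] at hq
    obtain ⟨p, hp, rfl⟩ := Finset.mem_image.mp hq
    simpa [hk] using Fintype.mem_piFinset.mp hp ⟨k, hk⟩
  set I : Finset ((ℕ → 𝕜) × 𝕜) := P ×ˢ Ω n with hI
  set δ : ℝ := (1/2:ℝ)^(n+3) with hδdef
  have hδpos : 0 < δ := by rw [hδdef]; positivity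
  set V : (ℕ → 𝕜) × 𝕜 → Set (StrongDual 𝕜 X) := fun j =>
    {g | g ∈ Γ ∧ ∀ k, k < n → ‖(g - S.F j.1) (S.x k)‖ < δ} with hV
  have hVinf : ∀ j ∈ I, (V j).Infinite := by
    intro j hj
    exact hnbhd (S.F j.1) (S.hmem j.1 (hPval j.1 (Finset.mem_product.mp hj).1)) n S.x δ hδpos
  obtain ⟨g, hginj, hgmem⟩ := aux_choice I V hVinf
  have hgval : ∀ j ∈ I, g j ∈ Γ := fun j hj => (hgmem j hj).1
  have hg1 : ∀ j ∈ I, ‖g j‖ = 1 := fun j hj => aux_norm_one Γ hiso (hgval j hj)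
  set Fsum : StrongDual 𝕜 X := ∑ j ∈ I, ((starRingEnd 𝕜) j.2) • g j with hFsum
  have hnorm : ‖Fsum‖ = (I.card : ℝ) := by
    rw [hFsum, aux_norm_sum Γ hiso I g hginj hgval]
    rw [Finset.sum_congr rfl (fun j hj => show ‖(starRingEnd 𝕜) j.2‖ = 1 by
      rw [RCLike.norm_conj]; exact hΩ1 n j.2 (Finset.mem_product.mp hj).2)]
    simp
  have hIne : I.Nonempty := by
    rw [hI]
    refine Finset.Nonempty.product ?_ (hΩne n)
    rw [hP]
    have hpi : (Fintype.piFinset (fun k : Fin n => Ω (k : ℕ))).Nonempty :=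
      ⟨fun k => (hΩne (k : ℕ)).choose,
        Fintype.mem_piFinset.mpr fun k => (hΩne (k : ℕ)).choose_spec⟩
    exact hpi.image _
  have hcard : (1:ℝ) ≤ I.card := by exact_mod_cast Finset.card_pos.mpr hIne
  have hδlt1 : δ < 1 := by
    rw [hδdef]
    exact pow_lt_one₀ (by norm_num) (by norm_num) (by omega)
  have hlt : (I.card : ℝ) - δ < ‖Fsum‖ := by rw [hnorm]; linarith
  obtain ⟨x0, hx0, hx0'⟩ := ContinuousLinearMap.exists_lt_apply_of_lt_opNorm Fsum hlt
  set z : 𝕜 := Fsum x0 with hz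
  have hzne : z ≠ 0 := by
    intro h
    rw [h] at hx0'
    simp at hx0'
    linarith
  set cz : 𝕜 := (‖z‖ : 𝕜) / z with hcz
  set xn : X := cz • x0 with hxn
  have hxn1 : ‖xn‖ ≤ 1 := by
    rw [hxn, norm_smul, hcz, norm_div, RCLike.norm_ofReal, abs_of_nonneg (norm_nonneg z),
      div_self (norm_ne_zero_iff.mpr hzne), one_mul]
    exact le_of_lt hx0
  have hFxn : Fsum xn = (‖z‖ : 𝕜) := by
    rw [hxn, map_smul, smul_eq_mul, ← hz, hcz, div_mul_cancel₀ _ hzne]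
  have hterm : ∀ j ∈ I, 1 - δ ≤ RCLike.re ((starRingEnd 𝕜) j.2 * (g j) xn) := by
    intro j hj
    have hsum : ∑ i ∈ I, RCLike.re ((starRingEnd 𝕜) i.2 * (g i) xn) = ‖z‖ := by
      rw [← map_sum]
      have happ : ∑ i ∈ I, ((starRingEnd 𝕜) i.2 * (g i) xn) = Fsum xn := by
        rw [hFsum]
        simp [ContinuousLinearMap.sum_apply, ContinuousLinearMap.coe_smul', smul_eq_mul]
      rw [happ, hFxn, RCLike.ofReal_re]
    have hbound : ∀ i ∈ I, RCLike.re ((starRingEnd 𝕜) i.2 * (g i) xn) ≤ 1 := by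
      intro i hi
      calc RCLike.re ((starRingEnd 𝕜) i.2 * (g i) xn) ≤ ‖(starRingEnd 𝕜) i.2 * (g i) xn‖ :=
            RCLike.re_le_norm _
        _ = ‖i.2‖ * ‖(g i) xn‖ := by rw [norm_mul, RCLike.norm_conj]
        _ ≤ 1 * (‖g i‖ * ‖xn‖) := by
            rw [hΩ1 n i.2 (Finset.mem_product.mp hi).2, one_mul, one_mul]
            exact (g i).le_opNorm xn
        _ ≤ 1 := by rw [one_mul, hg1 i hi, one_mul]; exact hxn1
    have herase : ∑ i ∈ I.erase j, RCLike.re ((starRingEnd 𝕜) i.2 * (g i) xn)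
        ≤ (I.card : ℝ) - 1 := by
      calc ∑ i ∈ I.erase j, RCLike.re ((starRingEnd 𝕜) i.2 * (g i) xn)
          ≤ ∑ _i ∈ I.erase j, (1:ℝ) :=
            Finset.sum_le_sum fun i hi => hbound i (Finset.mem_of_mem_erase hi)
        _ = ((I.erase j).card : ℝ) := by simp
        _ = (I.card : ℝ) - 1 := by
            rw [Finset.card_erase_of_mem hj, Nat.cast_sub (Finset.card_pos.mpr hIne)]
            simp
    have hsplit : RCLike.re ((starRingEnd 𝕜) j.2 * (g j) xn)
        + ∑ i ∈ I.erase j, RCLike.re ((starRingEnd 𝕜) i.2 * (g i) xn)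
        = ∑ i ∈ I, RCLike.re ((starRingEnd 𝕜) i.2 * (g i) xn) :=
      Finset.add_sum_erase I (fun i => RCLike.re ((starRingEnd 𝕜) i.2 * (g i) xn)) hj
    linarith [hsplit, hsum, herase, hx0']
  -- new data
  set x' : ℕ → X := Function.update S.x n xn with hx'
  set F' : (ℕ → 𝕜) → StrongDual 𝕜 X := fun t => g (c t, t n) with hF'
  have hF'app : ∀ t : ℕ → 𝕜, F' t = g (c t, t n) := fun t => by rw [hF']
  have hmemI : ∀ t : ℕ → 𝕜, (∀ k, k < n + 1 → t k ∈ Ω k) → (c t, t n) ∈ I := by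
    intro t ht
    exact Finset.mem_product.mpr ⟨hPmem t (fun k hk => ht k (hk.trans n.lt_succ_self)),
      ht n n.lt_succ_self⟩
  have hnum : (1/2:ℝ)^(n+2) + (1/2:ℝ)^(n+3) ≤ (1/2:ℝ)^(n+1) := by
    have e1 : (1/2:ℝ)^(n+2) = (1/2:ℝ)^(n+1) * (1/2) := by ring
    have e2 : (1/2:ℝ)^(n+3) = (1/2:ℝ)^(n+1) * (1/2) * (1/2) := by ring
    nlinarith [pow_pos (show (0:ℝ) < 1/2 by norm_num) (n+1)]
  refine ⟨⟨x', F', ?_, ?_, ?_, ?_, ?_⟩, ?_⟩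
  · -- hx
    intro k hk
    rcases Nat.lt_succ_iff_lt_or_eq.mp hk with h | h
    · rw [hx', Function.update_of_ne (Nat.ne_of_lt h)]
      exact S.hx k h
    · subst h; rw [hx', Function.update_self]; exact hxn1
  · -- hmem
    intro t ht
    exact hgval _ (hmemI t ht)
  · -- hfac
    intro s t hst
    rw [hF'app, hF'app]
    have h1 : c s = c t := by
      funext k
      rw [hc]
      by_cases h : k < n
      · simp [h, hst k (h.trans n.lt_succ_self)]
      · simp [h]
    rw [h1, hst n n.lt_succ_self]
  · -- hinj
    intro s t hs ht heq k hk
    have hjs := hmemI s hs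
    have hjt := hmemI t ht
    have := hginj (Finset.mem_coe.mpr hjs) (Finset.mem_coe.mpr hjt) heq
    have hfst : c s = c t := congrArg Prod.fst this
    have hsnd : s n = t n := congrArg Prod.snd this
    rcases Nat.lt_succ_iff_lt_or_eq.mp hk with h | h
    · have := congrFun hfst k
      rw [hc] at this
      simpa [h] using this
    · subst h; exact hsnd
  · -- hlow
    intro t ht k hk
    have hjI := hmemI t ht
    rcases Nat.lt_succ_iff_lt_or_eq.mp hk with hkn | hkn
    · -- old coordinate
      have hxk : x' k = S.x k := by rw [hx', Function.update_of_ne (Nat.ne_of_lt hkn)]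
      have hcval : ∀ k', k' < n → c t k' ∈ Ω k' := by
        intro k' hk'
        rw [hc]
        simpa [hk'] using ht k' (hk'.trans n.lt_succ_self)
      have hparent := S.hlow (c t) hcval k hkn
      have hctk : c t k = t k := by rw [hc]; simp [hkn]
      rw [hctk] at hparent
      have hclose := (hgmem _ hjI).2 k hkn
      have hnrm1 : ‖t k‖ = 1 := hΩ1 k (t k) (ht k (hkn.trans n.lt_succ_self))
      have hsplit : RCLike.re ((starRingEnd 𝕜) (t k) * (F' t) (x' k))
          = RCLike.re ((starRingEnd 𝕜) (t k) * (S.F (c t)) (S.x k))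
            + RCLike.re ((starRingEnd 𝕜) (t k) * ((g (c t, t n) - S.F (c t)) (S.x k))) := by
        rw [hxk, hF'app]
        simp only [ContinuousLinearMap.sub_apply]
        rw [mul_sub, map_sub]
        ring
      have hb : |RCLike.re ((starRingEnd 𝕜) (t k) * ((g (c t, t n) - S.F (c t)) (S.x k)))| ≤ δ := by
        calc |RCLike.re ((starRingEnd 𝕜) (t k) * ((g (c t, t n) - S.F (c t)) (S.x k)))|
            ≤ ‖(starRingEnd 𝕜) (t k) * ((g (c t, t n) - S.F (c t)) (S.x k))‖ :=
              RCLike.abs_re_le_norm _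
          _ = ‖t k‖ * ‖(g (c t, t n) - S.F (c t)) (S.x k)‖ := by rw [norm_mul, RCLike.norm_conj]
          _ ≤ δ := by rw [hnrm1, one_mul]; exact le_of_lt hclose
      have := abs_le.mp hb
      rw [hsplit]
      have hd3 : (1/2:ℝ)^(n+3) ≤ (1/2:ℝ)^(n+1) - (1/2:ℝ)^(n+2) := by linarith
      rw [hδdef] at this
      linarith
    · -- new coordinate
      subst hkn
      have hxk : x' k = xn := by rw [hx', Function.update_self]
      have hterm' := hterm _ hjI
      simp only at hterm'
      rw [hxk, hF'app]
      have e : (1/2:ℝ)^(k+1+1) = (1/2:ℝ)^(k+2) := by ring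
      rw [e, hδdef] at *
      linarith [hnum, hterm']
  · -- consistency
    intro k hk
    show x' k = S.x k
    rw [hx', Function.update_of_ne (Nat.ne_of_lt hk)]

end AIAux

set_option maxHeartbeats 1000000 in
/-- If `X*` contains an infinite set `Γ` isometrically equivalent to the usual basis of
`ℓ₁(Γ)` which is dense-in-itself in the weak-star topology, then `X` contains
asymptotically isometric copies of `ℓ₁`. -/
theorem ai_of_dual_contains_l1Gamma_set (𝕜 : Type*) [RCLike 𝕜]
    (X : Type*) [NormedAddCommGroup X] [NormedSpace 𝕜 X] [CompleteSpace X]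
    (Γ : Set (StrongDual 𝕜 X)) (hΓ : Γ.Infinite)
    (hiso : ∀ F : Finset (StrongDual 𝕜 X), ↑F ⊆ Γ → ∀ a : StrongDual 𝕜 X → 𝕜,
      ‖∑ γ ∈ F, a γ • γ‖ = ∑ γ ∈ F, ‖a γ‖)
    (hperf : Preperfect ((fun f => StrongDual.toWeakDual f) '' Γ : Set (WeakDual 𝕜 X))) :
    ContainsAICopiesOfL1 𝕜 X := by
  classical
  obtain ⟨γ₀, hγ₀⟩ := hΓ.nonempty
  -- finite nets on the unit sphere of 𝕜
  have hnet : ∀ k : ℕ, ∃ S : Finset 𝕜, (∀ ω ∈ S, ‖ω‖ = 1) ∧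
      ∀ θ : 𝕜, ‖θ‖ = 1 → ∃ ω ∈ S, ‖θ - ω‖ ≤ (1/2:ℝ)^(k+2) := by
    intro k
    have hcpt : IsCompact (Metric.sphere (0:𝕜) 1) := isCompact_sphere 0 1
    obtain ⟨s, hs_sub, hs_fin, hcov⟩ :=
      hcpt.finite_cover_balls (e := (1/2:ℝ)^(k+2)) (by positivity)
    refine ⟨hs_fin.toFinset, ?_, ?_⟩
    · intro ω hω
      have := hs_sub (hs_fin.mem_toFinset.mp hω)
      simpa using this
    · intro θ hθ
      have hθs : θ ∈ Metric.sphere (0:𝕜) 1 := by simpa using hθ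
      obtain ⟨ω, hω⟩ := Set.mem_iUnion.mp (hcov hθs)
      obtain ⟨hωs, hθω⟩ := Set.mem_iUnion.mp hω
      refine ⟨ω, hs_fin.mem_toFinset.mpr hωs, ?_⟩
      have : dist θ ω < (1/2:ℝ)^(k+2) := hθω
      rw [dist_eq_norm] at this
      exact le_of_lt this
  choose Ω hΩ1 hΩnet using hnet
  have hΩne : ∀ k, (Ω k).Nonempty := fun k => by
    obtain ⟨ω, hω, _⟩ := hΩnet k 1 norm_one
    exact ⟨ω, hω⟩
  -- weak-star neighborhoods of points of Γ contain infinitely many points of Γ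
  have hnbhd : ∀ f₀ ∈ Γ, ∀ (m : ℕ) (xx : ℕ → X) (η : ℝ), 0 < η →
      {g | g ∈ Γ ∧ ∀ k, k < m → ‖(g - f₀) (xx k)‖ < η}.Infinite := by
    intro f₀ hf₀ m xx η hη
    set U : Set (WeakDual 𝕜 X) := ⋂ k : Fin m, {φ | ‖φ (xx k) - f₀ (xx k)‖ < η} with hU
    have hUopen : IsOpen U := by
      rw [hU]
      refine isOpen_iInter_of_finite fun k => ?_
      have hcont : Continuous fun φ : WeakDual 𝕜 X => φ (xx k) := WeakDual.eval_continuous _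
      have : {φ : WeakDual 𝕜 X | ‖φ (xx k) - f₀ (xx k)‖ < η}
          = (fun φ : WeakDual 𝕜 X => φ (xx k)) ⁻¹' Metric.ball (f₀ (xx k)) η := by
        ext φ
        simp [Metric.mem_ball, dist_eq_norm]
      rw [this]
      exact Metric.isOpen_ball.preimage hcont
    have hUx : StrongDual.toWeakDual f₀ ∈ U := by
      rw [hU]
      refine Set.mem_iInter.mpr fun k => ?_
      show ‖(StrongDual.toWeakDual f₀) (xx k) - f₀ (xx k)‖ < η
      have : (StrongDual.toWeakDual f₀) (xx k) = f₀ (xx k) := rfl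
      rw [this]
      simpa using hη
    have hacc := hperf (StrongDual.toWeakDual f₀) ⟨f₀, hf₀, rfl⟩
    have hinf := aux_accPt_infinite hacc (hUopen.mem_nhds hUx)
    have hsub : ((fun f => StrongDual.toWeakDual f) '' Γ ∩ U)
        ⊆ (fun f => StrongDual.toWeakDual f) ''
          {g | g ∈ Γ ∧ ∀ k, k < m → ‖(g - f₀) (xx k)‖ < η} := by
      rintro φ ⟨⟨g, hg, rfl⟩, hφU⟩
      refine ⟨g, ⟨hg, fun k hk => ?_⟩, rfl⟩
      have := Set.mem_iInter.mp hφU ⟨k, hk⟩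
      simpa [ContinuousLinearMap.sub_apply] using this
    exact Set.Infinite.of_image _ (hinf.mono hsub)
  -- the inductive construction
  set S0 : AIStage 𝕜 X Γ Ω 0 :=
    ⟨fun _ => 0, fun _ => γ₀, fun k hk => absurd hk (Nat.not_lt_zero k),
      fun _ _ => hγ₀, fun _ _ _ => rfl,
      fun s t _ _ _ k hk => absurd hk (Nat.not_lt_zero k),
      fun t _ k hk => absurd hk (Nat.not_lt_zero k)⟩ with hS0
  choose step hstep using aux_step Γ Ω hiso hΩ1 hΩne hnbhd
  set stage : ∀ n, AIStage 𝕜 X Γ Ω n := fun n => Nat.rec S0 (fun n S => step n S) n with hstage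
  have hstage_succ : ∀ n, stage (n+1) = step n (stage n) := fun n => rfl
  set xg : ℕ → X := fun k => (stage (k+1)).x k with hxg
  have hconsist : ∀ m k, k < m → (stage m).x k = xg k := by
    intro m
    induction m with
    | zero => intro k hk; exact absurd hk (Nat.not_lt_zero k)
    | succ m ih =>
      intro k hk
      rcases Nat.lt_succ_iff_lt_or_eq.mp hk with h | h
      · rw [hstage_succ m, hstep m (stage m) k h]
        exact ih k h
      · subst h; rfl
  have hxg1 : ∀ k, ‖xg k‖ ≤ 1 := fun k => (stage (k+1)).hx k k.lt_succ_self
  refine ⟨fun k => 3 * (1/2:ℝ)^(k+2), xg, ?_, ?_, ?_⟩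
  · intro k
    constructor
    · positivity
    · have h1 : (1/2:ℝ)^(k+2) ≤ (1/2:ℝ)^2 :=
        pow_le_pow_of_le_one (by norm_num) (by norm_num) (by omega)
      nlinarith
  · have h1 : Filter.Tendsto (fun k : ℕ => (1/2:ℝ)^k) Filter.atTop (nhds 0) :=
      tendsto_pow_atTop_nhds_zero_of_lt_one (by norm_num) (by norm_num)
    have h2 : Filter.Tendsto (fun k : ℕ => 3 * (1/2:ℝ)^(k+2)) Filter.atTop (nhds (3 * 0)) :=
      ((h1.comp (Filter.tendsto_add_atTop_nat 2)).const_mul 3)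
    simpa using h2
  · intro m a
    constructor
    · -- lower bound
      set u : ℕ → 𝕜 := fun k => if a k = 0 then 1 else a k / (‖a k‖ : 𝕜) with hu_def
      have hu : ∀ k, ‖u k‖ = 1 := by
        intro k
        rw [hu_def]
        by_cases h : a k = 0
        · simp [h]
        · simp only [h, if_false]
          rw [norm_div, RCLike.norm_ofReal, abs_of_nonneg (norm_nonneg _),
            div_self (norm_ne_zero_iff.mpr h)]
      have hsel : ∀ k, ∃ ω ∈ Ω k, ‖(starRingEnd 𝕜) (u k) - ω‖ ≤ (1/2:ℝ)^(k+2) := fun k =>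
        hΩnet k _ (by rw [RCLike.norm_conj]; exact hu k)
      choose t ht1 ht2 using hsel
      set f := (stage m).F t with hf
      have hfΓ : f ∈ Γ := (stage m).hmem t (fun k _ => ht1 k)
      have hf1 : ‖f‖ = 1 := aux_norm_one Γ hiso hfΓ
      have key : ∀ k, k < m →
          (1 - 3 * (1/2:ℝ)^(k+2)) * ‖a k‖ ≤ RCLike.re (a k * f (xg k)) := by
        intro k hk
        have hw : ‖f (xg k)‖ ≤ 1 := by
          calc ‖f (xg k)‖ ≤ ‖f‖ * ‖xg k‖ := f.le_opNorm _
            _ ≤ 1 := by rw [hf1, one_mul]; exact hxg1 k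
        have hlow := (stage m).hlow t (fun k _ => ht1 k) k hk
        rw [hconsist m k hk] at hlow
        have hdiff : |RCLike.re ((u k - (starRingEnd 𝕜) (t k)) * f (xg k))| ≤ (1/2:ℝ)^(k+2) := by
          calc |RCLike.re ((u k - (starRingEnd 𝕜) (t k)) * f (xg k))|
              ≤ ‖(u k - (starRingEnd 𝕜) (t k)) * f (xg k)‖ := RCLike.abs_re_le_norm _
            _ = ‖u k - (starRingEnd 𝕜) (t k)‖ * ‖f (xg k)‖ := norm_mul _ _
            _ ≤ (1/2:ℝ)^(k+2) * 1 := by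
                refine mul_le_mul ?_ hw (norm_nonneg _) (by positivity)
                have heq : u k - (starRingEnd 𝕜) (t k)
                    = (starRingEnd 𝕜) ((starRingEnd 𝕜) (u k) - t k) := by
                  rw [map_sub, RCLike.conj_conj]
                rw [heq, RCLike.norm_conj]
                exact ht2 k
            _ = (1/2:ℝ)^(k+2) := mul_one _
        have hre : 1 - 3 * (1/2:ℝ)^(k+2) ≤ RCLike.re (u k * f (xg k)) := by
          have hsplit : u k * f (xg k)
              = (starRingEnd 𝕜) (t k) * f (xg k) + (u k - (starRingEnd 𝕜) (t k)) * f (xg k) := by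
            ring
          rw [hsplit, map_add]
          have habs := abs_le.mp hdiff
          have hp : (0:ℝ) < (1/2:ℝ)^(m+1) := by positivity
          have he : (1/2:ℝ)^(k+1) = 2 * (1/2:ℝ)^(k+2) := by ring
          linarith
        have ha : a k = (‖a k‖ : 𝕜) * u k := by
          rw [hu_def]
          by_cases h : a k = 0
          · simp [h]
          · simp only [h, if_false]
            rw [mul_div_assoc']
            rw [mul_comm]
            rw [mul_div_assoc]
            rw [div_self (by exact_mod_cast norm_ne_zero_iff.mpr h : (‖a k‖:𝕜) ≠ 0), mul_one]
        have : RCLike.re (a k * f (xg k)) = ‖a k‖ * RCLike.re (u k * f (xg k)) := by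
          conv_lhs => rw [ha, mul_assoc]
          exact RCLike.re_ofReal_mul _ _
        rw [this]
        calc (1 - 3 * (1/2:ℝ)^(k+2)) * ‖a k‖ = ‖a k‖ * (1 - 3 * (1/2:ℝ)^(k+2)) := by ring
          _ ≤ ‖a k‖ * RCLike.re (u k * f (xg k)) :=
            mul_le_mul_of_nonneg_left hre (norm_nonneg _)
      calc ∑ n ∈ Finset.range m, (1 - 3 * (1/2:ℝ)^(n+2)) * ‖a n‖
          ≤ ∑ n ∈ Finset.range m, RCLike.re (a n * f (xg n)) :=
            Finset.sum_le_sum fun k hk => key k (Finset.mem_range.mp hk)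
        _ = RCLike.re (f (∑ n ∈ Finset.range m, a n • xg n)) := by
            rw [map_sum, map_sum]
            exact Finset.sum_congr rfl fun k _ => by rw [map_smul, smul_eq_mul]
        _ ≤ ‖f (∑ n ∈ Finset.range m, a n • xg n)‖ := RCLike.re_le_norm _
        _ ≤ ‖f‖ * ‖∑ n ∈ Finset.range m, a n • xg n‖ := f.le_opNorm _
        _ = ‖∑ n ∈ Finset.range m, a n • xg n‖ := by rw [hf1, one_mul]
    · -- upper bound
      calc ‖∑ n ∈ Finset.range m, a n • xg n‖ ≤ ∑ n ∈ Finset.range m, ‖a n • xg n‖ :=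
            norm_sum_le _ _
        _ ≤ ∑ n ∈ Finset.range m, ‖a n‖ := Finset.sum_le_sum fun k _ => by
            rw [norm_smul]
            exact mul_le_of_le_one_right (norm_nonneg _) (hxg1 k)
end

section
/- Let N and M be compact Hausdorff topological spaces with M perfect (nonempty and without isolated points), and let φ : N → M be a continuous surjection. Then there exists a subset Q of N such that Q is dense-in-itself (has no isolated points in its relative topology) and the restriction of φ to Q is a bijection from Q onto M. -/
/-- If `N` and `M` are compact Hausdorff spaces with `M` perfect (nonempty with no
isolated points) and `φ : N → M` is a continuous surjection, then there is a
dense-in-itself subset `Q` of `N` such that `φ` restricted to `Q` is a bijection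
onto `M`. -/
theorem exists_dense_in_itself_selection
    (N : Type*) [TopologicalSpace N] [CompactSpace N] [T2Space N]
    (M : Type*) [TopologicalSpace M] [CompactSpace M] [T2Space M]
    [Nonempty M] (hM : Preperfect (Set.univ : Set M))
    (φ : N → M) (hφc : Continuous φ) (hφs : Function.Surjective φ) :
    ∃ Q : Set N, Preperfect Q ∧ Set.BijOn φ Q Set.univ := by
  classical
  set S : Set (Set N) := {K | IsClosed K ∧ φ '' K = Set.univ} with hSdef
  -- Zorn: a minimal closed set mapping onto M
  have hzorn : ∃ K, K ∈ S ∧ ∀ a ∈ S, a ⊆ K → a = K := by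
    have h := zorn_superset_nonempty S ?_ Set.univ ?_
    · obtain ⟨m, _, hmin⟩ := h
      exact ⟨m, hmin.1, fun a ha hsub => hsub.antisymm (hmin.2 ha hsub)⟩
    · intro c hcS hchain hcne
      refine ⟨⋂₀ c, ⟨isClosed_sInter fun K hK => (hcS hK).1, ?_⟩,
        fun s hs => Set.sInter_subset_of_mem hs⟩
      apply Set.eq_univ_of_forall
      intro m
      have hcne' : Nonempty c := hcne.to_subtype
      have hne : (⋂ K : c, (K : Set N) ∩ φ ⁻¹' {m}).Nonempty := by
        apply IsCompact.nonempty_iInter_of_directed_nonempty_isCompact_isClosed (hι := hcne')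
        · intro K K'
          rcases hchain.total K.2 K'.2 with h | h
          · exact ⟨K, subset_rfl, Set.inter_subset_inter_left _ h⟩
          · exact ⟨K', Set.inter_subset_inter_left _ h, subset_rfl⟩
        · intro K
          have : m ∈ φ '' (K : Set N) := (hcS K.2).2 ▸ Set.mem_univ m
          obtain ⟨x, hx, hxm⟩ := this
          exact ⟨x, hx, hxm⟩
        · intro K
          exact (((hcS K.2).1.inter (isClosed_singleton.preimage hφc)).isCompact)
        · intro K
          exact (hcS K.2).1.inter (isClosed_singleton.preimage hφc)
      obtain ⟨x, hx⟩ := hne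
      simp only [Set.mem_iInter, Set.mem_inter_iff, Set.mem_preimage,
        Set.mem_singleton_iff] at hx
      refine ⟨x, ?_, (hx (Classical.choice hcne')).2⟩
      · intro K hK
        exact (hx ⟨K, hK⟩).1
    · exact ⟨isClosed_univ, by rw [Set.image_univ, Set.range_eq_univ]; exact hφs⟩
  obtain ⟨K, ⟨hKc, hKonto⟩, hKmin⟩ := hzorn
  -- K is perfect
  have hKperf : ∀ x ∈ K, AccPt x (Filter.principal K) := by
    intro x hxK
    by_contra hacc
    rw [accPt_iff_nhds] at hacc
    push_neg at hacc
    obtain ⟨U, hU, hUK⟩ := hacc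
    obtain ⟨V, hVU, hVopen, hxV⟩ := mem_nhds_iff.mp hU
    -- K \ V is closed, its image misses something
    have hKVc : IsClosed (K \ V) := hKc.sdiff hVopen
    have himcl : IsClosed (φ '' (K \ V)) := (hKVc.isCompact.image hφc).isClosed
    have hne : φ '' (K \ V) ≠ Set.univ := by
      intro h
      have heq := hKmin (K \ V) ⟨hKVc, h⟩ Set.diff_subset
      have : x ∈ K \ V := by rw [heq]; exact hxK
      exact this.2 hxV
    obtain ⟨m, hm⟩ := (Set.ne_univ_iff_exists_notMem _).mp hne
    -- the complement of the image is the open singleton {φ x}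
    have hW : ∀ m' ∉ φ '' (K \ V), m' = φ x := by
      intro m' hm'
      have : m' ∈ φ '' K := hKonto ▸ Set.mem_univ m'
      obtain ⟨y, hyK, hym⟩ := this
      have hyV : y ∈ V := by
        by_contra h
        exact hm' ⟨y, ⟨hyK, h⟩, hym⟩
      have : y = x := hUK y ⟨hVU hyV, hyK⟩
      rw [← hym, this]
    have hmx : m = φ x := hW m hm
    -- φ x is an isolated point of M, contradiction with hM
    have := hM (φ x) (Set.mem_univ _)
    rw [accPt_iff_nhds] at this
    obtain ⟨y, ⟨hy1, _⟩, hy2⟩ := this (φ '' (K \ V))ᶜ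
      (himcl.isOpen_compl.mem_nhds (hmx ▸ hm))
    exact hy2 (hW y hy1)
  -- selection: one point per fiber in K
  have hsel : ∀ m : M, ∃ x, x ∈ K ∧ φ x = m := by
    intro m
    have : m ∈ φ '' K := hKonto ▸ Set.mem_univ m
    obtain ⟨x, hx, hxm⟩ := this
    exact ⟨x, hx, hxm⟩
  choose q hqK hqφ using hsel
  refine ⟨Set.range q, ?_, ?_, ?_, ?_⟩
  · -- Preperfect
    intro x hxQ
    have hxK : x ∈ K := by obtain ⟨m, rfl⟩ := hxQ; exact hqK m
    -- closure of range q is K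
    have hQK : Set.range q ⊆ K := Set.range_subset_iff.mpr hqK
    have hclQ : closure (Set.range q) = K := by
      have hsub : closure (Set.range q) ⊆ K := closure_minimal hQK hKc
      refine hKmin _ ⟨isClosed_closure, ?_⟩ hsub
      apply Set.eq_univ_of_forall
      intro m
      exact ⟨q m, subset_closure ⟨m, rfl⟩, hqφ m⟩
    rw [accPt_iff_nhds]
    intro U hU
    by_contra h
    push_neg at h
    obtain ⟨V, hVU, hVopen, hxV⟩ := mem_nhds_iff.mp hU
    have hVQ : V ∩ Set.range q ⊆ {x} := by
      intro y ⟨hyV, hyQ⟩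
      exact h y ⟨hVU hyV, hyQ⟩
    have hVK : V ∩ K ⊆ {x} := by
      rw [← hclQ]
      intro y hy
      have := hVopen.inter_closure hy
      have := closure_mono hVQ this
      rwa [closure_singleton] at this
    have := hKperf x hxK
    rw [accPt_iff_nhds] at this
    obtain ⟨y, ⟨hyV, hyK⟩, hyx⟩ := this V (hVopen.mem_nhds hxV)
    exact hyx (hVK ⟨hyV, hyK⟩)
  · -- MapsTo
    intro x _; exact Set.mem_univ _
  · -- InjOn
    rintro _ ⟨a, rfl⟩ _ ⟨b, rfl⟩ h
    rw [hqφ, hqφ] at h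
    rw [h]
  · -- SurjOn
    intro m _
    exact ⟨q m, ⟨m, rfl⟩, hqφ m⟩
end

section
/- Let X be a real or complex Banach space and suppose that ℓ∞, the Banach space of bounded scalar sequences with the supremum norm, is linearly isometric to a subspace of X*. Then X contains asymptotically isometric copies of ℓ₁. -/
set_option maxHeartbeats 1000000


open Filter Finset

section Aux

variable {𝕜 : Type*} [RCLike 𝕜]

/-- The norm of a coordinate vector in `ℓ∞` is one. -/
lemma aux_norm_single (k : ℕ) : ‖(lp.single ⊤ k (1 : 𝕜) : lp (fun _ : ℕ => 𝕜) ⊤)‖ = 1 := by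
  refine le_antisymm (lp.norm_le_of_forall_le zero_le_one fun j => ?_) ?_
  · by_cases h : j = k
    · subst h; rw [lp.single_apply_self]; simp
    · rw [lp.single_apply_ne _ _ _ h]; simp
  · have := lp.norm_apply_le_norm (E := fun _ : ℕ => 𝕜) ENNReal.top_ne_zero
      (lp.single ⊤ k (1 : 𝕜)) k
    rwa [lp.single_apply_self, norm_one] at this

variable {X : Type*} [NormedAddCommGroup X] [NormedSpace 𝕜 X]

/-- Key estimate: if `x` has norm at most one, then for any `b ∈ ℓ∞` vanishing at
coordinate `k` with `‖b‖ ≤ 1`, `‖(T b) x‖ ≤ 1 - re ((T eₖ) x)`. -/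
lemma aux_key_s17 (T : lp (fun _ : ℕ => 𝕜) ⊤ →ₗᵢ[𝕜] StrongDual 𝕜 X)
    (k : ℕ) (x : X) (hx : ‖x‖ ≤ 1) (b : lp (fun _ : ℕ => 𝕜) ⊤)
    (hbk : b k = 0) (hb : ‖b‖ ≤ 1) :
    ‖(T b) x‖ ≤ 1 - RCLike.re ((T (lp.single ⊤ k (1 : 𝕜))) x) := by
  set e : lp (fun _ : ℕ => 𝕜) ⊤ := lp.single ⊤ k (1 : 𝕜) with he
  by_cases hc : (T b) x = 0
  · rw [hc, norm_zero, sub_nonneg]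
    calc RCLike.re ((T e) x) ≤ ‖(T e) x‖ := RCLike.re_le_norm _
    _ ≤ ‖T e‖ * ‖x‖ := (T e).le_opNorm x
    _ ≤ 1 * 1 := by
        refine mul_le_mul ?_ hx (norm_nonneg _) zero_le_one
        rw [T.norm_map, he, aux_norm_single]
    _ = 1 := one_mul 1
  · set c : 𝕜 := (T b) x with hcd
    set lam : 𝕜 := (‖c‖ : 𝕜) / c with hlam
    have hlamc : lam * c = (‖c‖ : 𝕜) := div_mul_cancel₀ _ hc
    have hnormlam : ‖lam‖ = 1 := by
      rw [hlam, norm_div, RCLike.norm_ofReal, abs_of_nonneg (norm_nonneg c),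
        div_self (norm_ne_zero_iff.mpr hc)]
    set v : lp (fun _ : ℕ => 𝕜) ⊤ := e + lam • b with hv
    have hvle : ‖v‖ ≤ 1 := by
      refine lp.norm_le_of_forall_le zero_le_one fun j => ?_
      have hvj : v j = e j + lam • b j := rfl
      by_cases h : j = k
      · subst h
        rw [hvj, he, lp.single_apply_self, hbk, smul_zero, add_zero, norm_one]
      · rw [hvj, he, lp.single_apply_ne _ _ _ h, zero_add, norm_smul, hnormlam, one_mul]
        exact le_trans (lp.norm_apply_le_norm ENNReal.top_ne_zero b j) hb
    have hTv : (T v) x = (T e) x + lam * c := by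
      rw [hv, T.map_add, T.map_smul, hcd]
      rfl
    have h1 : RCLike.re ((T v) x) ≤ 1 := by
      calc RCLike.re ((T v) x) ≤ ‖(T v) x‖ := RCLike.re_le_norm _
      _ ≤ ‖T v‖ * ‖x‖ := (T v).le_opNorm x
      _ ≤ 1 * 1 := by
          refine mul_le_mul ?_ hx (norm_nonneg _) zero_le_one
          rw [T.norm_map]; exact hvle
      _ = 1 := one_mul 1
    have h2 : RCLike.re ((T v) x) = RCLike.re ((T e) x) + ‖c‖ := by
      rw [hTv, map_add, hlamc, RCLike.ofReal_re]
    linarith [h1, h2.symm.le]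

end Aux

/-- (Chen–Lin, strengthened) If `ℓ∞` embeds linearly isometrically into `X*`, then `X`
contains asymptotically isometric copies of `ℓ₁`. -/
theorem ai_of_linfty_embeds_in_dual (𝕜 : Type*) [RCLike 𝕜]
    (X : Type*) [NormedAddCommGroup X] [NormedSpace 𝕜 X] [CompleteSpace X]
    (T : lp (fun _ : ℕ => 𝕜) ⊤ →ₗᵢ[𝕜] StrongDual 𝕜 X) :
    ContainsAICopiesOfL1 𝕜 X := by
  classical
  set ε : ℕ → ℝ := fun n => ((n : ℝ) + 2)⁻¹ with hε
  have hεpos : ∀ n, 0 < ε n := fun n => by positivity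
  have hεlt : ∀ n, ε n < 1 := fun n => by
    rw [hε]
    rw [inv_lt_one_iff₀]
    right
    have : (0 : ℝ) ≤ (n : ℝ) := Nat.cast_nonneg n
    linarith
  -- the coordinate vectors
  set e : ℕ → lp (fun _ : ℕ => 𝕜) ⊤ := fun k => lp.single ⊤ k (1 : 𝕜) with hedef
  have hnorme : ∀ k, ‖T (e k)‖ = 1 := fun k => by
    rw [T.norm_map, hedef, aux_norm_single]
  -- choose almost-norming vectors xs n
  have hexists : ∀ n : ℕ, ∃ x : X, ‖x‖ ≤ 1 ∧
      1 - ε n / 2 ≤ RCLike.re ((T (e n)) x) := by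
    intro n
    have hlt : 1 - ε n / 2 < ‖T (e n)‖ := by
      rw [hnorme n]; linarith [hεpos n]
    obtain ⟨y, hy1, hy2⟩ := (T (e n)).exists_lt_apply_of_lt_opNorm hlt
    have hfy : (T (e n)) y ≠ 0 := by
      intro h
      rw [h, norm_zero] at hy2
      have := hεlt n
      linarith
    set lam : 𝕜 := (‖(T (e n)) y‖ : 𝕜) / ((T (e n)) y) with hlam
    refine ⟨lam • y, ?_, ?_⟩
    · rw [norm_smul, hlam, norm_div, RCLike.norm_ofReal, abs_of_nonneg (norm_nonneg _),
        div_self (norm_ne_zero_iff.mpr hfy), one_mul]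
      exact hy1.le
    · have : (T (e n)) (lam • y) = (‖(T (e n)) y‖ : 𝕜) := by
        rw [map_smul, smul_eq_mul, hlam, div_mul_cancel₀ _ hfy]
      rw [this, RCLike.ofReal_re]
      exact hy2.le
  choose xs hxs1 hxs2 using hexists
  refine ⟨ε, xs, fun n => ⟨hεpos n, hεlt n⟩, ?_, ?_⟩
  · -- ε tends to zero
    have : Tendsto (fun n : ℕ => (n : ℝ) + 2) atTop atTop :=
      tendsto_atTop_add_const_right atTop 2 tendsto_natCast_atTop_atTop
    exact tendsto_inv_atTop_zero.comp this
  intro m a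
  constructor
  · -- lower ℓ₁-estimate
    -- the (conjugate) sign vector of a
    set σ : ℕ → 𝕜 := fun k => if a k = 0 then 1 else (starRingEnd 𝕜 (a k)) / (‖a k‖ : 𝕜)
      with hσ
    have hσnorm : ∀ k, ‖σ k‖ = 1 := by
      intro k
      by_cases h : a k = 0
      · simp [hσ, h]
      · simp only [hσ, if_neg h]
        rw [norm_div, RCLike.norm_conj, RCLike.norm_ofReal,
          abs_of_nonneg (norm_nonneg _), div_self (norm_ne_zero_iff.mpr h)]
    have hmem : Memℓp σ ⊤ := by
      apply memℓp_infty
      refine ⟨1, ?_⟩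
      rintro r ⟨k, rfl⟩
      exact (hσnorm k).le
    set s : lp (fun _ : ℕ => 𝕜) ⊤ := ⟨σ, hmem⟩ with hs
    have hsle : ‖s‖ ≤ 1 := lp.norm_le_of_forall_le zero_le_one fun j => (hσnorm j).le
    -- termwise estimate
    have hterm : ∀ k, (1 - ε k) * ‖a k‖ ≤ RCLike.re (a k * ((T s) (xs k))) := by
      intro k
      by_cases hak : a k = 0
      · simp [hak, hεpos k]
      -- decompose s
      set b : lp (fun _ : ℕ => 𝕜) ⊤ := s - σ k • e k with hb
      have hbk : b k = 0 := by
        have : b k = σ k - σ k • (e k) k := rfl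
        rw [this, hedef, lp.single_apply_self, smul_eq_mul, mul_one, sub_self]
      have hbnorm : ‖b‖ ≤ 1 := by
        refine lp.norm_le_of_forall_le zero_le_one fun j => ?_
        have hbj : b j = σ j - σ k • (e k) j := rfl
        by_cases h : j = k
        · subst h
          rw [hbk, norm_zero]; exact zero_le_one
        · rw [hbj, hedef, lp.single_apply_ne _ _ _ h, smul_zero, sub_zero]
          exact (hσnorm j).le
      have hdecomp : (T s) (xs k) = σ k * ((T (e k)) (xs k)) + (T b) (xs k) := by
        have : s = σ k • e k + b := by rw [hb]; abel
        rw [this, T.map_add, T.map_smul]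
        rfl
      have hre : RCLike.re ((T (e k)) (xs k)) ≤ 1 := by
        calc RCLike.re ((T (e k)) (xs k)) ≤ ‖(T (e k)) (xs k)‖ := RCLike.re_le_norm _
        _ ≤ ‖T (e k)‖ * ‖xs k‖ := (T (e k)).le_opNorm _
        _ ≤ 1 * 1 := by
            refine mul_le_mul ?_ (hxs1 k) (norm_nonneg _) zero_le_one
            exact (hnorme k).le
        _ = 1 := one_mul 1
      have hkey : ‖(T b) (xs k)‖ ≤ 1 - RCLike.re ((T (e k)) (xs k)) :=
        aux_key_s17 T k (xs k) (hxs1 k) b hbk hbnorm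
      have haσ : a k * σ k = (‖a k‖ : 𝕜) := by
        rw [hσ]
        simp only [if_neg hak]
        rw [mul_div_assoc', RCLike.mul_conj]
        rw [sq]
        rw [mul_div_assoc, div_self (by exact_mod_cast norm_ne_zero_iff.mpr hak), mul_one]
      have hmain : RCLike.re (a k * ((T s) (xs k)))
          = ‖a k‖ * RCLike.re ((T (e k)) (xs k)) + RCLike.re (a k * ((T b) (xs k))) := by
        rw [hdecomp, mul_add, ← mul_assoc, haσ, map_add]
        congr 1
        rw [RCLike.re_ofReal_mul]
      have herr : -(‖a k‖ * (1 - RCLike.re ((T (e k)) (xs k))))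
          ≤ RCLike.re (a k * ((T b) (xs k))) := by
        have h1 : ‖a k * ((T b) (xs k))‖ ≤ ‖a k‖ * (1 - RCLike.re ((T (e k)) (xs k))) := by
          rw [norm_mul]
          exact mul_le_mul_of_nonneg_left hkey (norm_nonneg _)
        have h2 := RCLike.re_le_norm (-(a k * ((T b) (xs k))))
        rw [map_neg, norm_neg] at h2
        linarith
      have hxsk := hxs2 k
      have hnn : (0 : ℝ) ≤ ‖a k‖ := norm_nonneg _
      rw [hmain]
      have hR := hre
      have hmul : (1 - ε k) * ‖a k‖ ≤ (2 * RCLike.re ((T (e k)) (xs k)) - 1) * ‖a k‖ := by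
        refine mul_le_mul_of_nonneg_right ?_ hnn
        linarith
      nlinarith
    calc ∑ n ∈ Finset.range m, (1 - ε n) * ‖a n‖
        ≤ ∑ n ∈ Finset.range m, RCLike.re (a n * ((T s) (xs n))) :=
          Finset.sum_le_sum fun n _ => hterm n
      _ = RCLike.re ((T s) (∑ n ∈ Finset.range m, a n • xs n)) := by
          have h1 : (T s) (∑ n ∈ Finset.range m, a n • xs n)
              = ∑ n ∈ Finset.range m, a n * ((T s) (xs n)) := by
            rw [map_sum]
            simp [smul_eq_mul]
          rw [h1, map_sum]
      _ ≤ ‖(T s) (∑ n ∈ Finset.range m, a n • xs n)‖ := RCLike.re_le_norm _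
      _ ≤ ‖T s‖ * ‖∑ n ∈ Finset.range m, a n • xs n‖ := (T s).le_opNorm _
      _ ≤ 1 * ‖∑ n ∈ Finset.range m, a n • xs n‖ := by
          refine mul_le_mul_of_nonneg_right ?_ (norm_nonneg _)
          rw [T.norm_map]; exact hsle
      _ = ‖∑ n ∈ Finset.range m, a n • xs n‖ := one_mul _
  · -- upper estimate
    calc ‖∑ n ∈ Finset.range m, a n • xs n‖
        ≤ ∑ n ∈ Finset.range m, ‖a n • xs n‖ := norm_sum_le _ _
      _ ≤ ∑ n ∈ Finset.range m, ‖a n‖ := by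
          refine Finset.sum_le_sum fun n _ => ?_
          rw [norm_smul]
          exact mul_le_of_le_one_right (norm_nonneg _) (hxs1 n)
end
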